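/- arXiv:1408.3009 — 2 statements merged into one kernel-verified Lean document; each statement's English description precedes it below -/
import Mathlib

section
/- Let J, J', K, K' ⊆ Π with J ~ J' and K ~ K'. Then for every subset L₀ ⊆ Π, Σ_{L ⊆ K, L ~ L₀} a_{JKL} = Σ_{L' ⊆ K', L' ~ L₀} a_{J'K'L'}. Consequently, the multiplication [x_J][x_K] := Σ_{L ⊆ K} a_{JKL} [x_L] on equivalence classes is well-defined, and the rational span Σ_W(A_n) = Sp{[x_J] : J ⊆ Π} of the equivalence classes is an algebra over ℚ. -/
open scoped Classical

noncomputable section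

/-- The Weyl group of type `Aₙ`, realized as the symmetric group on `n+1` letters
permuting the coordinates of `ℝ^{n+1}`. -/
abbrev WA (n : ℕ) := Equiv.Perm (Fin (n + 1))

/-- The root `eᵢ - eⱼ` (with `i ≠ j`) of the root system `Φ` of type `Aₙ`,
encoded as the ordered pair `(i, j)`. -/
abbrev RootA (n : ℕ) := Fin (n + 1) × Fin (n + 1)

/-- The natural action of `W(Aₙ)` on roots: `w (eᵢ - eⱼ) = e_{w i} - e_{w j}`. -/
def act (n : ℕ) (w : WA n) (p : RootA n) : RootA n := (w p.1, w p.2)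

/-- Membership in the positive system `Φ⁺`: the root `eᵢ - eⱼ` is positive iff `i < j`. -/
def IsPos (n : ℕ) (p : RootA n) : Prop := p.1 < p.2

/-- The simple system `Π = {eᵢ - e_{i+1} : 1 ≤ i ≤ n}` of type `Aₙ`. -/
def PiA (n : ℕ) : Finset (RootA n) :=
  (Finset.univ : Finset (Fin n)).image fun i => (Fin.castSucc i, Fin.succ i)

/-- The standard parabolic subgroup `W_J`, generated by the reflections `w_r`
(`= the transposition swapping the two coordinates of r`) for `r ∈ J`. -/
def WP (n : ℕ) (J : Finset (RootA n)) : Subgroup (WA n) :=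
  Subgroup.closure ((fun p : RootA n => Equiv.swap p.1 p.2) '' (J : Set (RootA n)))

/-- `X_J = {w ∈ W : w(r) ∈ Φ⁺ for all r ∈ J}`, the set of distinguished (minimal length)
coset representatives of the cosets `w W_J`. -/
def XP (n : ℕ) (J : Finset (RootA n)) : Finset (WA n) :=
  Finset.univ.filter fun w => ∀ r ∈ J, IsPos n (act n w r)

/-- `x_J = Σ_{d ∈ X_J} d` in the rational group algebra `ℚ[W]`. -/
def xA (n : ℕ) (J : Finset (RootA n)) : MonoidAlgebra ℚ (WA n) :=
  ∑ d ∈ XP n J, MonoidAlgebra.of ℚ (WA n) d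

/-- `X_{JK} = X_J⁻¹ ∩ X_K`, the distinguished double coset representatives of
`W_J w W_K` in `W`. -/
def XD (n : ℕ) (J K : Finset (RootA n)) : Finset (WA n) :=
  Finset.univ.filter fun w => w⁻¹ ∈ XP n J ∧ w ∈ XP n K

/-- The structure constant `a_{JKL} = #{w ∈ X_{JK} : w⁻¹(J) ∩ K = L}`. -/
def aC (n : ℕ) (J K L : Finset (RootA n)) : ℕ :=
  ((XD n J K).filter fun w => J.image (act n w⁻¹) ∩ K = L).card

/-- `X_K^J = X_K ∩ W_J` (for `K ⊆ J ⊆ Π`). -/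
def XPrel (n : ℕ) (J K : Finset (RootA n)) : Finset (WA n) :=
  (XP n K).filter fun w => w ∈ WP n J

/-- `x_K^J = Σ_{d ∈ X_K ∩ W_J} d` in `ℚ[W]`. -/
def xArel (n : ℕ) (J K : Finset (RootA n)) : MonoidAlgebra ℚ (WA n) :=
  ∑ d ∈ XPrel n J K, MonoidAlgebra.of ℚ (WA n) d

/-- The relative structure constant `a^J_{MNP} = #{w ∈ X_{MN} ∩ W_J : w⁻¹(M) ∩ N = P}`. -/
def aCrel (n : ℕ) (J M N P : Finset (RootA n)) : ℕ :=
  (((XD n M N).filter fun w => w ∈ WP n J).filter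
    fun w => M.image (act n w⁻¹) ∩ N = P).card

/-- The equivalence relation `J ~ K ⟺ K = w(J) for some w ∈ W` on subsets of roots;
the equivalence class of `x_J` (resp. `x_K^J`) is indexed by the class `Quot.mk (EquivJ n) J`
(resp. `Quot.mk (EquivJ n) K`). -/
def EquivJ (n : ℕ) (J K : Finset (RootA n)) : Prop :=
  ∃ w : WA n, K = J.image (act n w)

namespace NDA

variable {n : ℕ}

/-- `lnk J s` : the simple root `(s-1, s)` belongs to `J`. -/
def lnk (J : Finset (RootA n)) (s : ℕ) : Prop :=
  ∃ i : Fin n, (Fin.castSucc i, Fin.succ i) ∈ J ∧ (i : ℕ) + 1 = s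

lemma lnk_lt {J : Finset (RootA n)} {s : ℕ} (h : lnk J s) : s < n + 1 := by
  obtain ⟨i, -, hi⟩ := h; omega

lemma lnk_pos {J : Finset (RootA n)} {s : ℕ} (h : lnk J s) : 1 ≤ s := by
  obtain ⟨i, -, hi⟩ := h; omega

lemma mem_of_lnk {J : Finset (RootA n)} {s : ℕ} (h : lnk J s) (hs : s < n + 1) (hs0 : 1 ≤ s) :
    ((⟨s - 1, by omega⟩ : Fin (n+1)), (⟨s, hs⟩ : Fin (n+1))) ∈ J := by
  obtain ⟨i, hiJ, hi⟩ := h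
  have h1 : (Fin.castSucc i : Fin (n+1)) = ⟨s - 1, by omega⟩ := by
    apply Fin.ext; simp [Fin.castSucc]; omega
  have h2 : (Fin.succ i : Fin (n+1)) = ⟨s, hs⟩ := by
    apply Fin.ext; simp [Fin.succ]; omega
  rwa [h1, h2] at hiJ

lemma mem_PiA_iff {r : RootA n} : r ∈ PiA n ↔ ∃ i : Fin n, r = (Fin.castSucc i, Fin.succ i) := by
  simp [PiA, eq_comm]

lemma lnk_of_mem {J : Finset (RootA n)} (hJ : J ⊆ PiA n) {r : RootA n} (hr : r ∈ J) :
    ∃ i : Fin n, r = (Fin.castSucc i, Fin.succ i) ∧ lnk J ((i : ℕ) + 1) := by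
  obtain ⟨i, hi⟩ := mem_PiA_iff.1 (hJ hr)
  exact ⟨i, hi, ⟨i, hi ▸ hr, rfl⟩⟩

/-- The "block leader" function associated with `J`. -/
def bta (J : Finset (RootA n)) : ℕ → ℕ
  | 0 => 0
  | s + 1 => if lnk J (s + 1) then bta J s else s + 1

lemma bta_succ (J : Finset (RootA n)) (s : ℕ) :
    bta J (s+1) = if lnk J (s + 1) then bta J s else s + 1 := rfl

lemma bta_le (J : Finset (RootA n)) (s : ℕ) : bta J s ≤ s := by
  induction s with
  | zero => simp [bta]
  | succ t ih => rw [bta_succ]; split <;> omega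

lemma bta_mono (J : Finset (RootA n)) : Monotone (bta J) := by
  apply monotone_nat_of_le_succ
  intro s; rw [bta_succ]; split
  · exact le_rfl
  · exact le_of_lt (Nat.lt_succ_of_le (bta_le J s))

lemma bta_succ_eq_iff (J : Finset (RootA n)) (s : ℕ) :
    bta J (s+1) = bta J s ↔ lnk J (s+1) := by
  rw [bta_succ]; constructor
  · intro h; by_contra hn; rw [if_neg hn] at h
    have := bta_le J s; omega
  · intro h; rw [if_pos h]

lemma bta_idem (J : Finset (RootA n)) (s : ℕ) : bta J (bta J s) = bta J s := by
  induction s with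
  | zero => simp [bta]
  | succ t ih =>
    rw [bta_succ]; split
    · exact ih
    · rw [bta_succ]
      split
      · next h' => exact absurd h' (by assumption)
      · rfl

lemma bta_interval (J : Finset (RootA n)) {x s : ℕ} (h1 : bta J s ≤ x) (h2 : x ≤ s) :
    bta J x = bta J s := by
  induction s with
  | zero =>
    have := bta_le J x
    have hx : x = 0 := by omega
    subst hx; rfl
  | succ t ih =>
    rcases Nat.eq_or_lt_of_le h2 with he | hl
    · rw [he]
    · have hlt : x ≤ t := by omega
      have hlk : lnk J (t+1) := by
        by_contra hn
        rw [bta_succ, if_neg hn] at h1; omega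
      rw [bta_succ, if_pos hlk] at h1 ⊢
      exact ih h1 hlt

lemma bta_between (J : Finset (RootA n)) {x y z : ℕ} (h : bta J x = bta J y)
    (h1 : x ≤ z) (h2 : z ≤ y) : bta J z = bta J y := by
  exact bta_interval J (by have := bta_le J x; omega) h2

lemma bta_lt_bta (J : Finset (RootA n)) {s t : ℕ} (h1 : s ≤ t) (h2 : bta J s ≠ bta J t) :
    bta J s < bta J t := lt_of_le_of_ne (bta_mono J h1) h2

lemma lt_leader (J : Finset (RootA n)) {s t x : ℕ} (h1 : s ≤ t) (h2 : bta J s ≠ bta J t)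
    (h3 : bta J x = bta J s) : x < bta J t := by
  by_contra hn
  push_neg at hn
  have : bta J (bta J t) ≤ bta J x := bta_mono J hn
  rw [bta_idem, h3] at this
  exact absurd (le_antisymm this (le_of_lt (bta_lt_bta J h1 h2))).symm h2

lemma bta_eq_self_iff (J : Finset (RootA n)) (s : ℕ) : bta J s = s ↔ ¬ lnk J s := by
  cases s with
  | zero => simp [bta]; intro h; exact absurd (lnk_pos h) (by omega)
  | succ t =>
    rw [bta_succ]; constructor
    · intro h hl; rw [if_pos hl] at h; have := bta_le J t; omega
    · intro h; rw [if_neg h]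

/-- helper: counting `Fin (n+1)` elements with value in `[a, b)`. -/
lemma fin_count {a b : ℕ} (hb : b ≤ n + 1) :
    ((Finset.univ : Finset (Fin (n+1))).filter fun p : Fin (n+1) => a ≤ (p : ℕ) ∧ (p : ℕ) < b).card
      = b - a := by
  have himg : ((Finset.univ : Finset (Fin (n+1))).filter
      fun p : Fin (n+1) => a ≤ (p : ℕ) ∧ (p : ℕ) < b).image Fin.val = Finset.Ico a b := by
    ext s
    simp only [Finset.mem_image, Finset.mem_filter, Finset.mem_univ, true_and, Finset.mem_Ico]
    constructor
    · rintro ⟨p, hp, rfl⟩; exact hp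
    · rintro ⟨h1, h2⟩; exact ⟨⟨s, by omega⟩, ⟨h1, h2⟩, rfl⟩
  rw [← Nat.card_Ico a b, ← himg,
    Finset.card_image_of_injective _ Fin.val_injective]

/-- The block of a leader `l` is exactly the interval `[l, l + c)` where `c` is its size. -/
lemma blk_iff (J : Finset (RootA n)) {l : ℕ} (hl : bta J l = l) (hlN : l < n + 1) :
    ∃ c, 0 < c ∧ l + c ≤ n + 1 ∧
      (((Finset.univ : Finset (Fin (n+1))).filter fun p : Fin (n+1) => bta J (p : ℕ) = l).card = c) ∧
      (∀ p : Fin (n+1), bta J (p : ℕ) = l ↔ l ≤ (p : ℕ) ∧ (p : ℕ) < l + c) := by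
  classical
  set S := ((Finset.univ : Finset (Fin (n+1))).filter fun p : Fin (n+1) => bta J (p : ℕ) = l) with hS
  have hlS : (⟨l, hlN⟩ : Fin (n+1)) ∈ S := by simp [hS, hl]
  have hne : S.Nonempty := ⟨_, hlS⟩
  set m := S.max' hne with hm
  have hmS : m ∈ S := S.max'_mem hne
  have hmbta : bta J (m : ℕ) = l := by simpa [hS] using hmS
  have hlm : l ≤ (m : ℕ) := by
    have := S.le_max' _ hlS; exact this
  have hiff : ∀ p : Fin (n+1), bta J (p : ℕ) = l ↔ l ≤ (p : ℕ) ∧ (p : ℕ) ≤ (m : ℕ) := by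
    intro p; constructor
    · intro h
      refine ⟨h ▸ bta_le J (p : ℕ), ?_⟩
      have : p ≤ m := S.le_max' p (by simp [hS, h])
      exact this
    · rintro ⟨h1, h2⟩
      have := bta_between J (x := l) (y := (m : ℕ)) (z := (p : ℕ)) (by rw [hl, hmbta]) h1 h2
      rw [this, hmbta]
  refine ⟨(m : ℕ) + 1 - l, by omega, by have := m.isLt; omega, ?_, ?_⟩
  · have : S = ((Finset.univ : Finset (Fin (n+1))).filter
        fun p : Fin (n+1) => l ≤ (p : ℕ) ∧ (p : ℕ) < (m : ℕ) + 1) := by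
      apply Finset.filter_congr; intro p _
      simp only [hiff p]; constructor <;> (intro h; constructor <;> omega)
    rw [this, fin_count (by have := m.isLt; omega)]
  · intro p; rw [hiff p]; constructor <;> (intro h; constructor <;> omega)

end NDA
namespace NDA

variable {n : ℕ}

lemma act_act (w v : WA n) (r : RootA n) : act n w (act n v r) = act n (w * v) r := rfl

lemma act_one (r : RootA n) : act n 1 r = r := rfl

lemma act_inv_act (w : WA n) (r : RootA n) : act n w⁻¹ (act n w r) = r := by
  simp [act]

lemma act_act_inv (w : WA n) (r : RootA n) : act n w (act n w⁻¹ r) = r := by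
  simp [act]

lemma act_injective (w : WA n) : Function.Injective (act n w) := by
  intro r s h
  have := congrArg (act n w⁻¹) h
  rwa [act_inv_act, act_inv_act] at this

lemma equivJ_refl (J : Finset (RootA n)) : EquivJ n J J := by
  refine ⟨1, ?_⟩
  ext r
  simp only [Finset.mem_image]
  constructor
  · intro hr; exact ⟨r, hr, rfl⟩
  · rintro ⟨s, hs, rfl⟩; exact hs

lemma equivJ_symm {J K : Finset (RootA n)} (h : EquivJ n J K) : EquivJ n K J := by
  obtain ⟨w, rfl⟩ := h
  refine ⟨w⁻¹, ?_⟩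
  rw [Finset.image_image]
  ext r; simp only [Finset.mem_image, Function.comp_apply]
  constructor
  · intro hr; exact ⟨r, hr, act_inv_act w r⟩
  · rintro ⟨s, hs, rfl⟩; rwa [act_inv_act]

lemma equivJ_trans {J K L : Finset (RootA n)} (h1 : EquivJ n J K) (h2 : EquivJ n K L) :
    EquivJ n J L := by
  obtain ⟨w, rfl⟩ := h1; obtain ⟨v, rfl⟩ := h2
  exact ⟨v * w, by rw [Finset.image_image]; rfl⟩

lemma equivJ_equivalence : Equivalence (EquivJ n) :=
  ⟨equivJ_refl, equivJ_symm, equivJ_trans⟩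

lemma quot_mk_eq_iff {J K : Finset (RootA n)} :
    Quot.mk (EquivJ n) J = Quot.mk (EquivJ n) K ↔ EquivJ n J K := by
  rw [Quot.eq]
  exact Equivalence.eqvGen_iff equivJ_equivalence

/-- Characterization of membership in `XP` in terms of `lnk`. -/
lemma mem_XP_iff {J : Finset (RootA n)} (hJ : J ⊆ PiA n) (w : WA n) :
    w ∈ XP n J ↔ ∀ i : Fin n, (Fin.castSucc i, Fin.succ i) ∈ J →
      w (Fin.castSucc i) < w (Fin.succ i) := by
  simp only [XP, Finset.mem_filter, Finset.mem_univ, true_and]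
  constructor
  · intro h i hi; exact h _ hi
  · intro h r hr
    obtain ⟨i, rfl, -⟩ := lnk_of_mem hJ hr
    exact h i hr

lemma one_mem_XP {J : Finset (RootA n)} (hJ : J ⊆ PiA n) : (1 : WA n) ∈ XP n J := by
  rw [mem_XP_iff hJ]
  intro i _
  simp only [Equiv.Perm.coe_one, id_eq]
  exact Fin.castSucc_lt_succ (i := i)

/-- If `u` is increasing on each simple root of `J`, it is strictly monotone on each block. -/
lemma mono_on_blk {J : Finset (RootA n)} {u : Fin (n+1) → Fin (n+1)}
    (hu : ∀ i : Fin n, (Fin.castSucc i, Fin.succ i) ∈ J → u (Fin.castSucc i) < u (Fin.succ i))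
    {p q : Fin (n+1)} (hb : bta J (p : ℕ) = bta J (q : ℕ)) (hpq : p < q) : u p < u q := by
  have base : ∀ p q : Fin (n+1), (q : ℕ) = (p : ℕ) + 1 →
      bta J (p : ℕ) = bta J (q : ℕ) → u p < u q := by
    intro p q hq hb
    have hlk : lnk J ((p : ℕ) + 1) := by
      rw [← bta_succ_eq_iff]
      rw [hq] at hb; exact hb.symm
    have hpn : (p : ℕ) < n := by have := lnk_lt hlk; have := q.isLt; omega
    obtain ⟨i, hiJ, hi⟩ := hlk
    have hip : (i : ℕ) = (p : ℕ) := by omega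
    have h1 : Fin.castSucc i = p := by apply Fin.ext; simpa using hip
    have h2 : Fin.succ i = q := by apply Fin.ext; simp [hip, hq.symm]
    rw [← h1, ← h2]
    exact hu i hiJ
  have key : ∀ k : ℕ, ∀ p q : Fin (n+1), (q : ℕ) = (p : ℕ) + k + 1 →
      bta J (p : ℕ) = bta J (q : ℕ) → u p < u q := by
    intro k
    induction k with
    | zero =>
      intro p q hq hb
      exact base p q (by omega) hb
    | succ m ih =>
      intro p q hq hb
      have hmid : ((p : ℕ) + 1) < n + 1 := by have := q.isLt; omega
      set mid : Fin (n+1) := ⟨(p : ℕ) + 1, hmid⟩ with hm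
      have hbm : bta J (mid : ℕ) = bta J (q : ℕ) :=
        bta_between J hb (by simp [hm]) (by simp [hm]; omega)
      have h1 : u p < u mid := base p mid rfl (by rw [hbm, hb])
      have h2 : u mid < u q := ih mid q (by simp [hm]; omega) hbm
      exact lt_trans h1 h2
  exact key ((q : ℕ) - (p : ℕ) - 1) p q (by have := hpq; omega) hb

end NDA
namespace NDA

variable {n : ℕ}

/-- rank of `p` within its fiber of `g`. -/
def rk (g : Fin (n+1) → ℕ) (p : Fin (n+1)) : ℕ :=
  (Finset.univ.filter fun q : Fin (n+1) => q < p ∧ g q = g p).card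

lemma rk_lt_rk {g : Fin (n+1) → ℕ} {p q : Fin (n+1)} (h : p < q) (hg : g p = g q) :
    rk g p < rk g q := by
  apply Finset.card_lt_card
  constructor
  · intro r hr
    simp only [Finset.mem_filter, Finset.mem_univ, true_and] at hr ⊢
    exact ⟨lt_trans hr.1 h, hr.2.trans hg⟩
  · intro hsub
    have : p ∈ Finset.univ.filter fun r : Fin (n+1) => r < q ∧ g r = g q := by
      simp [h, hg]
    have := hsub this
    simp at this

/-- A valid fiber function: a `bta`-composite with a permutation. -/
def Fib (J : Finset (RootA n)) (g : Fin (n+1) → ℕ) : Prop :=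
  ∃ u : WA n, ∀ p, g p = bta J ((u p : Fin (n+1)) : ℕ)

lemma fib_card {J : Finset (RootA n)} {g : Fin (n+1) → ℕ} (hg : Fib J g) (l : ℕ) :
    (Finset.univ.filter fun q : Fin (n+1) => g q = l).card
      = (Finset.univ.filter fun q : Fin (n+1) => bta J (q : ℕ) = l).card := by
  obtain ⟨u, hu⟩ := hg
  apply Finset.card_bij (fun q _ => u q)
  · intro q hq; simp only [Finset.mem_filter, Finset.mem_univ, true_and] at hq ⊢
    rw [← hu q]; exact hq
  · intro a _ b _ h; exact u.injective h
  · intro q hq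
    simp only [Finset.mem_filter, Finset.mem_univ, true_and] at hq ⊢
    exact ⟨u⁻¹ q, by rw [hu (u⁻¹ q)]; simp [hq], by simp⟩

lemma bui_spec {J : Finset (RootA n)} {g : Fin (n+1) → ℕ} (hg : Fib J g) (p : Fin (n+1)) :
    g p + rk g p < n + 1 ∧ bta J (g p + rk g p) = g p := by
  obtain ⟨u, hu⟩ := hg
  have hleader : bta J (g p) = g p := by rw [hu p, bta_idem]
  have hgN : g p < n + 1 := by
    rw [hu p]; exact lt_of_le_of_lt (bta_le _ _) (u p).isLt
  obtain ⟨c, hc0, hcN, hcard, hiff⟩ := blk_iff J hleader hgN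
  have hrk : rk g p < c := by
    rw [← hcard, ← fib_card ⟨u, hu⟩ (g p)]
    apply Finset.card_lt_card
    constructor
    · intro r hr; simp only [Finset.mem_filter, Finset.mem_univ, true_and] at hr ⊢
      exact hr.2
    · intro hsub
      have : p ∈ Finset.univ.filter fun q : Fin (n+1) => g q = g p := by simp
      have := hsub this
      simp at this
  constructor
  · omega
  · exact ((hiff ⟨g p + rk g p, by omega⟩).2 (by simp; omega))

/-- The permutation built from a fiber function: within each block, values are
assigned in increasing order of position. -/
def buiP {J : Finset (RootA n)} {g : Fin (n+1) → ℕ} (hg : Fib J g) : WA n :=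
  Equiv.ofBijective (fun p => (⟨g p + rk g p, (bui_spec hg p).1⟩ : Fin (n+1)))
    (by
      rw [Finite.injective_iff_bijective.symm]
      intro p q h
      have hv : g p + rk g p = g q + rk g q := by
        simpa using congrArg Fin.val h
      have hgpq : g p = g q := by
        have h1 := (bui_spec hg p).2
        have h2 := (bui_spec hg q).2
        rw [← h1, ← h2, hv]
      have hrk : rk g p = rk g q := by omega
      by_contra hne
      rcases lt_or_gt_of_ne hne with hlt | hlt
      · exact absurd hrk (Nat.ne_of_lt (rk_lt_rk hlt hgpq))
      · exact absurd hrk.symm (Nat.ne_of_lt (rk_lt_rk hlt hgpq.symm)))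

lemma buiP_val {J : Finset (RootA n)} {g : Fin (n+1) → ℕ} (hg : Fib J g) (p : Fin (n+1)) :
    ((buiP hg p : Fin (n+1)) : ℕ) = g p + rk g p := rfl

lemma bta_buiP {J : Finset (RootA n)} {g : Fin (n+1) → ℕ} (hg : Fib J g) (p : Fin (n+1)) :
    bta J ((buiP hg p : Fin (n+1)) : ℕ) = g p := by
  rw [buiP_val]; exact (bui_spec hg p).2

/-- B5 : `(buiP g)⁻¹` is increasing on the simple roots of `J`. -/
lemma buiP_inv_incr {J : Finset (RootA n)} {g : Fin (n+1) → ℕ} (hg : Fib J g)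
    (i : Fin n) (hi : (Fin.castSucc i, Fin.succ i) ∈ J) :
    (buiP hg)⁻¹ (Fin.castSucc i) < (buiP hg)⁻¹ (Fin.succ i) := by
  set w := buiP hg
  set p := w⁻¹ (Fin.castSucc i) with hp
  set q := w⁻¹ (Fin.succ i) with hq
  have hwp : w p = Fin.castSucc i := by simp [hp]
  have hwq : w q = Fin.succ i := by simp [hq]
  have hlk : lnk J ((i : ℕ) + 1) := ⟨i, hi, rfl⟩
  have hgp : g p = bta J ((i : ℕ)) := by
    have := bta_buiP hg p; rw [hwp] at this; simpa using this.symm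
  have hgq : g q = bta J ((i : ℕ) + 1) := by
    have := bta_buiP hg q; rw [hwq] at this; simpa using this.symm
  have hgeq : g p = g q := by
    rw [hgp, hgq, bta_succ_eq_iff _ _ |>.2 hlk]
  have hvp : (w p : ℕ) = g p + rk g p := buiP_val hg p
  have hvq : (w q : ℕ) = g q + rk g q := buiP_val hg q
  rw [hwp] at hvp; rw [hwq] at hvq
  have hrklt : rk g p < rk g q := by
    simp only [Fin.coe_castSucc, Fin.val_succ] at hvp hvq
    omega
  by_contra hle
  push_neg at hle
  rcases eq_or_lt_of_le hle with he | hl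
  · rw [← he] at hrklt; exact absurd hrklt (lt_irrefl _)
  · exact absurd hrklt (not_lt_of_gt (rk_lt_rk hl hgeq.symm))

/-- B6 : if `g` is nondecreasing at an adjacent pair, `buiP g` increases there. -/
lemma buiP_incr {J : Finset (RootA n)} {g : Fin (n+1) → ℕ} (hg : Fib J g)
    {p q : Fin (n+1)} (hpq : (q : ℕ) = (p : ℕ) + 1) (hle : g p ≤ g q) :
    buiP hg p < buiP hg q := by
  rcases eq_or_lt_of_le hle with he | hl
  · have : rk g p < rk g q := rk_lt_rk (by omega) he
    have h1 := buiP_val hg p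
    have h2 := buiP_val hg q
    rw [Fin.lt_iff_val_lt_val, h1, h2]
    omega
  · rw [Fin.lt_iff_val_lt_val]
    by_contra hc
    push_neg at hc
    have := bta_mono J hc
    rw [buiP_val, buiP_val, (bui_spec hg p).2, (bui_spec hg q).2] at this
    omega

/-- B7 : reconstruction. If `w⁻¹` is increasing on each `J`-block then `w` is rebuilt
from its fiber function. -/
lemma buiP_recon {J : Finset (RootA n)} (w : WA n)
    (hw : ∀ i : Fin n, (Fin.castSucc i, Fin.succ i) ∈ J →
      w⁻¹ (Fin.castSucc i) < w⁻¹ (Fin.succ i)) :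
    buiP (J := J) (g := fun p => bta J ((w p : Fin (n+1)) : ℕ)) ⟨w, fun _ => rfl⟩ = w := by
  set g : Fin (n+1) → ℕ := fun p => bta J ((w p : Fin (n+1)) : ℕ) with hgdef
  have hmono : ∀ z1 z2 : Fin (n+1), bta J (z1 : ℕ) = bta J (z2 : ℕ) → z1 < z2 →
      w⁻¹ z1 < w⁻¹ z2 := by
    intro z1 z2 hb hlt
    exact mono_on_blk (u := fun z => w⁻¹ z) hw hb hlt
  apply Equiv.ext
  intro p
  apply Fin.ext
  erw [buiP_val]
  set l := bta J ((w p : Fin (n+1)) : ℕ) with hl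
  have hleader : bta J l = l := bta_idem _ _
  have hlN : l < n + 1 := lt_of_le_of_lt (bta_le _ _) (w p).isLt
  obtain ⟨c, hc0, hcN, hcard, hiff⟩ := blk_iff J hleader hlN
  have hwp_mem : l ≤ ((w p : Fin (n+1)) : ℕ) ∧ ((w p : Fin (n+1)) : ℕ) < l + c :=
    (hiff (w p)).1 rfl
  have hrk : rk g p = ((w p : Fin (n+1)) : ℕ) - l := by
    unfold rk
    have hbij : (Finset.univ.filter fun q : Fin (n+1) => q < p ∧ g q = g p).card
        = (Finset.univ.filter fun z : Fin (n+1) =>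
            l ≤ (z : ℕ) ∧ (z : ℕ) < ((w p : Fin (n+1)) : ℕ)).card := by
      apply Finset.card_bij (fun q _ => w q)
      · intro q hq
        simp only [Finset.mem_filter, Finset.mem_univ, true_and] at hq ⊢
        obtain ⟨hqp, hgq⟩ := hq
        have hfib : bta J ((w q : Fin (n+1)) : ℕ) = l := hgq
        refine ⟨hfib ▸ bta_le _ _, ?_⟩
        have hwqp : w q < w p := by
          rcases lt_trichotomy (w q) (w p) with h | h | h
          · exact h
          · exact absurd (w.injective h) (ne_of_lt hqp)
          · have := hmono (w p) (w q) (by rw [← hl, hfib]) h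
            simp only [Equiv.Perm.coe_inv, Equiv.symm_apply_apply] at this
            exact absurd hqp (not_lt_of_gt this)
        exact hwqp
      · intro a _ b _ h; exact w.injective h
      · intro z hz
        simp only [Finset.mem_filter, Finset.mem_univ, true_and] at hz ⊢
        have hzb : bta J (z : ℕ) = l := (hiff z).2 ⟨hz.1, by omega⟩
        refine ⟨w⁻¹ z, ⟨?_, ?_⟩, by simp⟩
        · have := hmono z (w p) (by rw [hzb, ← hl]) (by
            rw [Fin.lt_iff_val_lt_val]; exact hz.2)
          simpa using this
        · show bta J ((w (w⁻¹ z) : Fin (n+1)) : ℕ) = g p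
          simp only [Equiv.Perm.coe_inv, Equiv.apply_symm_apply]
          rw [hzb]
    rw [hbij, fin_count (w p).isLt.le]
  show g p + rk g p = ((w p : Fin (n+1)) : ℕ)
  have : g p = l := rfl
  omega

end NDA
namespace NDA

variable {n : ℕ}

lemma bta_swap {J : Finset (RootA n)} {i : Fin n} (hi : (Fin.castSucc i, Fin.succ i) ∈ J)
    (p : Fin (n+1)) :
    bta J ((Equiv.swap (Fin.castSucc i) (Fin.succ i) p : Fin (n+1)) : ℕ) = bta J (p : ℕ) := by
  have hlk : lnk J ((i : ℕ) + 1) := ⟨i, hi, rfl⟩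
  have hb : bta J ((i : ℕ) + 1) = bta J (i : ℕ) := (bta_succ_eq_iff J _).2 hlk
  rcases eq_or_ne p (Fin.castSucc i) with rfl | h1
  · rw [Equiv.swap_apply_left]; simpa using hb
  rcases eq_or_ne p (Fin.succ i) with rfl | h2
  · rw [Equiv.swap_apply_right]; simpa using hb.symm
  · rw [Equiv.swap_apply_of_ne_of_ne h1 h2]

/-- The inversion count of a permutation. -/
def invC (u : WA n) : ℕ :=
  (Finset.univ.filter fun pq : Fin (n+1) × Fin (n+1) => pq.1 < pq.2 ∧ u pq.2 < u pq.1).card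

lemma swap_adj_lt {a b : Fin (n+1)} (hab : (b : ℕ) = (a : ℕ) + 1) {p q : Fin (n+1)}
    (hpq : p < q) (hne : ¬(p = a ∧ q = b)) :
    Equiv.swap a b p < Equiv.swap a b q := by
  have hswap : ∀ x : Fin (n+1), ((Equiv.swap a b x : Fin (n+1)) : ℕ) =
      if x = a then (b : ℕ) else if x = b then (a : ℕ) else (x : ℕ) := by
    intro x
    rcases eq_or_ne x a with rfl | h1
    · simp [Equiv.swap_apply_left]
    rcases eq_or_ne x b with rfl | h2
    · simp [Equiv.swap_apply_right, h1]
    · simp [Equiv.swap_apply_of_ne_of_ne h1 h2, h1, h2]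
  rw [Fin.lt_iff_val_lt_val, hswap p, hswap q]
  rw [Fin.lt_iff_val_lt_val] at hpq
  have hpa : p = a ↔ (p : ℕ) = (a : ℕ) := ⟨fun h => h ▸ rfl, fun h => Fin.ext h⟩
  have hpb : p = b ↔ (p : ℕ) = (b : ℕ) := ⟨fun h => h ▸ rfl, fun h => Fin.ext h⟩
  have hqa : q = a ↔ (q : ℕ) = (a : ℕ) := ⟨fun h => h ▸ rfl, fun h => Fin.ext h⟩
  have hqb : q = b ↔ (q : ℕ) = (b : ℕ) := ⟨fun h => h ▸ rfl, fun h => Fin.ext h⟩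
  have hne' : ¬((p : ℕ) = (a : ℕ) ∧ (q : ℕ) = (b : ℕ)) := by
    intro ⟨h1, h2⟩; exact hne ⟨Fin.ext h1, Fin.ext h2⟩
  split_ifs with h1 h2 h3 h4 h5 h6 h7 h8 <;>
    simp only [hpa, hpb, hqa, hqb] at * <;> omega

lemma invC_decrease (u : WA n) {a b : Fin (n+1)} (hab : (b : ℕ) = (a : ℕ) + 1)
    (h : u b < u a) : invC (u * Equiv.swap a b) < invC u := by
  classical
  set s := Equiv.swap a b
  have hmem : (a, b) ∈ (Finset.univ.filter
      fun pq : Fin (n+1) × Fin (n+1) => pq.1 < pq.2 ∧ u pq.2 < u pq.1) := by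
    simp only [Finset.mem_filter, Finset.mem_univ, true_and]
    exact ⟨by rw [Fin.lt_iff_val_lt_val]; omega, h⟩
  have hcard : invC (u * s) ≤ ((Finset.univ.filter
      fun pq : Fin (n+1) × Fin (n+1) => pq.1 < pq.2 ∧ u pq.2 < u pq.1).erase (a, b)).card := by
    apply Finset.card_le_card_of_injOn (fun pq => (s pq.1, s pq.2))
    · intro pq hpq
      simp only [invC, Finset.mem_coe, Finset.mem_filter, Finset.mem_univ, true_and] at hpq
      obtain ⟨h1, h2⟩ := hpq
      have hne : ¬(pq.1 = a ∧ pq.2 = b) := by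
        rintro ⟨ha, hb⟩
        rw [ha, hb] at h2
        have e1 : (u * s) b = u a := by simp [s, Equiv.swap_apply_right, Equiv.Perm.mul_apply]
        have e2 : (u * s) a = u b := by simp [s, Equiv.swap_apply_left, Equiv.Perm.mul_apply]
        rw [e1, e2] at h2
        exact absurd h2 (not_lt_of_gt h)
      refine Finset.mem_erase.2 ⟨?_, ?_⟩
      · intro hcon
        have h1' : s pq.1 = a := congrArg Prod.fst hcon
        have h2' : s pq.2 = b := congrArg Prod.snd hcon
        have : pq.1 = s a := by rw [← h1']; simp [s]
        have hb1 : pq.1 = b := by rw [this]; simp [s, Equiv.swap_apply_left]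
        have : pq.2 = s b := by rw [← h2']; simp [s]
        have ha2 : pq.2 = a := by rw [this]; simp [s, Equiv.swap_apply_right]
        rw [hb1, ha2, Fin.lt_iff_val_lt_val] at h1
        omega
      · simp only [Finset.mem_filter, Finset.mem_univ, true_and]
        refine ⟨swap_adj_lt hab h1 hne, ?_⟩
        have e1 : (u * s) pq.1 = u (s pq.1) := rfl
        have e2 : (u * s) pq.2 = u (s pq.2) := rfl
        rw [e1, e2] at h2
        exact h2
    · intro x hx y hy hxy
      have h1 : s x.1 = s y.1 := congrArg Prod.fst hxy
      have h2 : s x.2 = s y.2 := congrArg Prod.snd hxy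
      exact Prod.ext (s.injective h1) (s.injective h2)
  calc invC (u * s) ≤ _ := hcard
    _ < _ := Finset.card_erase_lt_of_mem hmem
    _ = invC u := rfl

lemma strictMono_eq_one {u : WA n} (hu : StrictMono (⇑u)) : u = 1 := by
  have hinv : StrictMono (⇑u⁻¹) := by
    intro p q hpq
    rcases lt_trichotomy (u⁻¹ p) (u⁻¹ q) with h | h | h
    · exact h
    · exact absurd (congrArg u h) (by simp; exact ne_of_lt hpq)
    · have := hu h
      simp only [Equiv.Perm.coe_inv, Equiv.apply_symm_apply] at this
      exact absurd hpq (not_lt_of_gt this)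
  have le_ap : ∀ (v : WA n), StrictMono (⇑v) → ∀ p, p ≤ v p := by
    intro v hv p
    induction p using Fin.induction with
    | zero => exact Fin.zero_le _
    | succ i ih =>
      have h1 : v (Fin.castSucc i) < v (Fin.succ i) := hv (Fin.castSucc_lt_succ (i := i))
      have h2 := ih
      rw [Fin.le_def] at h2 ⊢
      rw [Fin.lt_iff_val_lt_val] at h1
      simp only [Fin.coe_castSucc] at h2 h1
      simp only [Fin.val_succ]
      omega
  apply Equiv.ext
  intro p
  have h1 := le_ap u hu p
  have h2 := le_ap u⁻¹ hinv (u p)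
  simp only [Equiv.Perm.coe_inv, Equiv.symm_apply_apply] at h2
  exact le_antisymm h2 h1

lemma swap_mem_WP {J : Finset (RootA n)} {i : Fin n}
    (hi : (Fin.castSucc i, Fin.succ i) ∈ J) :
    Equiv.swap (Fin.castSucc i) (Fin.succ i) ∈ WP n J := by
  apply Subgroup.subset_closure
  exact ⟨(Fin.castSucc i, Fin.succ i), hi, rfl⟩

/-- T1, hard direction: block-preserving permutations lie in `WP n J`. -/
lemma fix_mem_WP {J : Finset (RootA n)} (hJ : J ⊆ PiA n) :
    ∀ u : WA n, (∀ p : Fin (n+1), bta J ((u p : Fin (n+1)) : ℕ) = bta J (p : ℕ)) →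
      u ∈ WP n J := by
  have main : ∀ N : ℕ, ∀ u : WA n, invC u = N →
      (∀ p : Fin (n+1), bta J ((u p : Fin (n+1)) : ℕ) = bta J (p : ℕ)) → u ∈ WP n J := by
    intro N
    induction N using Nat.strong_induction_on with
    | _ N ih =>
    intro u hi hfix
    by_cases hex : ∃ i : Fin n, (Fin.castSucc i, Fin.succ i) ∈ J ∧ u (Fin.succ i) < u (Fin.castSucc i)
    · obtain ⟨i, hiJ, hlt⟩ := hex
      set s := Equiv.swap (Fin.castSucc i) (Fin.succ i)
      have hdec : invC (u * s) < invC u :=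
        invC_decrease u (by simp) hlt
      have hfix' : ∀ p : Fin (n+1), bta J (((u * s) p : Fin (n+1)) : ℕ) = bta J (p : ℕ) := by
        intro p
        have : (u * s) p = u (s p) := rfl
        rw [this, hfix (s p), bta_swap hiJ p]
      have hus : u * s ∈ WP n J := ih (invC (u * s)) (hi ▸ hdec) (u * s) rfl hfix'
      have : u = (u * s) * s := by
        rw [mul_assoc]
        simp [s, Equiv.swap_mul_self]
      rw [this]
      exact Subgroup.mul_mem _ hus (swap_mem_WP hiJ)
    · push_neg at hex
      have hmono : StrictMono (⇑u) := by
        intro p q hpq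
        by_cases hb : bta J (p : ℕ) = bta J (q : ℕ)
        · apply mono_on_blk (u := ⇑u) _ hb hpq
          intro i hiJ
          have hne : u (Fin.castSucc i) ≠ u (Fin.succ i) :=
            fun h => absurd (u.injective h) (ne_of_lt (Fin.castSucc_lt_succ (i := i)))
          exact lt_of_le_of_ne (hex i hiJ) hne
        · have hlt : bta J (p : ℕ) < bta J (q : ℕ) :=
            bta_lt_bta J (le_of_lt hpq) hb
          rw [Fin.lt_iff_val_lt_val]
          by_contra hc
          push_neg at hc
          have := bta_mono J hc
          rw [hfix p, hfix q] at this
          omega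
      rw [strictMono_eq_one hmono]
      exact Subgroup.one_mem _
  intro u hfix
  exact main (invC u) u rfl hfix

/-- T1, easy direction. -/
lemma WP_fixes {J : Finset (RootA n)} (hJ : J ⊆ PiA n) {u : WA n} (hu : u ∈ WP n J) :
    ∀ p : Fin (n+1), bta J ((u p : Fin (n+1)) : ℕ) = bta J (p : ℕ) := by
  set H : Subgroup (WA n) :=
    { carrier := {v : WA n | ∀ p : Fin (n+1), bta J ((v p : Fin (n+1)) : ℕ) = bta J (p : ℕ)}
      one_mem' := by intro p; rfl
      mul_mem' := by
        intro v w hv hw p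
        have : (v * w) p = v (w p) := rfl
        rw [this, hv (w p), hw p]
      inv_mem' := by
        intro v hv p
        have := hv (v⁻¹ p)
        simp only [Equiv.Perm.coe_inv, Equiv.apply_symm_apply] at this
        exact this.symm } with hH
  have : WP n J ≤ H := by
    rw [WP, Subgroup.closure_le]
    rintro x ⟨r, hr, rfl⟩
    obtain ⟨i, rfl, -⟩ := lnk_of_mem hJ hr
    intro p
    exact bta_swap hr p
  exact this hu

lemma mem_WP_iff {J : Finset (RootA n)} (hJ : J ⊆ PiA n) (u : WA n) :
    u ∈ WP n J ↔ ∀ p : Fin (n+1), bta J ((u p : Fin (n+1)) : ℕ) = bta J (p : ℕ) :=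
  ⟨WP_fixes hJ, fix_mem_WP hJ u⟩

end NDA
namespace NDA

variable {n : ℕ}

lemma buiP_congr {J : Finset (RootA n)} {g1 g2 : Fin (n+1) → ℕ} (h : g1 = g2)
    (h1 : Fib J g1) (h2 : Fib J g2) : buiP h1 = buiP h2 := by subst h; rfl

/-- The distinguished representative of the coset `x · W_J`. -/
def lcrep (J : Finset (RootA n)) (x : WA n) : WA n :=
  (buiP (J := J) (g := fun p => bta J ((x⁻¹ p : Fin (n+1)) : ℕ)) ⟨x⁻¹, fun _ => rfl⟩)⁻¹

lemma lcrep_mem_XP {J : Finset (RootA n)} (hJ : J ⊆ PiA n) (x : WA n) :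
    lcrep J x ∈ XP n J := by
  rw [mem_XP_iff hJ]
  intro i hi
  exact buiP_inv_incr _ i hi

lemma lcrep_mem_WP {J : Finset (RootA n)} (hJ : J ⊆ PiA n) (x : WA n) :
    (lcrep J x)⁻¹ * x ∈ WP n J := by
  apply fix_mem_WP hJ
  intro p
  have h1 : ((lcrep J x)⁻¹ * x) p =
      (buiP (J := J) (g := fun p => bta J ((x⁻¹ p : Fin (n+1)) : ℕ)) ⟨x⁻¹, fun _ => rfl⟩) (x p) := by
    simp [lcrep]
  rw [h1]; erw [bta_buiP]
  simp

lemma lcrep_unique {J : Finset (RootA n)} (hJ : J ⊆ PiA n) {d x : WA n}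
    (hd : d ∈ XP n J) (hdx : d⁻¹ * x ∈ WP n J) : d = lcrep J x := by
  set e := lcrep J x with he
  have hde : d⁻¹ * e ∈ WP n J := by
    have h2 : e⁻¹ * x ∈ WP n J := lcrep_mem_WP hJ x
    have : d⁻¹ * e = (d⁻¹ * x) * (e⁻¹ * x)⁻¹ := by group
    rw [this]
    exact Subgroup.mul_mem _ hdx (Subgroup.inv_mem _ h2)
  have hfix := WP_fixes hJ hde
  have hg : (fun p => bta J ((d⁻¹ p : Fin (n+1)) : ℕ)) =
      (fun p => bta J ((e⁻¹ p : Fin (n+1)) : ℕ)) := by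
    funext z
    have := hfix (e⁻¹ z)
    have h1 : (d⁻¹ * e) (e⁻¹ z) = d⁻¹ z := by simp
    rw [h1] at this
    exact this
  have hrd : buiP (J := J) (g := fun p => bta J ((d⁻¹ p : Fin (n+1)) : ℕ)) ⟨d⁻¹, fun _ => rfl⟩ = d⁻¹ := by
    apply buiP_recon (J := J) d⁻¹
    intro i hi
    simp only [inv_inv]
    exact (mem_XP_iff hJ d).1 hd i hi
  have hre : buiP (J := J) (g := fun p => bta J ((e⁻¹ p : Fin (n+1)) : ℕ)) ⟨e⁻¹, fun _ => rfl⟩ = e⁻¹ := by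
    apply buiP_recon (J := J) e⁻¹
    intro i hi
    simp only [inv_inv]
    exact (mem_XP_iff hJ e).1 (lcrep_mem_XP hJ x) i hi
  have : d⁻¹ = e⁻¹ := by
    rw [← hrd, ← hre]
    exact buiP_congr hg _ _
  exact inv_injective this

/-- Monotone rearrangements agree. -/
lemma mono_perm_eq {φ ψ : Fin (n+1) → ℕ} (hφ : Monotone φ) (hψ : Monotone ψ)
    (c : WA n) (hrel : ∀ p, ψ p = φ (c p)) : ψ = φ := by
  funext p
  by_contra hne
  have hcount : ∀ k, (Finset.univ.filter fun q : Fin (n+1) => ψ q ≤ k).card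
      = (Finset.univ.filter fun q : Fin (n+1) => φ q ≤ k).card := by
    intro k
    apply Finset.card_bij (fun q _ => c q)
    · intro q hq; simp only [Finset.mem_filter, Finset.mem_univ, true_and] at hq ⊢
      rw [← hrel q]; exact hq
    · intro a _ b _ h; exact c.injective h
    · intro q hq; simp only [Finset.mem_filter, Finset.mem_univ, true_and] at hq ⊢
      exact ⟨c⁻¹ q, by rw [hrel (c⁻¹ q)]; simpa using hq, by simp⟩
  have hcard_lt : ∀ p : Fin (n+1),
      ((Finset.univ.filter fun q : Fin (n+1) => (q : ℕ) < (p : ℕ) + 1).card = (p : ℕ) + 1) := by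
    intro p
    have := fin_count (n := n) (a := 0) (b := (p : ℕ) + 1) (by have := p.isLt; omega)
    simpa using this
  have hcard_lt' : ∀ p : Fin (n+1),
      ((Finset.univ.filter fun q : Fin (n+1) => (q : ℕ) < (p : ℕ)).card = (p : ℕ)) := by
    intro p
    have := fin_count (n := n) (a := 0) (b := (p : ℕ)) (by have := p.isLt; omega)
    simpa using this
  rcases lt_or_gt_of_ne hne with hlt | hlt
  · -- ψ p < φ p
    have h1 : (Finset.univ.filter fun q : Fin (n+1) => ψ q ≤ ψ p).card ≥ (p : ℕ) + 1 := by
      rw [← hcard_lt p]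
      apply Finset.card_le_card
      intro q hq
      simp only [Finset.mem_filter, Finset.mem_univ, true_and] at hq ⊢
      exact hψ (by rw [Fin.le_def]; omega)
    have h2 : (Finset.univ.filter fun q : Fin (n+1) => φ q ≤ ψ p).card ≤ (p : ℕ) := by
      rw [← hcard_lt' p]
      apply Finset.card_le_card
      intro q hq
      simp only [Finset.mem_filter, Finset.mem_univ, true_and] at hq ⊢
      by_contra hc
      push_neg at hc
      have : φ p ≤ φ q := hφ (by rw [Fin.le_def]; omega)
      omega
    have := hcount (ψ p)
    omega
  · -- φ p < ψ p : symmetric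
    have h1 : (Finset.univ.filter fun q : Fin (n+1) => φ q ≤ φ p).card ≥ (p : ℕ) + 1 := by
      rw [← hcard_lt p]
      apply Finset.card_le_card
      intro q hq
      simp only [Finset.mem_filter, Finset.mem_univ, true_and] at hq ⊢
      exact hφ (by rw [Fin.le_def]; omega)
    have h2 : (Finset.univ.filter fun q : Fin (n+1) => ψ q ≤ φ p).card ≤ (p : ℕ) := by
      rw [← hcard_lt' p]
      apply Finset.card_le_card
      intro q hq
      simp only [Finset.mem_filter, Finset.mem_univ, true_and] at hq ⊢
      by_contra hc
      push_neg at hc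
      have : ψ p ≤ ψ q := hψ (by rw [Fin.le_def]; omega)
      omega
    have := hcount (φ p)
    omega

/-- nondecreasing along a block (non-strict version of `mono_on_blk`). -/
lemma mono_on_blk_le {B : Finset (RootA n)} {φ : Fin (n+1) → ℕ}
    (hφ : ∀ i : Fin n, (Fin.castSucc i, Fin.succ i) ∈ B → φ (Fin.castSucc i) ≤ φ (Fin.succ i))
    {p q : Fin (n+1)} (hb : bta B (p : ℕ) = bta B (q : ℕ)) (hpq : p ≤ q) : φ p ≤ φ q := by
  rcases eq_or_lt_of_le hpq with rfl | hlt
  · exact le_rfl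
  have base : ∀ p q : Fin (n+1), (q : ℕ) = (p : ℕ) + 1 →
      bta B (p : ℕ) = bta B (q : ℕ) → φ p ≤ φ q := by
    intro p q hq hb
    have hlk : lnk B ((p : ℕ) + 1) := by
      rw [← bta_succ_eq_iff]; rw [hq] at hb; exact hb.symm
    obtain ⟨i, hiJ, hi⟩ := hlk
    have h1 : Fin.castSucc i = p := by apply Fin.ext; simp; omega
    have h2 : Fin.succ i = q := by apply Fin.ext; simp; omega
    rw [← h1, ← h2]
    exact hφ i hiJ
  have key : ∀ k : ℕ, ∀ p q : Fin (n+1), (q : ℕ) = (p : ℕ) + k + 1 →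
      bta B (p : ℕ) = bta B (q : ℕ) → φ p ≤ φ q := by
    intro k
    induction k with
    | zero => intro p q hq hb; exact base p q (by omega) hb
    | succ m ih =>
      intro p q hq hb
      have hmid : ((p : ℕ) + 1) < n + 1 := by have := q.isLt; omega
      set mid : Fin (n+1) := ⟨(p : ℕ) + 1, hmid⟩ with hm
      have hbm : bta B (mid : ℕ) = bta B (q : ℕ) :=
        bta_between B hb (by simp [hm]) (by simp [hm]; omega)
      exact le_trans (base p mid rfl (by rw [hbm, hb])) (ih mid q (by simp [hm]; omega) hbm)
  exact key ((q : ℕ) - (p : ℕ) - 1) p q (by omega) hb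

/-- Blockwise monotone rearrangements within `B`-blocks agree. -/
lemma mono_perm_eq_blk {B : Finset (RootA n)} {φ ψ : Fin (n+1) → ℕ}
    (hφ : ∀ i : Fin n, (Fin.castSucc i, Fin.succ i) ∈ B → φ (Fin.castSucc i) ≤ φ (Fin.succ i))
    (hψ : ∀ i : Fin n, (Fin.castSucc i, Fin.succ i) ∈ B → ψ (Fin.castSucc i) ≤ ψ (Fin.succ i))
    (c : WA n) (hc : ∀ p : Fin (n+1), bta B ((c p : Fin (n+1)) : ℕ) = bta B (p : ℕ))
    (hrel : ∀ p, ψ p = φ (c p)) : ψ = φ := by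
  funext p
  by_contra hne
  set l := bta B (p : ℕ) with hl
  have hlead : bta B l = l := bta_idem _ _
  have hcount : ∀ k, (Finset.univ.filter fun q : Fin (n+1) => bta B (q : ℕ) = l ∧ ψ q ≤ k).card
      = (Finset.univ.filter fun q : Fin (n+1) => bta B (q : ℕ) = l ∧ φ q ≤ k).card := by
    intro k
    apply Finset.card_bij (fun q _ => c q)
    · intro q hq; simp only [Finset.mem_filter, Finset.mem_univ, true_and] at hq ⊢
      rw [hc q, ← hrel q]; exact hq
    · intro a _ b _ h; exact c.injective h
    · intro q hq; simp only [Finset.mem_filter, Finset.mem_univ, true_and] at hq ⊢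
      refine ⟨c⁻¹ q, ⟨?_, ?_⟩, by simp⟩
      · have := hc (c⁻¹ q); simp at this; rw [Equiv.Perm.coe_inv, ← this]; exact hq.1
      · rw [hrel (c⁻¹ q)]; simpa using hq.2
  have hccount : ∀ (χ : Fin (n+1) → ℕ)
      (hχ : ∀ i : Fin n, (Fin.castSucc i, Fin.succ i) ∈ B → χ (Fin.castSucc i) ≤ χ (Fin.succ i)),
      ((Finset.univ.filter fun q : Fin (n+1) => bta B (q : ℕ) = l ∧ χ q ≤ χ p).card ≥
        (p : ℕ) - l + 1) ∧
      (∀ k, k < χ p →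
        (Finset.univ.filter fun q : Fin (n+1) => bta B (q : ℕ) = l ∧ χ q ≤ k).card ≤ (p : ℕ) - l) := by
    intro χ hχ
    constructor
    · have hsub : (Finset.univ.filter fun q : Fin (n+1) => l ≤ (q : ℕ) ∧ (q : ℕ) < (p : ℕ) + 1)
          ⊆ (Finset.univ.filter fun q : Fin (n+1) => bta B (q : ℕ) = l ∧ χ q ≤ χ p) := by
        intro q hq
        simp only [Finset.mem_filter, Finset.mem_univ, true_and] at hq ⊢
        have hbq : bta B (q : ℕ) = l := bta_between B (x := l) (y := (p : ℕ)) (z := (q : ℕ))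
          (by rw [hlead, hl]) hq.1 (by omega) |>.trans hl.symm
        exact ⟨hbq, mono_on_blk_le hχ (by rw [hbq, hl]) (by rw [Fin.le_def]; omega)⟩
      have := Finset.card_le_card hsub
      rw [fin_count (by have := p.isLt; omega)] at this
      have hlp : l ≤ (p : ℕ) := by rw [hl]; exact bta_le _ _
      omega
    · intro k hk
      have hsub : (Finset.univ.filter fun q : Fin (n+1) => bta B (q : ℕ) = l ∧ χ q ≤ k)
          ⊆ (Finset.univ.filter fun q : Fin (n+1) => l ≤ (q : ℕ) ∧ (q : ℕ) < (p : ℕ)) := by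
        intro q hq
        simp only [Finset.mem_filter, Finset.mem_univ, true_and] at hq ⊢
        refine ⟨hq.1 ▸ bta_le _ _, ?_⟩
        by_contra hc'
        push_neg at hc'
        have : χ p ≤ χ q := mono_on_blk_le hχ (by rw [hq.1]) (by rw [Fin.le_def]; omega)
        omega
      have := Finset.card_le_card hsub
      rwa [fin_count (by have := p.isLt; omega)] at this
  rcases lt_or_gt_of_ne hne with hlt | hlt
  · have h1 := (hccount ψ hψ).1
    have h2 := (hccount φ hφ).2 (ψ p) hlt
    have := hcount (ψ p)
    omega
  · have h1 := (hccount φ hφ).1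
    have h2 := (hccount ψ hψ).2 (φ p) hlt
    have hc' : ∀ p : Fin (n+1), bta B ((c⁻¹ p : Fin (n+1)) : ℕ) = bta B (p : ℕ) := by
      intro q; have := hc (c⁻¹ q); simpa using this.symm
    have := hcount (φ p)
    omega

end NDA
namespace NDA

variable {n : ℕ}

/-- Sorting permutation used to build the distinguished double coset representative. -/
def dsig (A B : Finset (RootA n)) (z : WA n) : WA n :=
  Tuple.sort (fun p : Fin (n+1) => bta B (p : ℕ) * (n+1) + bta A ((z p : Fin (n+1)) : ℕ))

lemma dsig_facts (A B : Finset (RootA n)) (z : WA n) :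
    (∀ p : Fin (n+1), bta B ((dsig A B z p : Fin (n+1)) : ℕ) = bta B (p : ℕ)) ∧
    (∀ p q : Fin (n+1), p ≤ q → bta B (p : ℕ) = bta B (q : ℕ) →
      bta A ((z (dsig A B z p) : Fin (n+1)) : ℕ) ≤ bta A ((z (dsig A B z q) : Fin (n+1)) : ℕ)) := by
  set f : Fin (n+1) → ℕ :=
    fun p => bta B (p : ℕ) * (n+1) + bta A ((z p : Fin (n+1)) : ℕ) with hf
  have hmono : Monotone (f ∘ ⇑(Tuple.sort f)) := Tuple.monotone_sort f
  set σ := Tuple.sort f with hσ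
  have hsnd : ∀ p : Fin (n+1), bta A ((z p : Fin (n+1)) : ℕ) < n + 1 :=
    fun p => lt_of_le_of_lt (bta_le _ _) (z p).isLt
  have hBlt : ∀ p : Fin (n+1), bta B (p : ℕ) < n + 1 :=
    fun p => lt_of_le_of_lt (bta_le _ _) p.isLt
  have hfst : ∀ p q : Fin (n+1), f p ≤ f q → bta B (p : ℕ) ≤ bta B (q : ℕ) := by
    intro p q h
    rw [hf] at h
    simp only at h
    have h1 := hsnd p; have h2 := hsnd q
    by_contra hc; push_neg at hc; nlinarith
  have hσB : ∀ p : Fin (n+1), bta B ((σ p : Fin (n+1)) : ℕ) = bta B (p : ℕ) := by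
    have := mono_perm_eq (n := n) (φ := fun p : Fin (n+1) => bta B (p : ℕ))
      (ψ := fun p : Fin (n+1) => bta B ((σ p : Fin (n+1)) : ℕ))
      (by intro p q hpq; exact bta_mono B (by rw [Fin.le_def] at hpq; exact hpq))
      (by
        intro p q hpq
        exact hfst (σ p) (σ q) (hmono hpq))
      σ (fun p => rfl)
    intro p
    exact congrFun this p
  refine ⟨by intro p; exact hσB p, ?_⟩
  intro p q hpq hb
  have h1 : f (σ p) ≤ f (σ q) := hmono hpq
  rw [hf] at h1
  simp only at h1
  rw [hσB p, hσB q, hb] at h1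
  show bta A ((z (σ p) : Fin (n+1)) : ℕ) ≤ bta A ((z (σ q) : Fin (n+1)) : ℕ)
  omega

/-- The distinguished representative of the double coset `W_A z W_B`. -/
def dcrep (A B : Finset (RootA n)) (z : WA n) : WA n :=
  buiP (J := A) (g := fun p => bta A ((z (dsig A B z p) : Fin (n+1)) : ℕ))
    ⟨z * dsig A B z, fun _ => rfl⟩

lemma dcrep_spec {A B : Finset (RootA n)} (hA : A ⊆ PiA n) (hB : B ⊆ PiA n) (z : WA n) :
    dcrep A B z ∈ XD n A B ∧
      ∃ a b : WA n, a ∈ WP n A ∧ b ∈ WP n B ∧ dcrep A B z = a * z * b := by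
  set σ := dsig A B z with hσ
  set w := dcrep A B z with hw
  obtain ⟨hσB, hnd⟩ := dsig_facts A B z
  have hwXA : w⁻¹ ∈ XP n A := by
    rw [mem_XP_iff hA]
    intro i hi
    exact buiP_inv_incr _ i hi
  have hwXB : w ∈ XP n B := by
    rw [mem_XP_iff hB]
    intro i hi
    apply buiP_incr _ (by simp)
    apply hnd _ _ (le_of_lt (Fin.castSucc_lt_succ (i := i)))
    exact (bta_succ_eq_iff B _).2 ⟨i, hi, rfl⟩ |>.symm ▸ by
      have : lnk B ((i : ℕ) + 1) := ⟨i, hi, rfl⟩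
      have := (bta_succ_eq_iff B ((i : ℕ))).2 this
      simpa using this.symm
  refine ⟨by simp [XD, hwXA, hwXB], ?_⟩
  refine ⟨w * σ⁻¹ * z⁻¹, σ, ?_, ?_, by group⟩
  · apply fix_mem_WP hA
    intro p
    have h2 := bta_buiP (J := A)
      (g := fun q => bta A ((z (dsig A B z q) : Fin (n+1)) : ℕ))
      ⟨z * dsig A B z, fun _ => rfl⟩ (σ⁻¹ (z⁻¹ p))
    calc bta A (((w * σ⁻¹ * z⁻¹) p : Fin (n+1)) : ℕ)
        = bta A ((z (dsig A B z (σ⁻¹ (z⁻¹ p))) : Fin (n+1)) : ℕ) := h2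
      _ = bta A ((p : Fin (n+1)) : ℕ) := by rw [← hσ]; simp
  · exact fix_mem_WP hB σ hσB

lemma dcrep_unique {A B : Finset (RootA n)} (hA : A ⊆ PiA n) (hB : B ⊆ PiA n) {z w' : WA n}
    (hw' : w' ∈ XD n A B)
    (hdec : ∃ a b : WA n, a ∈ WP n A ∧ b ∈ WP n B ∧ w' = a * z * b) :
    w' = dcrep A B z := by
  obtain ⟨hwXD, a, b, ha, hb, hab⟩ := dcrep_spec hA hB (z := z)
  set w := dcrep A B z with hw
  obtain ⟨a', b', ha', hb', hab'⟩ := hdec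
  have hz : z = a⁻¹ * w * b⁻¹ := by rw [hab]; group
  have hrel1 : w' = (a' * a⁻¹) * w * (b⁻¹ * b') := by rw [hab', hz]; group
  set α := a' * a⁻¹ with hα
  set β := b⁻¹ * b' with hβ
  have hαA : α ∈ WP n A := Subgroup.mul_mem _ ha' (Subgroup.inv_mem _ ha)
  have hβB : β ∈ WP n B := Subgroup.mul_mem _ (Subgroup.inv_mem _ hb) hb'
  -- bta_A ∘ w' = (bta_A ∘ w) ∘ β
  have hrel2 : ∀ p : Fin (n+1),
      bta A ((w' p : Fin (n+1)) : ℕ) = bta A ((w (β p) : Fin (n+1)) : ℕ) := by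
    intro p
    have : w' p = α (w (β p)) := by rw [hrel1]; rfl
    rw [this, WP_fixes hA hαA (w (β p))]
  have hXD := hwXD
  simp only [XD, Finset.mem_filter, Finset.mem_univ, true_and] at hXD hw'
  have hndw : ∀ i : Fin n, (Fin.castSucc i, Fin.succ i) ∈ B →
      bta A ((w (Fin.castSucc i) : Fin (n+1)) : ℕ) ≤ bta A ((w (Fin.succ i) : Fin (n+1)) : ℕ) := by
    intro i hi
    apply bta_mono
    have := (mem_XP_iff hB w).1 hXD.2 i hi
    rw [Fin.lt_iff_val_lt_val] at this
    omega
  have hndw' : ∀ i : Fin n, (Fin.castSucc i, Fin.succ i) ∈ B →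
      bta A ((w' (Fin.castSucc i) : Fin (n+1)) : ℕ) ≤ bta A ((w' (Fin.succ i) : Fin (n+1)) : ℕ) := by
    intro i hi
    apply bta_mono
    have := (mem_XP_iff hB w').1 hw'.2 i hi
    rw [Fin.lt_iff_val_lt_val] at this
    omega
  have hgeq : (fun p : Fin (n+1) => bta A ((w' p : Fin (n+1)) : ℕ))
      = (fun p : Fin (n+1) => bta A ((w p : Fin (n+1)) : ℕ)) :=
    mono_perm_eq_blk hndw hndw' β (WP_fixes hB hβB) hrel2
  have hr1 : buiP (J := A) (g := fun p : Fin (n+1) => bta A ((w' p : Fin (n+1)) : ℕ))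
      ⟨w', fun _ => rfl⟩ = w' := by
    apply buiP_recon
    intro i hi
    exact (mem_XP_iff hA w'⁻¹).1 hw'.1 i hi
  have hr2 : buiP (J := A) (g := fun p : Fin (n+1) => bta A ((w p : Fin (n+1)) : ℕ))
      ⟨w, fun _ => rfl⟩ = w := by
    apply buiP_recon
    intro i hi
    exact (mem_XP_iff hA w⁻¹).1 hXD.1 i hi
  rw [← hr1, ← hr2]
  exact buiP_congr hgeq _ _

end NDA
namespace NDA

variable {n : ℕ}

lemma mem_L_iff {A B : Finset (RootA n)} (w : WA n) (r : RootA n) :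
    r ∈ A.image (act n w⁻¹) ∩ B ↔ r ∈ B ∧ act n w r ∈ A := by
  simp only [Finset.mem_inter, Finset.mem_image]
  constructor
  · rintro ⟨⟨a, ha, rfl⟩, hB⟩
    exact ⟨hB, by rwa [act_act_inv]⟩
  · rintro ⟨hB, hA⟩
    exact ⟨⟨act n w r, hA, act_inv_act w r⟩, hB⟩

section Kilmoyer

variable {A B : Finset (RootA n)} (hA : A ⊆ PiA n) (hB : B ⊆ PiA n)
variable {w : WA n} (hw1 : w⁻¹ ∈ XP n A) (hw2 : w ∈ XP n B)

/-- C1 step : a simple root of `L` yields `B`-block and `A`-block equalities. -/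
lemma kil_c1 (hA : A ⊆ PiA n)
    {w : WA n} {p q : Fin (n+1)} (hpq : p ≤ q)
    (h : bta (A.image (act n w⁻¹) ∩ B) (p : ℕ) = bta (A.image (act n w⁻¹) ∩ B) (q : ℕ)) :
    bta B (p : ℕ) = bta B (q : ℕ) ∧
      bta A ((w p : Fin (n+1)) : ℕ) = bta A ((w q : Fin (n+1)) : ℕ) := by
  set L := A.image (act n w⁻¹) ∩ B with hLdef
  have hstep : ∀ i : Fin n, (Fin.castSucc i, Fin.succ i) ∈ L →
      (bta B ((i : ℕ) + 1) = bta B (i : ℕ) ∧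
       bta A ((w (Fin.succ i) : Fin (n+1)) : ℕ) = bta A ((w (Fin.castSucc i) : Fin (n+1)) : ℕ)) := by
    intro i hi
    rw [mem_L_iff] at hi
    obtain ⟨hiB, hiA⟩ := hi
    constructor
    · exact (bta_succ_eq_iff B _).2 ⟨i, hiB, rfl⟩
    · obtain ⟨j, hj⟩ := mem_PiA_iff.1 (hA hiA)
      have h1 : w (Fin.castSucc i) = Fin.castSucc j := by
        have := congrArg Prod.fst hj; simpa [act] using this
      have h2 : w (Fin.succ i) = Fin.succ j := by
        have := congrArg Prod.snd hj; simpa [act] using this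
      rw [h1, h2]
      have : lnk A ((j : ℕ) + 1) := ⟨j, hj ▸ hiA, rfl⟩
      have := (bta_succ_eq_iff A _).2 this
      simpa using this
  -- chain
  have key : ∀ k : ℕ, ∀ p q : Fin (n+1), (q : ℕ) = (p : ℕ) + k →
      bta L (p : ℕ) = bta L (q : ℕ) →
      bta B (p : ℕ) = bta B (q : ℕ) ∧
        bta A ((w p : Fin (n+1)) : ℕ) = bta A ((w q : Fin (n+1)) : ℕ) := by
    intro k
    induction k with
    | zero =>
      intro p q hq _
      have : p = q := Fin.ext (by omega)
      subst this; exact ⟨rfl, rfl⟩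
    | succ m ih =>
      intro p q hq hL
      have hmid : ((p : ℕ) + m) < n + 1 := by have := q.isLt; omega
      set mid : Fin (n+1) := ⟨(p : ℕ) + m, hmid⟩ with hm
      have hbm : bta L (mid : ℕ) = bta L (q : ℕ) :=
        bta_between L hL (by simp [hm]) (by simp [hm]; omega)
      have hbp : bta L (p : ℕ) = bta L (mid : ℕ) := by rw [hbm, hL]
      obtain ⟨ihB, ihA⟩ := ih p mid (by simp [hm]) hbp
      -- step from mid to q
      have hlk : lnk L ((mid : ℕ) + 1) := by
        rw [← bta_succ_eq_iff]
        have : (q : ℕ) = (mid : ℕ) + 1 := by simp [hm]; omega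
        rw [← this, hbm]
      obtain ⟨i, hiL, hival⟩ := hlk
      have hiv : (i : ℕ) = (mid : ℕ) := by omega
      have hci : Fin.castSucc i = mid := Fin.ext (by simpa using hiv)
      have hsi : Fin.succ i = q := Fin.ext (by simp [hiv, hm]; omega)
      obtain ⟨sB, sA⟩ := hstep i hiL
      have hqval : (q : ℕ) = (mid : ℕ) + 1 := by simp [hm]; omega
      constructor
      · rw [ihB, hqval, ← hiv]
        exact sB.symm
      · rw [ihA, ← hci, ← hsi, sA]
  have ⟨r1, r2⟩ := key ((q : ℕ) - (p : ℕ)) p q (by omega) h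
  exact ⟨r1, r2⟩

end Kilmoyer

end NDA
namespace NDA

variable {n : ℕ}

lemma kil_c2 {A B : Finset (RootA n)} (hA : A ⊆ PiA n) (hB : B ⊆ PiA n)
    {w : WA n} (hw1 : w⁻¹ ∈ XP n A) (hw2 : w ∈ XP n B)
    {p q : Fin (n+1)} (hpq : p ≤ q)
    (hBpq : bta B (p : ℕ) = bta B (q : ℕ))
    (hApq : bta A ((w p : Fin (n+1)) : ℕ) = bta A ((w q : Fin (n+1)) : ℕ)) :
    bta (A.image (act n w⁻¹) ∩ B) (p : ℕ) = bta (A.image (act n w⁻¹) ∩ B) (q : ℕ) := by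
  set L := A.image (act n w⁻¹) ∩ B with hLdef
  have hwB : ∀ t t' : Fin (n+1), bta B (t : ℕ) = bta B (t' : ℕ) → t < t' → w t < w t' :=
    fun t t' hb hlt => mono_on_blk (u := ⇑w) ((mem_XP_iff hB w).1 hw2) hb hlt
  have hwAinv : ∀ z z' : Fin (n+1), bta A (z : ℕ) = bta A (z' : ℕ) → z < z' → w⁻¹ z < w⁻¹ z' :=
    fun z z' hb hlt => mono_on_blk (u := ⇑w⁻¹) ((mem_XP_iff hA w⁻¹).1 hw1) hb hlt
  -- w is (weakly) monotone between p and q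
  have hwle : ∀ t t' : Fin (n+1), p ≤ t → t ≤ t' → t' ≤ q → (w t : ℕ) ≤ ((w t' : Fin (n+1)) : ℕ) := by
    intro t t' h1 h2 h3
    rcases eq_or_lt_of_le h2 with rfl | hlt
    · exact le_rfl
    · have hbt : bta B (t : ℕ) = bta B (q : ℕ) :=
        bta_between B hBpq (by rw [Fin.le_def] at h1; omega) (by rw [Fin.le_def] at *; omega)
      have hbt' : bta B (t' : ℕ) = bta B (q : ℕ) :=
        bta_between B hBpq (by rw [Fin.le_def] at *; omega) (by rw [Fin.le_def] at *; omega)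
      exact le_of_lt (hwB t t' (hbt.trans hbt'.symm) hlt)
  -- every intermediate adjacent pair is a root of L
  have hstep : ∀ t : Fin (n+1), p ≤ t → (t : ℕ) < (q : ℕ) → lnk L ((t : ℕ) + 1) := by
    intro t h1 h2
    have ht1 : (t : ℕ) + 1 < n + 1 := by have := q.isLt; omega
    set t1 : Fin (n+1) := ⟨(t : ℕ) + 1, ht1⟩ with htd
    have htleq : (t1 : ℕ) ≤ (q : ℕ) := by simp [htd]; omega
    have hbt : bta B (t : ℕ) = bta B (q : ℕ) :=
      bta_between B hBpq (by rw [Fin.le_def] at h1; omega) (by omega)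
    have hbt1 : bta B (t1 : ℕ) = bta B (q : ℕ) :=
      bta_between B hBpq (by rw [Fin.le_def] at h1; simp [htd]; omega) (by omega)
    have hlkB : lnk B ((t : ℕ) + 1) := by
      rw [← bta_succ_eq_iff]
      have : bta B ((t : ℕ) + 1) = bta B (t1 : ℕ) := rfl
      rw [this, hbt1, hbt]
    -- w t < w t1 ≤ w q, and all of w p .. w q is in one A-block
    have hwtlt : (w t : ℕ) < ((w t1 : Fin (n+1)) : ℕ) := by
      have := hwB t t1 (hbt.trans hbt1.symm) (by rw [Fin.lt_iff_val_lt_val]; simp [htd])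
      rwa [Fin.lt_iff_val_lt_val] at this
    have hwt1le : ((w t1 : Fin (n+1)) : ℕ) ≤ ((w q : Fin (n+1)) : ℕ) :=
      hwle t1 q (by rw [Fin.le_def] at h1 ⊢; simp [htd]; omega) (by rw [Fin.le_def]; omega)
        (le_refl q)
    have hwple : ((w p : Fin (n+1)) : ℕ) ≤ ((w t : Fin (n+1)) : ℕ) :=
      hwle p t (le_refl p) h1 (by rw [Fin.le_def]; omega)
    have hbAt : bta A ((w t : Fin (n+1)) : ℕ) = bta A ((w q : Fin (n+1)) : ℕ) :=
      bta_between A hApq hwple (by omega)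
    -- the gap argument : w t1 = w t + 1
    have hzlt : (w t : ℕ) + 1 < n + 1 := by have := (w q).isLt; omega
    set z : Fin (n+1) := ⟨(w t : ℕ) + 1, hzlt⟩ with hz
    have hbz : bta A (z : ℕ) = bta A ((w q : Fin (n+1)) : ℕ) :=
      bta_between A hApq (by simp [hz]; omega) (by simp [hz]; omega)
    have h5 : t < w⁻¹ z := by
      have := hwAinv (w t) z (by rw [hbAt, hbz]) (by rw [Fin.lt_iff_val_lt_val]; simp [hz])
      simpa using this
    have h6 : w⁻¹ z ≤ t1 := by
      rcases eq_or_lt_of_le (show (z : ℕ) ≤ ((w t1 : Fin (n+1)) : ℕ) by simp [hz]; omega)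
        with he | hlt
      · have : z = w t1 := Fin.ext he
        rw [this]; simp
      · have hbt1A : bta A ((w t1 : Fin (n+1)) : ℕ) = bta A ((w q : Fin (n+1)) : ℕ) :=
          bta_between A hApq (by omega) (by omega)
        have := hwAinv z (w t1) (by rw [hbz, hbt1A]) (by rw [Fin.lt_iff_val_lt_val]; exact hlt)
        simp only [Equiv.Perm.coe_inv, Equiv.symm_apply_apply] at this
        exact le_of_lt this
    have h7 : w⁻¹ z = t1 := by
      apply le_antisymm h6
      rw [Fin.le_def]
      rw [Fin.lt_iff_val_lt_val] at h5
      simp only [htd]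
      omega
    have hwt1 : w t1 = z := by rw [← h7]; simp
    -- so (w t, w t1) is a simple root in A
    have hlkA : lnk A ((w t : ℕ) + 1) := by
      rw [← bta_succ_eq_iff]
      have : bta A ((w t : ℕ) + 1) = bta A (z : ℕ) := rfl
      rw [this, hbz, hbAt]
    -- assemble the root of L
    obtain ⟨i, hiB, hival⟩ := hlkB
    have hci : Fin.castSucc i = t := Fin.ext (by simp; omega)
    have hsi : Fin.succ i = t1 := Fin.ext (by simp [htd]; omega)
    have hactA : act n w (Fin.castSucc i, Fin.succ i) ∈ A := by
      have : act n w (Fin.castSucc i, Fin.succ i) = (w t, w t1) := by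
        rw [hci, hsi]; rfl
      rw [this]
      have hm := mem_of_lnk hlkA hzlt (by omega)
      have e1 : (⟨(w t : ℕ) + 1 - 1, by omega⟩ : Fin (n+1)) = w t := Fin.ext (by simp)
      have e2 : (⟨(w t : ℕ) + 1, hzlt⟩ : Fin (n+1)) = w t1 := by rw [hwt1]
      rwa [e1, e2] at hm
    have hiL : (Fin.castSucc i, Fin.succ i) ∈ L := by
      rw [hLdef, mem_L_iff]
      exact ⟨hiB, hactA⟩
    exact ⟨i, hiL, by omega⟩
  -- chain the L-links from p to q
  have key : ∀ k : ℕ, ∀ t : Fin (n+1), p ≤ t → (t : ℕ) + k = (q : ℕ) →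
      bta L (t : ℕ) = bta L (q : ℕ) := by
    intro k
    induction k with
    | zero => intro t _ h; rw [show (t : ℕ) = (q : ℕ) by omega]
    | succ m ih =>
      intro t h1 h2
      have ht1 : (t : ℕ) + 1 < n + 1 := by have := q.isLt; omega
      have hlk := hstep t h1 (by omega)
      have e : bta L ((t : ℕ) + 1) = bta L (t : ℕ) := (bta_succ_eq_iff L _).2 hlk
      have := ih ⟨(t : ℕ) + 1, ht1⟩ (by rw [Fin.le_def] at h1 ⊢; simp; omega) (by simp; omega)
      simp only at this
      rw [← e, this]
  exact key ((q : ℕ) - (p : ℕ)) p (le_refl p) (by rw [Fin.le_def] at hpq; omega)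

/-- Kilmoyer's theorem : `w⁻¹ W_A w ∩ W_B = W_{w⁻¹(A) ∩ B}` for `w ∈ X_{AB}`. -/
lemma kilmoyer {A B : Finset (RootA n)} (hA : A ⊆ PiA n) (hB : B ⊆ PiA n)
    {w : WA n} (hw1 : w⁻¹ ∈ XP n A) (hw2 : w ∈ XP n B) (u : WA n) :
    (u ∈ WP n B ∧ w * u * w⁻¹ ∈ WP n A) ↔ u ∈ WP n (A.image (act n w⁻¹) ∩ B) := by
  set L := A.image (act n w⁻¹) ∩ B with hLdef
  have hL : L ⊆ PiA n := fun r hr => hB (Finset.mem_of_mem_inter_right hr)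
  constructor
  · rintro ⟨huB, huA⟩
    apply fix_mem_WP hL
    intro p
    have h1 : bta B ((u p : Fin (n+1)) : ℕ) = bta B (p : ℕ) := WP_fixes hB huB p
    have h2 : bta A ((w (u p) : Fin (n+1)) : ℕ) = bta A ((w p : Fin (n+1)) : ℕ) := by
      have : w (u p) = (w * u * w⁻¹) (w p) := by simp [Equiv.Perm.mul_apply]
      rw [this]
      exact WP_fixes hA huA (w p)
    rcases le_total (u p) p with hle | hle
    · exact kil_c2 hA hB hw1 hw2 hle h1 h2
    · exact (kil_c2 hA hB hw1 hw2 hle h1.symm h2.symm).symm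
  · intro huL
    have huB : u ∈ WP n B := by
      have hmono : WP n L ≤ WP n B := by
        apply Subgroup.closure_mono
        apply Set.image_mono
        intro r hr
        exact Finset.mem_coe.2 (Finset.mem_of_mem_inter_right (Finset.mem_coe.1 hr))
      exact hmono huL
    refine ⟨huB, ?_⟩
    apply fix_mem_WP hA
    intro s
    set p := w⁻¹ s with hp
    have hfixL : bta L ((u p : Fin (n+1)) : ℕ) = bta L (p : ℕ) := WP_fixes hL huL p
    have hres : bta A ((w (u p) : Fin (n+1)) : ℕ) = bta A ((w p : Fin (n+1)) : ℕ) := by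
      rcases le_total (u p) p with hle | hle
      · exact (kil_c1 hA hle hfixL).2
      · exact ((kil_c1 hA hle hfixL.symm).2).symm
    have h1 : (w * u * w⁻¹) s = w (u p) := by rw [hp]; rfl
    rw [h1, hres, hp]
    simp
end NDA
namespace NDA

variable {n : ℕ}

/-- The permutation character of `W` acting on `W/W_A`, evaluated via fixed cosets. -/
def chi (A : Finset (RootA n)) : WA n → ℚ := fun x =>
  (((XP n A).filter fun d => d⁻¹ * x * d ∈ WP n A).card : ℚ)

lemma chi_fiber_card {A B : Finset (RootA n)} (hA : A ⊆ PiA n) (hB : B ⊆ PiA n)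
    (x : WA n) {w : WA n} (hw : w ∈ XD n A B) :
    ((((XP n A).filter fun d => d⁻¹ * x * d ∈ WP n A) ×ˢ
      ((XP n B).filter fun e => e⁻¹ * x * e ∈ WP n B)).filter
        fun de => dcrep A B (de.1⁻¹ * de.2) = w).card
    = ((XP n (A.image (act n w⁻¹) ∩ B)).filter
        fun c => c⁻¹ * x * c ∈ WP n (A.image (act n w⁻¹) ∩ B)).card := by
  classical
  set L := A.image (act n w⁻¹) ∩ B with hLdef
  have hL : L ⊆ PiA n := fun r hr => hB (Finset.mem_of_mem_inter_right hr)
  have hwXD := hw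
  simp only [XD, Finset.mem_filter, Finset.mem_univ, true_and] at hwXD
  obtain ⟨hw1, hw2⟩ := hwXD
  have hK12 : ∀ u : WA n, u ∈ WP n L → u ∈ WP n B ∧ w * u * w⁻¹ ∈ WP n A :=
    fun u hu => (kilmoyer hA hB hw1 hw2 u).2 hu
  have hK3 : ∀ u : WA n, u ∈ WP n B → w * u * w⁻¹ ∈ WP n A → u ∈ WP n L :=
    fun u h1 h2 => (kilmoyer hA hB hw1 hw2 u).1 ⟨h1, h2⟩
  set aw : WA n → WA n := fun z => Classical.choose (dcrep_spec hA hB z).2 with hawdef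
  have haw : ∀ z : WA n, ∃ b : WA n, aw z ∈ WP n A ∧ b ∈ WP n B ∧
      dcrep A B z = aw z * z * b :=
    fun z => Classical.choose_spec (dcrep_spec hA hB z).2
  apply Finset.card_bij'
    (i := fun de _ => lcrep L (de.1 * (aw (de.1⁻¹ * de.2))⁻¹ * w))
    (j := fun c _ => (lcrep A (c * w⁻¹), lcrep B c))
  -- hi : i maps into the RHS set
  · rintro ⟨d, e⟩ hde
    simp only [Finset.mem_filter, Finset.mem_product] at hde
    obtain ⟨⟨⟨hdXP, hdW⟩, heXP, heW⟩, hF⟩ := hde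
    obtain ⟨b, haA, hbB, hzdec⟩ := haw (d⁻¹ * e)
    rw [hF] at hzdec
    set a := aw (d⁻¹ * e) with hadef
    -- hzdec : w = a * (d⁻¹ * e) * b
    set c := lcrep L (d * a⁻¹ * w) with hcdef
    have hcXP : c ∈ XP n L := lcrep_mem_XP hL _
    have hT : c⁻¹ * (d * a⁻¹ * w) ∈ WP n L := lcrep_mem_WP hL _
    -- middle element
    have hmidB : w⁻¹ * (a * (d⁻¹ * x * d) * a⁻¹) * w = b⁻¹ * (e⁻¹ * x * e) * b := by
      rw [hzdec]; group
    have hmid_in_B : w⁻¹ * (a * (d⁻¹ * x * d) * a⁻¹) * w ∈ WP n B := by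
      rw [hmidB]
      exact Subgroup.mul_mem _ (Subgroup.mul_mem _ (Subgroup.inv_mem _ hbB) heW) hbB
    have hmid_in_A : w * (w⁻¹ * (a * (d⁻¹ * x * d) * a⁻¹) * w) * w⁻¹ ∈ WP n A := by
      have : w * (w⁻¹ * (a * (d⁻¹ * x * d) * a⁻¹) * w) * w⁻¹
          = a * (d⁻¹ * x * d) * a⁻¹ := by group
      rw [this]
      exact Subgroup.mul_mem _ (Subgroup.mul_mem _ haA hdW) (Subgroup.inv_mem _ haA)
    have hmidL : w⁻¹ * (a * (d⁻¹ * x * d) * a⁻¹) * w ∈ WP n L :=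
      hK3 _ hmid_in_B hmid_in_A
    have hconj : c⁻¹ * x * c = (c⁻¹ * (d * a⁻¹ * w)) *
        (w⁻¹ * (a * (d⁻¹ * x * d) * a⁻¹) * w) * (c⁻¹ * (d * a⁻¹ * w))⁻¹ := by group
    simp only [Finset.mem_filter]
    refine ⟨hcXP, ?_⟩
    rw [hconj]
    exact Subgroup.mul_mem _ (Subgroup.mul_mem _ hT hmidL) (Subgroup.inv_mem _ hT)
  -- hj : j maps into the LHS set
  · intro c hc
    simp only [Finset.mem_filter] at hc
    obtain ⟨hcXP, hcW⟩ := hc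
    set d := lcrep A (c * w⁻¹) with hddef
    set e := lcrep B c with hedef
    have hdXP : d ∈ XP n A := lcrep_mem_XP hA _
    have heXP : e ∈ XP n B := lcrep_mem_XP hB _
    have ha2 : d⁻¹ * (c * w⁻¹) ∈ WP n A := lcrep_mem_WP hA _
    have hb2 : e⁻¹ * c ∈ WP n B := lcrep_mem_WP hB _
    have hwc : w * (c⁻¹ * x * c) * w⁻¹ ∈ WP n A := (hK12 _ hcW).2
    have hcB : c⁻¹ * x * c ∈ WP n B := (hK12 _ hcW).1
    have hdW : d⁻¹ * x * d ∈ WP n A := by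
      have hid : d⁻¹ * x * d = (d⁻¹ * (c * w⁻¹)) * (w * (c⁻¹ * x * c) * w⁻¹) *
          (d⁻¹ * (c * w⁻¹))⁻¹ := by group
      rw [hid]
      exact Subgroup.mul_mem _ (Subgroup.mul_mem _ ha2 hwc) (Subgroup.inv_mem _ ha2)
    have heW : e⁻¹ * x * e ∈ WP n B := by
      have hid : e⁻¹ * x * e = (e⁻¹ * c) * (c⁻¹ * x * c) * (e⁻¹ * c)⁻¹ := by group
      rw [hid]
      exact Subgroup.mul_mem _ (Subgroup.mul_mem _ hb2 hcB) (Subgroup.inv_mem _ hb2)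
    have hF : dcrep A B (d⁻¹ * e) = w := by
      symm
      apply dcrep_unique hA hB hw
      refine ⟨(d⁻¹ * (c * w⁻¹))⁻¹, e⁻¹ * c, Subgroup.inv_mem _ ha2, hb2, by group⟩
    simp only [Finset.mem_filter, Finset.mem_product]
    exact ⟨⟨⟨hdXP, hdW⟩, heXP, heW⟩, hF⟩
  -- left inverse : j (i de) = de
  · rintro ⟨d, e⟩ hde
    simp only [Finset.mem_filter, Finset.mem_product] at hde
    obtain ⟨⟨⟨hdXP, hdW⟩, heXP, heW⟩, hF⟩ := hde
    obtain ⟨b, haA, hbB, hzdec⟩ := haw (d⁻¹ * e)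
    rw [hF] at hzdec
    set a := aw (d⁻¹ * e) with hadef
    set c := lcrep L (d * a⁻¹ * w) with hcdef
    have hT : c⁻¹ * (d * a⁻¹ * w) ∈ WP n L := lcrep_mem_WP hL _
    have hTB : c⁻¹ * (d * a⁻¹ * w) ∈ WP n B := (hK12 _ hT).1
    have hTA : w * (c⁻¹ * (d * a⁻¹ * w)) * w⁻¹ ∈ WP n A := (hK12 _ hT).2
    have hd' : lcrep A (c * w⁻¹) = d := by
      symm
      apply lcrep_unique hA hdXP
      have hid : d⁻¹ * (c * w⁻¹) =
          a⁻¹ * (w * (c⁻¹ * (d * a⁻¹ * w)) * w⁻¹)⁻¹ := by group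
      rw [hid]
      exact Subgroup.mul_mem _ (Subgroup.inv_mem _ haA) (Subgroup.inv_mem _ hTA)
    have he' : lcrep B c = e := by
      symm
      apply lcrep_unique hB heXP
      have hstep1 : e⁻¹ * (d * a⁻¹ * w) = b := by
        rw [hzdec]; group
      have hid : e⁻¹ * c = (e⁻¹ * (d * a⁻¹ * w)) * (c⁻¹ * (d * a⁻¹ * w))⁻¹ := by group
      rw [hid, hstep1]
      exact Subgroup.mul_mem _ hbB (Subgroup.inv_mem _ hTB)
    simp only [hd', he']
  -- right inverse : i (j c) = c
  · intro c hc
    simp only [Finset.mem_filter] at hc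
    obtain ⟨hcXP, hcW⟩ := hc
    set d := lcrep A (c * w⁻¹) with hddef
    set e := lcrep B c with hedef
    have ha2 : d⁻¹ * (c * w⁻¹) ∈ WP n A := lcrep_mem_WP hA _
    have hb2 : e⁻¹ * c ∈ WP n B := lcrep_mem_WP hB _
    obtain ⟨b3, ha3A, hb3B, hzdec⟩ := haw (d⁻¹ * e)
    set a3 := aw (d⁻¹ * e) with ha3def
    have hF : dcrep A B (d⁻¹ * e) = w := by
      symm
      apply dcrep_unique hA hB hw
      refine ⟨(d⁻¹ * (c * w⁻¹))⁻¹, e⁻¹ * c, Subgroup.inv_mem _ ha2, hb2, by group⟩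
    rw [hF] at hzdec
    -- hzdec : w = a3 * (d⁻¹ * e) * b3
    symm
    apply lcrep_unique hL hcXP
    -- c⁻¹ * (d * a3⁻¹ * w) ∈ WP n L
    have htermB : c⁻¹ * (d * a3⁻¹ * w) = (e⁻¹ * c)⁻¹ * b3 := by
      rw [hzdec]
      group
    have hterm_in_B : c⁻¹ * (d * a3⁻¹ * w) ∈ WP n B := by
      rw [htermB]
      exact Subgroup.mul_mem _ (Subgroup.inv_mem _ hb2) hb3B
    have hterm_in_A : w * (c⁻¹ * (d * a3⁻¹ * w)) * w⁻¹ ∈ WP n A := by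
      have hid : w * (c⁻¹ * (d * a3⁻¹ * w)) * w⁻¹ =
          (d⁻¹ * (c * w⁻¹))⁻¹ * a3⁻¹ := by group
      rw [hid]
      exact Subgroup.mul_mem _ (Subgroup.inv_mem _ ha2) (Subgroup.inv_mem _ ha3A)
    exact hK3 _ hterm_in_B hterm_in_A

/-- Product formula for permutation characters (Mackey / Solomon). -/
lemma chi_mul_apply {A B : Finset (RootA n)} (hA : A ⊆ PiA n) (hB : B ⊆ PiA n) (x : WA n) :
    chi A x * chi B x = ∑ w ∈ XD n A B, chi (A.image (act n w⁻¹) ∩ B) x := by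
  classical
  set SA := (XP n A).filter fun d => d⁻¹ * x * d ∈ WP n A with hSA
  set SB := (XP n B).filter fun e => e⁻¹ * x * e ∈ WP n B with hSB
  have h1 : chi A x * chi B x = ((SA ×ˢ SB).card : ℚ) := by
    rw [Finset.card_product]
    push_cast
    rfl
  rw [h1]
  have h2 : (SA ×ˢ SB).card = ∑ w ∈ XD n A B,
      ((SA ×ˢ SB).filter fun de => dcrep A B (de.1⁻¹ * de.2) = w).card := by
    apply Finset.card_eq_sum_card_fiberwise
    intro de _
    exact (dcrep_spec hA hB (de.1⁻¹ * de.2)).1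
  rw [h2]
  push_cast
  apply Finset.sum_congr rfl
  intro w hw
  rw [chi_fiber_card hA hB x hw]
  rfl

end NDA
namespace NDA

variable {n : ℕ}

lemma swap_conj (v : WA n) (a b : Fin (n+1)) :
    Equiv.swap (v a) (v b) = v * Equiv.swap a b * v⁻¹ := by
  ext x
  simp only [Equiv.Perm.mul_apply]
  rcases eq_or_ne x (v a) with rfl | h1
  · simp [Equiv.swap_apply_left]
  rcases eq_or_ne x (v b) with rfl | h2
  · simp [Equiv.swap_apply_right]
  · rw [Equiv.swap_apply_of_ne_of_ne h1 h2,
      Equiv.swap_apply_of_ne_of_ne (by intro h; exact h1 (by rw [← h]; simp))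
        (by intro h; exact h2 (by rw [← h]; simp))]
    simp

lemma mem_WP_image_iff (A : Finset (RootA n)) (v u : WA n) :
    u ∈ WP n (A.image (act n v)) ↔ v⁻¹ * u * v ∈ WP n A := by
  have hgen : ((fun p : RootA n => Equiv.swap p.1 p.2) '' ((A.image (act n v)) : Set (RootA n)))
      = (fun g => v * g * v⁻¹) '' ((fun p : RootA n => Equiv.swap p.1 p.2) '' (A : Set (RootA n))) := by
    ext g
    simp only [Set.mem_image, Finset.coe_image, Finset.mem_coe]
    constructor
    · rintro ⟨r, ⟨s, hs, rfl⟩, rfl⟩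
      exact ⟨Equiv.swap s.1 s.2, ⟨s, hs, rfl⟩, (swap_conj v s.1 s.2).symm⟩
    · rintro ⟨g', ⟨s, hs, rfl⟩, rfl⟩
      exact ⟨act n v s, ⟨s, hs, rfl⟩, (swap_conj v s.1 s.2)⟩
  have hfun : (fun g : WA n => v * g * v⁻¹) = ⇑(MulAut.conj v).toMonoidHom := by
    funext g
    simp [MulAut.conj_apply]
  have hmap : WP n (A.image (act n v)) = Subgroup.map (MulAut.conj v).toMonoidHom (WP n A) := by
    rw [WP, WP, hgen, hfun, ← MonoidHom.map_closure]
  rw [hmap, Subgroup.mem_map]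
  constructor
  · rintro ⟨h, hh, rfl⟩
    have : v⁻¹ * ((MulAut.conj v).toMonoidHom h) * v = h := by
      simp [MulAut.conj]; group
    rwa [this]
  · intro h
    exact ⟨v⁻¹ * u * v, h, by simp [MulAut.conj]; group⟩

lemma chi_conj {A : Finset (RootA n)} (hA : A ⊆ PiA n) {v : WA n}
    (hA' : A.image (act n v) ⊆ PiA n) : chi (A.image (act n v)) = chi A := by
  funext x
  unfold chi
  congr 1
  apply Finset.card_bij' (i := fun d' _ => lcrep A (d' * v)) (j := fun d _ => lcrep (A.image (act n v)) (d * v⁻¹))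
  · intro d' hd'
    simp only [Finset.mem_filter] at hd' ⊢
    obtain ⟨hXP, hW⟩ := hd'
    refine ⟨lcrep_mem_XP hA _, ?_⟩
    have ha : (lcrep A (d' * v))⁻¹ * (d' * v) ∈ WP n A := lcrep_mem_WP hA _
    have hmid : v⁻¹ * (d'⁻¹ * x * d') * v ∈ WP n A := (mem_WP_image_iff A v _).1 hW
    have hid : (lcrep A (d' * v))⁻¹ * x * (lcrep A (d' * v)) =
        ((lcrep A (d' * v))⁻¹ * (d' * v)) * (v⁻¹ * (d'⁻¹ * x * d') * v) *
          ((lcrep A (d' * v))⁻¹ * (d' * v))⁻¹ := by group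
    rw [hid]
    exact Subgroup.mul_mem _ (Subgroup.mul_mem _ ha hmid) (Subgroup.inv_mem _ ha)
  · intro d hd
    simp only [Finset.mem_filter] at hd ⊢
    obtain ⟨hXP, hW⟩ := hd
    refine ⟨lcrep_mem_XP hA' _, ?_⟩
    have ha : (lcrep (A.image (act n v)) (d * v⁻¹))⁻¹ * (d * v⁻¹) ∈ WP n (A.image (act n v)) :=
      lcrep_mem_WP hA' _
    have hmid : v * (d⁻¹ * x * d) * v⁻¹ ∈ WP n (A.image (act n v)) := by
      rw [mem_WP_image_iff]
      have : v⁻¹ * (v * (d⁻¹ * x * d) * v⁻¹) * v = d⁻¹ * x * d := by group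
      rwa [this]
    have hid : (lcrep (A.image (act n v)) (d * v⁻¹))⁻¹ * x * (lcrep (A.image (act n v)) (d * v⁻¹)) =
        ((lcrep (A.image (act n v)) (d * v⁻¹))⁻¹ * (d * v⁻¹)) * (v * (d⁻¹ * x * d) * v⁻¹) *
          ((lcrep (A.image (act n v)) (d * v⁻¹))⁻¹ * (d * v⁻¹))⁻¹ := by group
    rw [hid]
    exact Subgroup.mul_mem _ (Subgroup.mul_mem _ ha hmid) (Subgroup.inv_mem _ ha)
  · intro d' hd'
    simp only [Finset.mem_filter] at hd'
    symm
    apply lcrep_unique hA' hd'.1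
    have ha : (lcrep A (d' * v))⁻¹ * (d' * v) ∈ WP n A := lcrep_mem_WP hA _
    have hid : d'⁻¹ * (lcrep A (d' * v) * v⁻¹) =
        v * ((lcrep A (d' * v))⁻¹ * (d' * v))⁻¹ * v⁻¹ := by group
    rw [hid, mem_WP_image_iff]
    have : v⁻¹ * (v * ((lcrep A (d' * v))⁻¹ * (d' * v))⁻¹ * v⁻¹) * v =
        ((lcrep A (d' * v))⁻¹ * (d' * v))⁻¹ := by group
    rw [this]
    exact Subgroup.inv_mem _ ha
  · intro d hd
    simp only [Finset.mem_filter] at hd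
    symm
    apply lcrep_unique hA hd.1
    have ha : (lcrep (A.image (act n v)) (d * v⁻¹))⁻¹ * (d * v⁻¹) ∈ WP n (A.image (act n v)) :=
      lcrep_mem_WP hA' _
    have hmem := (mem_WP_image_iff A v _).1 ha
    have hid : d⁻¹ * (lcrep (A.image (act n v)) (d * v⁻¹) * v) =
        (v⁻¹ * ((lcrep (A.image (act n v)) (d * v⁻¹))⁻¹ * (d * v⁻¹)) * v)⁻¹ := by group
    rw [hid]
    exact Subgroup.inv_mem _ hmem

/-- The regrouped product formula. -/
lemma chi_mul_sum {A B : Finset (RootA n)} (hA : A ⊆ PiA n) (hB : B ⊆ PiA n) (x : WA n) :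
    chi A x * chi B x = ∑ L ∈ B.powerset, (aC n A B L : ℚ) * chi L x := by
  classical
  rw [chi_mul_apply hA hB x]
  rw [← Finset.sum_fiberwise_of_maps_to (g := fun w : WA n => A.image (act n w⁻¹) ∩ B)
    (t := B.powerset) (fun w _ => Finset.mem_powerset.2 Finset.inter_subset_right)
    (fun w => chi (A.image (act n w⁻¹) ∩ B) x)]
  apply Finset.sum_congr rfl
  intro L hL
  have : ∀ w ∈ (XD n A B).filter (fun w => A.image (act n w⁻¹) ∩ B = L),
      chi (A.image (act n w⁻¹) ∩ B) x = chi L x := by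
    intro w hw
    simp only [Finset.mem_filter] at hw
    rw [hw.2]
  rw [Finset.sum_congr rfl this, Finset.sum_const, aC]
  simp [mul_comm]

end NDA
namespace NDA

variable {n : ℕ}

/-- Function cycling each `A`-block. -/
def xcf (A : Finset (RootA n)) : Fin (n+1) → Fin (n+1) := fun p =>
  if h : lnk A ((p : ℕ) + 1) then ⟨(p : ℕ) + 1, lnk_lt h⟩
  else ⟨bta A (p : ℕ), lt_of_le_of_lt (bta_le _ _) p.isLt⟩

lemma xcf_injective (A : Finset (RootA n)) : Function.Injective (xcf A) := by
  intro p q h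
  unfold xcf at h
  split_ifs at h with h1 h2 h2
  · exact Fin.ext (by have := congrArg Fin.val h; simpa using this)
  · exfalso
    have hv : (p : ℕ) + 1 = bta A (q : ℕ) := by
      have := congrArg Fin.val h; simp at this; omega
    have : bta A ((p : ℕ) + 1) = (p : ℕ) + 1 := by
      rw [hv, bta_idem]
    have h3 := (bta_succ_eq_iff A (p : ℕ)).2 h1
    have := bta_le A (p : ℕ)
    omega
  · exfalso
    have hv : (q : ℕ) + 1 = bta A (p : ℕ) := by
      have := congrArg Fin.val h; simp at this; omega
    have : bta A ((q : ℕ) + 1) = (q : ℕ) + 1 := by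
      rw [hv, bta_idem]
    have h3 := (bta_succ_eq_iff A (q : ℕ)).2 h2
    have := bta_le A (q : ℕ)
    omega
  · -- both wrap : p and q are the maxima of the same block
    have hv : bta A (p : ℕ) = bta A (q : ℕ) := by have := congrArg Fin.val h; simpa using this
    by_contra hne
    have hne' : (p : ℕ) ≠ (q : ℕ) := fun hh => hne (Fin.ext hh)
    rcases Nat.lt_or_ge (p : ℕ) (q : ℕ) with hlt | hge
    · have : bta A ((p : ℕ) + 1) = bta A (q : ℕ) := bta_between A hv (by omega) (by omega)
      exact h1 ((bta_succ_eq_iff A (p : ℕ)).1 (by rw [this, ← hv]))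
    · have hlt : (q : ℕ) < (p : ℕ) := by omega
      have : bta A ((q : ℕ) + 1) = bta A (p : ℕ) := bta_between A hv.symm (by omega) (by omega)
      exact h2 ((bta_succ_eq_iff A (q : ℕ)).1 (by rw [this, hv]))

/-- The canonical permutation cycling each `A`-block. -/
def xcyc (A : Finset (RootA n)) : WA n :=
  Equiv.ofBijective (xcf A) (Finite.injective_iff_bijective.1 (xcf_injective A))

lemma xcyc_apply (A : Finset (RootA n)) (p : Fin (n+1)) : xcyc A p = xcf A p := rfl

lemma xcyc_mem_WP {A : Finset (RootA n)} (hA : A ⊆ PiA n) : xcyc A ∈ WP n A := by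
  apply fix_mem_WP hA
  intro p
  rw [xcyc_apply]
  unfold xcf
  split_ifs with h
  · exact (bta_succ_eq_iff A (p : ℕ)).2 h
  · exact bta_idem A (p : ℕ)

lemma xcyc_reach {A : Finset (RootA n)} {p q : Fin (n+1)}
    (h : bta A (p : ℕ) = bta A (q : ℕ)) : ∃ k : ℕ, ((xcyc A) ^ k) p = q := by
  classical
  -- going up within a block
  have up : ∀ k : ℕ, ∀ p q : Fin (n+1), (q : ℕ) = (p : ℕ) + k →
      bta A (p : ℕ) = bta A (q : ℕ) → ((xcyc A) ^ k) p = q := by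
    intro k
    induction k with
    | zero => intro p q hq _; simp [Fin.ext (by omega : (p : ℕ) = (q : ℕ))]
    | succ m ih =>
      intro p q hq hb
      have hbp1 : bta A ((p : ℕ) + 1) = bta A (q : ℕ) := bta_between A hb (by omega) (by omega)
      have hlk : lnk A ((p : ℕ) + 1) := (bta_succ_eq_iff A (p : ℕ)).1 (by rw [hbp1, ← hb])
      have hstep : xcyc A p = ⟨(p : ℕ) + 1, lnk_lt hlk⟩ := by
        rw [xcyc_apply]; unfold xcf; rw [dif_pos hlk]
      have : ((xcyc A) ^ (m + 1)) p = ((xcyc A) ^ m) (xcyc A p) := by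
        rw [pow_succ]
        rfl
      rw [this, hstep]
      exact ih _ q (by simp; omega) hbp1
  -- from p to the leader of its block
  have hlN : bta A (p : ℕ) < n + 1 := lt_of_le_of_lt (bta_le _ _) p.isLt
  set lf : Fin (n+1) := ⟨bta A (p : ℕ), hlN⟩ with hlf
  set S := (Finset.univ.filter fun r : Fin (n+1) => bta A (r : ℕ) = bta A (p : ℕ)) with hS
  have hpS : p ∈ S := by simp [hS]
  have hne : S.Nonempty := ⟨p, hpS⟩
  set m := S.max' hne with hm
  have hmS : m ∈ S := S.max'_mem hne
  have hmb : bta A (m : ℕ) = bta A (p : ℕ) := by simpa [hS] using hmS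
  have hpm : (p : ℕ) ≤ (m : ℕ) := S.le_max' p hpS
  obtain hk1 : ((xcyc A) ^ ((m : ℕ) - (p : ℕ))) p = m :=
    up _ p m (by omega) hmb.symm
  have hwrap : xcyc A m = lf := by
    rw [xcyc_apply]; unfold xcf
    have hnl : ¬ lnk A ((m : ℕ) + 1) := by
      intro hlk
      have h1 : bta A ((m : ℕ) + 1) = bta A (m : ℕ) := (bta_succ_eq_iff A _).2 hlk
      have hmem : (⟨(m : ℕ) + 1, lnk_lt hlk⟩ : Fin (n+1)) ∈ S := by simp [hS, h1, hmb]
      have h2 := S.le_max' _ hmem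
      rw [← hm, Fin.le_def] at h2
      simp at h2
    rw [dif_neg hnl]
    exact Fin.ext (by simpa using hmb)
  have hlfq : bta A (lf : ℕ) = bta A (q : ℕ) := by
    show bta A (bta A (p : ℕ)) = bta A (q : ℕ)
    rw [bta_idem]
    exact h
  have hlq : (lf : ℕ) ≤ (q : ℕ) := by
    show bta A (p : ℕ) ≤ (q : ℕ)
    rw [h]
    exact bta_le _ _
  obtain hk2 : ((xcyc A) ^ ((q : ℕ) - (lf : ℕ))) lf = q := up _ lf q (by omega) hlfq
  refine ⟨((q : ℕ) - (lf : ℕ)) + 1 + ((m : ℕ) - (p : ℕ)), ?_⟩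
  rw [pow_add, pow_add, pow_one]
  simp only [Equiv.Perm.mul_apply]
  rw [hk1, hwrap, hk2]

/-- The packing relation on parabolic types. -/
def Pack (A B : Finset (RootA n)) : Prop :=
  ∃ φ : WA n, ∀ p q : Fin (n+1), bta A (p : ℕ) = bta A (q : ℕ) →
    bta B ((φ p : Fin (n+1)) : ℕ) = bta B ((φ q : Fin (n+1)) : ℕ)

lemma chi_ne_zero_pack {A B : Finset (RootA n)} (hB : B ⊆ PiA n)
    (h : chi B (xcyc A) ≠ 0) : Pack A B := by
  unfold chi at h
  have hne : ((XP n B).filter fun d => d⁻¹ * xcyc A * d ∈ WP n B).Nonempty := by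
    rw [← Finset.card_pos]
    by_contra hc
    push_neg at hc
    simp only [Nat.le_zero] at hc
    rw [hc] at h
    simp at h
  obtain ⟨d, hd⟩ := hne
  simp only [Finset.mem_filter] at hd
  obtain ⟨-, hdW⟩ := hd
  refine ⟨d⁻¹, ?_⟩
  intro p q hpq
  obtain ⟨k, hk⟩ := xcyc_reach hpq
  have hy : ∀ j : ℕ, ∀ z : Fin (n+1),
      bta B ((((d⁻¹ * xcyc A * d) ^ j) z : Fin (n+1)) : ℕ) = bta B (z : ℕ) := by
    intro j
    induction j with
    | zero => intro z; simp
    | succ m ih =>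
      intro z
      have : ((d⁻¹ * xcyc A * d) ^ (m+1)) z = ((d⁻¹ * xcyc A * d) ^ m) ((d⁻¹ * xcyc A * d) z) := by
        rw [pow_succ]; rfl
      rw [this, ih, WP_fixes hB hdW]
  have hconj : ∀ j : ℕ, (d⁻¹ * xcyc A * d) ^ j = d⁻¹ * (xcyc A) ^ j * d := by
    intro j
    induction j with
    | zero => simp
    | succ m ih => rw [pow_succ, ih, pow_succ]; group
  have := hy k (d⁻¹ p)
  rw [hconj k] at this
  have harg : (d⁻¹ * (xcyc A) ^ k * d) (d⁻¹ p) = d⁻¹ q := by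
    simp only [Equiv.Perm.mul_apply, Equiv.Perm.coe_inv, Equiv.apply_symm_apply]
    rw [hk]
  rw [harg] at this
  exact this.symm

end NDA
namespace NDA

variable {n : ℕ}

def nbk (A : Finset (RootA n)) : ℕ :=
  (Finset.univ.image fun p : Fin (n+1) => bta A (p : ℕ)).card

lemma card_add_nbk {A : Finset (RootA n)} (hA : A ⊆ PiA n) : A.card + nbk A = n + 1 := by
  classical
  have h1 : A.card = (Finset.univ.filter fun p : Fin (n+1) => lnk A (p : ℕ)).card := by
    symm
    apply Finset.card_bij (fun (p : Fin (n+1)) (hp : p ∈ Finset.univ.filter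
      fun p : Fin (n+1) => lnk A (p : ℕ)) =>
        ((⟨(p : ℕ) - 1, by have := p.isLt; omega⟩ : Fin (n+1)), p))
    · intro p hp
      simp only [Finset.mem_filter, Finset.mem_univ, true_and] at hp
      have h2 := mem_of_lnk hp p.isLt (lnk_pos hp)
      have e : (⟨(p : ℕ), p.isLt⟩ : Fin (n+1)) = p := Fin.ext rfl
      rw [e] at h2
      exact h2
    · intro p hp q hq h
      exact congrArg Prod.snd h
    · intro r hr
      obtain ⟨i, rfl, hlnk⟩ := lnk_of_mem hA hr
      refine ⟨Fin.succ i, ?_, ?_⟩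
      · simp only [Finset.mem_filter, Finset.mem_univ, true_and, Fin.val_succ]
        exact hlnk
      · apply Prod.ext
        · exact Fin.ext (by simp)
        · rfl
  have h2 : nbk A = (Finset.univ.filter fun p : Fin (n+1) => ¬ lnk A (p : ℕ)).card := by
    unfold nbk
    apply Finset.card_bij (fun x hx => (⟨x, by
      simp only [Finset.mem_image, Finset.mem_univ, true_and] at hx
      obtain ⟨p, hp⟩ := hx
      have h3 := bta_le A (p : ℕ)
      have := p.isLt
      omega⟩ : Fin (n+1)))
    · intro x hx
      simp only [Finset.mem_image, Finset.mem_univ, true_and] at hx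
      simp only [Finset.mem_filter, Finset.mem_univ, true_and]
      obtain ⟨p, hp⟩ := hx
      have : bta A x = x := by rw [← hp, bta_idem]
      exact (bta_eq_self_iff A x).1 this
    · intro x hx y hy h
      simpa using congrArg Fin.val h
    · intro p hp
      simp only [Finset.mem_filter, Finset.mem_univ, true_and] at hp
      have : bta A (p : ℕ) = (p : ℕ) := (bta_eq_self_iff A (p : ℕ)).2 hp
      exact ⟨(p : ℕ), by simp only [Finset.mem_image, Finset.mem_univ, true_and]; exact ⟨p, this⟩,
        Fin.ext rfl⟩
  rw [h1, h2]
  rw [Finset.card_filter_add_card_filter_not]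
  simp

def fBfun (B : Finset (RootA n)) (φ : WA n) : ℕ → ℕ := fun s =>
  if h : s < n+1 then bta B ((φ ⟨s, h⟩ : Fin (n+1)) : ℕ) else 0

lemma pack_image {A B : Finset (RootA n)} {φ : WA n}
    (hφ : ∀ p q : Fin (n+1), bta A (p : ℕ) = bta A (q : ℕ) →
      bta B ((φ p : Fin (n+1)) : ℕ) = bta B ((φ q : Fin (n+1)) : ℕ)) :
    (Finset.univ.image fun p : Fin (n+1) => bta B (p : ℕ)) =
      (Finset.univ.image fun p : Fin (n+1) => bta A (p : ℕ)).image (fBfun B φ) := by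
  classical
  have hfB : ∀ p : Fin (n+1), fBfun B φ (bta A (p : ℕ)) = bta B ((φ p : Fin (n+1)) : ℕ) := by
    intro p
    have hlt : bta A (p : ℕ) < n + 1 := lt_of_le_of_lt (bta_le _ _) p.isLt
    unfold fBfun
    rw [dif_pos hlt]
    apply hφ
    show bta A ((⟨bta A (p : ℕ), hlt⟩ : Fin (n+1)) : ℕ) = bta A (p : ℕ)
    exact bta_idem A (p : ℕ)
  ext x
  simp only [Finset.mem_image, Finset.mem_univ, true_and]
  constructor
  · rintro ⟨q, rfl⟩
    exact ⟨bta A ((φ⁻¹ q : Fin (n+1)) : ℕ), ⟨φ⁻¹ q, rfl⟩, by rw [hfB (φ⁻¹ q)]; simp⟩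
  · rintro ⟨l, ⟨p, rfl⟩, rfl⟩
    exact ⟨φ p, (hfB p).symm⟩

lemma pack_card_le {A B : Finset (RootA n)} (hA : A ⊆ PiA n) (hB : B ⊆ PiA n)
    (h : Pack A B) : A.card ≤ B.card := by
  obtain ⟨φ, hφ⟩ := h
  have h1 : nbk B ≤ nbk A := by
    unfold nbk
    rw [pack_image hφ]
    exact Finset.card_image_le
  have h2 := card_add_nbk hA
  have h3 := card_add_nbk hB
  omega

lemma pack_equiv {A B : Finset (RootA n)} (hA : A ⊆ PiA n) (hB : B ⊆ PiA n)
    (h : Pack A B) (hcard : A.card = B.card) : EquivJ n A B := by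
  classical
  obtain ⟨φ, hφ⟩ := h
  set iA := (Finset.univ.image fun p : Fin (n+1) => bta A (p : ℕ)) with hiA
  set fB := fBfun B φ with hfBdef
  have hfB : ∀ p : Fin (n+1), fB (bta A (p : ℕ)) = bta B ((φ p : Fin (n+1)) : ℕ) := by
    intro p
    have hlt : bta A (p : ℕ) < n + 1 := lt_of_le_of_lt (bta_le _ _) p.isLt
    show fBfun B φ _ = _
    unfold fBfun
    rw [dif_pos hlt]
    apply hφ
    show bta A ((⟨bta A (p : ℕ), hlt⟩ : Fin (n+1)) : ℕ) = bta A (p : ℕ)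
    exact bta_idem A (p : ℕ)
  have himg : (Finset.univ.image fun p : Fin (n+1) => bta B (p : ℕ)) = iA.image fB :=
    pack_image hφ
  have hnb : nbk A = nbk B := by
    have h2 := card_add_nbk hA
    have h3 := card_add_nbk hB
    omega
  have hinj : Set.InjOn fB (iA : Set ℕ) := by
    apply Finset.injOn_of_card_image_eq
    rw [← himg]
    exact hnb.symm
  -- fiber sizes
  set szA : ℕ → ℕ := fun l => (Finset.univ.filter fun p : Fin (n+1) => bta A (p : ℕ) = l).card
    with hszA
  set szB : ℕ → ℕ := fun l => (Finset.univ.filter fun p : Fin (n+1) => bta B (p : ℕ) = l).card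
    with hszB
  have step1 : ∀ l ∈ iA, szA l ≤ szB (fB l) := by
    intro l hl
    apply Finset.card_le_card_of_injOn (fun p => φ p)
    · intro p hp
      simp only [Finset.mem_coe, Finset.mem_filter, Finset.mem_univ, true_and] at hp ⊢
      rw [← hfB p, hp]
    · intro p _ q _ hpq
      exact φ.injective hpq
  have step2 : ∑ l ∈ iA, szA l = n + 1 := by
    have h0 : (Finset.univ : Finset (Fin (n+1))).card = ∑ l ∈ iA, szA l := by
      apply Finset.card_eq_sum_card_fiberwise
      intro p _
      simp only [hiA, Finset.mem_coe, Finset.mem_image, Finset.mem_univ, true_and]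
      exact ⟨p, rfl⟩
    rw [Finset.card_fin] at h0
    exact h0.symm
  have step2B : ∑ m ∈ (Finset.univ.image fun p : Fin (n+1) => bta B (p : ℕ)), szB m = n + 1 := by
    have h0 : (Finset.univ : Finset (Fin (n+1))).card
        = ∑ m ∈ (Finset.univ.image fun p : Fin (n+1) => bta B (p : ℕ)), szB m := by
      apply Finset.card_eq_sum_card_fiberwise
      intro p _
      simp only [Finset.mem_coe, Finset.mem_image, Finset.mem_univ, true_and]
      exact ⟨p, rfl⟩
    rw [Finset.card_fin] at h0
    exact h0.symm
  have step3 : ∑ l ∈ iA, szB (fB l) = n + 1 := by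
    have hs := Finset.sum_image (s := iA) (g := fB) (f := szB)
      (fun x hx y hy hxy => hinj (Finset.mem_coe.2 hx) (Finset.mem_coe.2 hy) hxy)
    rw [← hs, ← himg]
    exact step2B
  have step4 : ∀ l ∈ iA, szA l = szB (fB l) :=
    (Finset.sum_eq_sum_iff_of_le step1).1 (by omega)
  -- main pointwise bound
  have main : ∀ p : Fin (n+1),
      fB (bta A (p : ℕ)) + ((p : ℕ) - bta A (p : ℕ)) < n + 1 ∧
      bta B (fB (bta A (p : ℕ)) + ((p : ℕ) - bta A (p : ℕ))) = fB (bta A (p : ℕ)) := by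
    intro p
    set l := bta A (p : ℕ) with hl
    have hlmem : l ∈ iA := by simp only [hiA, Finset.mem_image, Finset.mem_univ, true_and]; exact ⟨p, rfl⟩
    have hllt : l < n + 1 := lt_of_le_of_lt (bta_le _ _) p.isLt
    have hllead : bta A l = l := bta_idem A (p : ℕ)
    have hfBlead : bta B (fB l) = fB l := by
      rw [hfB p]
      exact bta_idem B _
    have hfBlt : fB l < n + 1 := by
      rw [hfB p]
      exact lt_of_le_of_lt (bta_le _ _) (φ p).isLt
    obtain ⟨cA, hcA0, hcAN, hcardA, hiffA⟩ := blk_iff A hllead hllt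
    obtain ⟨cB, hcB0, hcBN, hcardB, hiffB⟩ := blk_iff B hfBlead hfBlt
    have hofs : (p : ℕ) - l < cA := by
      have := (hiffA p).1 rfl
      omega
    have hcc : cA = cB := by
      have e1 : szA l = cA := hcardA
      have e2 : szB (fB l) = cB := hcardB
      rw [← e1, ← e2]
      exact step4 l hlmem
    constructor
    · omega
    · exact (hiffB ⟨fB l + ((p : ℕ) - l), by omega⟩).2 (by simp; omega)
  -- the conjugating permutation
  set vf : Fin (n+1) → Fin (n+1) :=
    fun p => ⟨fB (bta A (p : ℕ)) + ((p : ℕ) - bta A (p : ℕ)), (main p).1⟩ with hvf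
  have hvinj : Function.Injective vf := by
    intro p q hpq
    have hval : fB (bta A (p : ℕ)) + ((p : ℕ) - bta A (p : ℕ))
        = fB (bta A (q : ℕ)) + ((q : ℕ) - bta A (q : ℕ)) := by
      have := congrArg Fin.val hpq; simpa [hvf] using this
    have hfeq : fB (bta A (p : ℕ)) = fB (bta A (q : ℕ)) := by
      have h1 := (main p).2
      have h2 := (main q).2
      rw [← h1, ← h2, hval]
    have hbeq : bta A (p : ℕ) = bta A (q : ℕ) := by
      apply hinj _ _ hfeq
      · simp only [hiA, Finset.coe_image, Set.mem_image]; exact ⟨p, by simp⟩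
      · simp only [hiA, Finset.coe_image, Set.mem_image]; exact ⟨q, by simp⟩
    have h3 := bta_le A (p : ℕ)
    have h4 := bta_le A (q : ℕ)
    apply Fin.ext
    rw [hbeq] at hval h3
    omega
  set v : WA n := Equiv.ofBijective vf (Finite.injective_iff_bijective.1 hvinj) with hv
  have hvapp : ∀ p, v p = vf p := fun p => rfl
  -- image of A under act v is contained in B
  have hsub : A.image (act n v) ⊆ B := by
    intro r hr
    simp only [Finset.mem_image] at hr
    obtain ⟨s, hs, rfl⟩ := hr
    obtain ⟨i, rfl, hlnk⟩ := lnk_of_mem hA hs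
    set l := bta A ((i : ℕ)) with hl
    have hsucc : bta A ((i : ℕ) + 1) = l := (bta_succ_eq_iff A _).2 hlnk
    have hle : l ≤ (i : ℕ) := bta_le _ _
    have hv1 : ((v (Fin.castSucc i) : Fin (n+1)) : ℕ) = fB l + ((i : ℕ) - l) := by
      rw [hvapp]; simp [hvf, hl]
    have hv2 : ((v (Fin.succ i) : Fin (n+1)) : ℕ) = fB l + ((i : ℕ) + 1 - l) := by
      rw [hvapp]; simp [hvf, hsucc]
    have hb1 : bta B ((v (Fin.castSucc i) : Fin (n+1)) : ℕ) = fB l := by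
      have := (main (Fin.castSucc i)).2
      rw [hv1]
      simpa [hl] using this
    have hb2 : bta B ((v (Fin.succ i) : Fin (n+1)) : ℕ) = fB l := by
      have h0 := (main (Fin.succ i)).2
      simp only [Fin.val_succ] at h0
      rw [hsucc] at h0
      rw [hv2]
      exact h0
    have hlnkB : lnk B (((v (Fin.castSucc i) : Fin (n+1)) : ℕ) + 1) := by
      rw [← bta_succ_eq_iff]
      have : ((v (Fin.castSucc i) : Fin (n+1)) : ℕ) + 1 = ((v (Fin.succ i) : Fin (n+1)) : ℕ) := by
        rw [hv1, hv2]; omega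
      rw [this, hb2, hb1]
    have hmem := mem_of_lnk hlnkB (by
        have := (v (Fin.succ i)).isLt
        have : ((v (Fin.castSucc i) : Fin (n+1)) : ℕ) + 1 = ((v (Fin.succ i) : Fin (n+1)) : ℕ) := by
          rw [hv1, hv2]; omega
        omega) (by omega)
    have heq : act n v (Fin.castSucc i, Fin.succ i)
        = ((⟨((v (Fin.castSucc i) : Fin (n+1)) : ℕ) + 1 - 1, by omega⟩ : Fin (n+1)),
           (⟨((v (Fin.castSucc i) : Fin (n+1)) : ℕ) + 1, by
              have := (v (Fin.succ i)).isLt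
              have h9 : ((v (Fin.castSucc i) : Fin (n+1)) : ℕ) + 1 = ((v (Fin.succ i) : Fin (n+1)) : ℕ) := by
                rw [hv1, hv2]; omega
              omega⟩ : Fin (n+1))) := by
      unfold act
      apply Prod.ext
      · exact Fin.ext (by simp)
      · exact Fin.ext (by simp; rw [hv1, hv2]; omega)
    rw [heq]
    exact hmem
  have hcardimg : (A.image (act n v)).card = B.card := by
    rw [Finset.card_image_of_injective _ (act_injective v), hcard]
  have hfinal : A.image (act n v) = B :=
    Finset.eq_of_subset_of_card_le hsub (by omega)
  exact ⟨v, hfinal.symm⟩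

end NDA
namespace NDA

variable {n : ℕ}

lemma chi_equiv {A A' : Finset (RootA n)} (hA : A ⊆ PiA n) (hA' : A' ⊆ PiA n)
    (h : EquivJ n A A') : chi A' = chi A := by
  obtain ⟨v, rfl⟩ := h
  exact chi_conj hA hA'

/-- The index type : classes of subsets of `Π`. -/
abbrev IdxT (n : ℕ) := {q : Quot (EquivJ n) //
  ∃ A : Finset (RootA n), A ⊆ PiA n ∧ Quot.mk (EquivJ n) A = q}

/-- The class character. -/
def chiQ (q : Quot (EquivJ n)) : WA n → ℚ :=
  if h : ∃ A : Finset (RootA n), A ⊆ PiA n ∧ Quot.mk (EquivJ n) A = q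
  then chi h.choose else 0

lemma chiQ_eq_choose (q : Quot (EquivJ n))
    (h : ∃ A : Finset (RootA n), A ⊆ PiA n ∧ Quot.mk (EquivJ n) A = q) :
    chiQ q = chi h.choose := by
  rw [chiQ, dif_pos h]

lemma chiQ_mk {A : Finset (RootA n)} (hA : A ⊆ PiA n) :
    chiQ (Quot.mk (EquivJ n) A) = chi A := by
  have h : ∃ A' : Finset (RootA n), A' ⊆ PiA n ∧
      Quot.mk (EquivJ n) A' = Quot.mk (EquivJ n) A := ⟨A, hA, rfl⟩
  rw [chiQ_eq_choose _ h]
  obtain ⟨h1, h2⟩ := h.choose_spec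
  have hEq : EquivJ n h.choose A := quot_mk_eq_iff.1 h2
  exact chi_equiv h1 hA hEq |>.symm ▸ rfl

lemma chiQ_mk' {A : Finset (RootA n)} (hA : A ⊆ PiA n) :
    chiQ (Quot.mk (EquivJ n) A) = chi A := chiQ_mk hA

lemma chi_mul_fun {A B : Finset (RootA n)} (hA : A ⊆ PiA n) (hB : B ⊆ PiA n) :
    chi A * chi B = ∑ L ∈ B.powerset, (aC n A B L : ℚ) • chi L := by
  funext x
  rw [Pi.mul_apply, chi_mul_sum hA hB x]
  rw [Finset.sum_apply]
  apply Finset.sum_congr rfl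
  intro L _
  rw [Pi.smul_apply, smul_eq_mul]

lemma chi_indep : LinearIndependent ℚ (fun i : IdxT n => chiQ i.1) := by
  classical
  haveI : Finite (Quot (EquivJ n)) :=
    Finite.of_surjective (Quot.mk (EquivJ n)) Quot.mk_surjective
  haveI : Fintype (IdxT n) := Fintype.ofFinite _
  rw [Fintype.linearIndependent_iff]
  intro g hg
  by_contra hex
  push_neg at hex
  obtain ⟨iex, hiex⟩ := hex
  set s := Finset.univ.filter (fun i : IdxT n => g i ≠ 0) with hs
  have hsne : s.Nonempty := ⟨iex, by simp [hs, hiex]⟩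
  obtain ⟨i0, hi0s, hmax⟩ := s.exists_max_image (fun i => (i.2.choose).card) hsne
  set x0 := xcyc (i0.2.choose) with hx0
  have hzero : ∀ i : IdxT n, i ≠ i0 → g i * chiQ i.1 x0 = 0 := by
    intro i hne
    by_cases hgi : g i = 0
    · rw [hgi, zero_mul]
    · have hchi : chiQ i.1 x0 = 0 := by
        by_contra hchi
        rw [chiQ_eq_choose i.1 i.2] at hchi
        have hpack : Pack (i0.2.choose) (i.2.choose) :=
          chi_ne_zero_pack (i.2.choose_spec).1 hchi
        have hle : (i0.2.choose).card ≤ (i.2.choose).card :=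
          pack_card_le (i0.2.choose_spec).1 (i.2.choose_spec).1 hpack
        have his : i ∈ s := by simp [hs, hgi]
        have hge := hmax i his
        have heq : (i0.2.choose).card = (i.2.choose).card := by omega
        have hEq : EquivJ n (i0.2.choose) (i.2.choose) :=
          pack_equiv (i0.2.choose_spec).1 (i.2.choose_spec).1 hpack heq
        have : i0.1 = i.1 := by
          rw [← (i0.2.choose_spec).2, ← (i.2.choose_spec).2]
          exact quot_mk_eq_iff.2 hEq
        exact hne (Subtype.ext this.symm)
      rw [hchi, mul_zero]
  have hsum : ∑ i : IdxT n, g i * chiQ i.1 x0 = 0 := by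
    have := congrFun hg x0
    simpa [Finset.sum_apply, Pi.smul_apply, smul_eq_mul] using this
  rw [Finset.sum_eq_single i0 (fun b _ hb => hzero b hb)
    (fun h => absurd (Finset.mem_univ i0) h)] at hsum
  have hpos : chiQ i0.1 x0 ≠ 0 := by
    rw [chiQ_eq_choose i0.1 i0.2, hx0]
    unfold chi
    have h1 : (1 : WA n) ∈ (XP n (i0.2.choose)).filter
        (fun d => d⁻¹ * xcyc (i0.2.choose) * d ∈ WP n (i0.2.choose)) := by
      simp only [Finset.mem_filter]
      constructor
      · exact one_mem_XP (i0.2.choose_spec).1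
      · simpa using xcyc_mem_WP (i0.2.choose_spec).1
    have hcard : 0 < ((XP n (i0.2.choose)).filter
        (fun d => d⁻¹ * xcyc (i0.2.choose) * d ∈ WP n (i0.2.choose))).card :=
      Finset.card_pos.2 ⟨1, h1⟩
    exact Nat.cast_ne_zero.2 (by omega)
  have : g i0 = 0 := by
    rcases mul_eq_zero.1 hsum with h | h
    · exact h
    · exact absurd h hpos
  simp only [hs, Finset.mem_filter] at hi0s
  exact hi0s.2 this

end NDA
open NDA in
/-- if `J ~ J'` and `K ~ K'` (all subsets of `Π`), then for every `L₀ ⊆ Π`,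
`Σ_{L ⊆ K, L ~ L₀} a_{JKL} = Σ_{L' ⊆ K', L' ~ L₀} a_{J'K'L'}`.  Consequently the
multiplication `[x_J][x_K] = Σ_{L ⊆ K} a_{JKL} [x_L]` on equivalence classes is
well-defined, and the rational span `Σ_W(Aₙ) = Sp{[x_J] : J ⊆ Π}` of the equivalence
classes (realized as the free `ℚ`-module on the classes `Quot.mk (EquivJ n) J`) carries a
`ℚ`-bilinear associative multiplication given by these structure constants, i.e. it is an
algebra over `ℚ`. -/
theorem new_descent_algebra_well_defined (n : ℕ) (hn : 1 ≤ n)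
    (J J' K K' : Finset (RootA n))
    (hJ : J ⊆ PiA n) (hJ' : J' ⊆ PiA n) (hK : K ⊆ PiA n) (hK' : K' ⊆ PiA n)
    (hJJ' : EquivJ n J J') (hKK' : EquivJ n K K') :
    (∀ L₀ ⊆ PiA n,
      ∑ L ∈ K.powerset.filter (fun L => EquivJ n L L₀), aC n J K L =
        ∑ L' ∈ K'.powerset.filter (fun L' => EquivJ n L' L₀), aC n J' K' L') ∧
    ∃ mul : (Quot (EquivJ n) →₀ ℚ) →ₗ[ℚ]
        (Quot (EquivJ n) →₀ ℚ) →ₗ[ℚ] (Quot (EquivJ n) →₀ ℚ),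
      (∀ A B : Finset (RootA n), A ⊆ PiA n → B ⊆ PiA n →
        mul (Finsupp.single (Quot.mk (EquivJ n) A) 1)
            (Finsupp.single (Quot.mk (EquivJ n) B) 1) =
          ∑ L ∈ B.powerset,
            (aC n A B L : ℚ) • Finsupp.single (Quot.mk (EquivJ n) L) 1) ∧
      ∀ x y z : Quot (EquivJ n) →₀ ℚ, mul (mul x y) z = mul x (mul y z) := by
  classical
  haveI : Finite (Quot (EquivJ n)) :=
    Finite.of_surjective (Quot.mk (EquivJ n)) Quot.mk_surjective
  haveI : Fintype (IdxT n) := Fintype.ofFinite _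
  have li : LinearIndependent ℚ (fun i : IdxT n => chiQ (n := n) i.1) := chi_indep
  have chiQ_mem : ∀ q : Quot (EquivJ n),
      chiQ q ∈ Submodule.span ℚ (Set.range fun i : IdxT n => chiQ (n := n) i.1) := by
    intro q
    by_cases h : ∃ A : Finset (RootA n), A ⊆ PiA n ∧ Quot.mk (EquivJ n) A = q
    · exact Submodule.subset_span ⟨⟨q, h⟩, rfl⟩
    · rw [chiQ, dif_neg h]
      exact Submodule.zero_mem _
  set T : (Quot (EquivJ n) →₀ ℚ) →ₗ[ℚ] (WA n → ℚ) :=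
    Finsupp.linearCombination ℚ (chiQ (n := n)) with hT
  have hTsingle : ∀ q : Quot (EquivJ n), T (Finsupp.single q 1) = chiQ q := by
    intro q
    rw [hT, Finsupp.linearCombination_single, one_smul]
  have hTmem : ∀ x : Quot (EquivJ n) →₀ ℚ,
      T x ∈ Submodule.span ℚ (Set.range fun i : IdxT n => chiQ (n := n) i.1) := by
    intro x
    rw [hT, Finsupp.linearCombination_apply, Finsupp.sum]
    exact Submodule.sum_mem _ (fun q _ => Submodule.smul_mem _ _ (chiQ_mem q))
  have hclosed : ∀ u v : WA n → ℚ,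
      u ∈ Submodule.span ℚ (Set.range fun i : IdxT n => chiQ (n := n) i.1) →
      v ∈ Submodule.span ℚ (Set.range fun i : IdxT n => chiQ (n := n) i.1) →
      u * v ∈ Submodule.span ℚ (Set.range fun i : IdxT n => chiQ (n := n) i.1) := by
    have hle : Submodule.span ℚ (Set.range fun i : IdxT n => chiQ (n := n) i.1) *
        Submodule.span ℚ (Set.range fun i : IdxT n => chiQ (n := n) i.1) ≤
        Submodule.span ℚ (Set.range fun i : IdxT n => chiQ (n := n) i.1) := by
      rw [Submodule.span_mul_span, Submodule.span_le]
      rintro z ⟨u, ⟨i, rfl⟩, v, ⟨j, rfl⟩, rfl⟩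
      obtain ⟨Ai, hAi, hAiq⟩ := i.2
      obtain ⟨Aj, hAj, hAjq⟩ := j.2
      have h1 : chiQ (n := n) i.1 = chi Ai := by rw [← hAiq, chiQ_mk hAi]
      have h2 : chiQ (n := n) j.1 = chi Aj := by rw [← hAjq, chiQ_mk hAj]
      simp only [SetLike.mem_coe]
      rw [h1, h2, chi_mul_fun hAi hAj]
      apply Submodule.sum_mem
      intro L hL
      apply Submodule.smul_mem
      have hLsub : L ⊆ PiA n := fun r hr => hAj (Finset.mem_powerset.1 hL hr)
      rw [← chiQ_mk hLsub]
      exact chiQ_mem _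
    intro u v hu hv
    exact hle (Submodule.mul_mem_mul hu hv)
  obtain ⟨C, hC⟩ := Submodule.exists_isCompl
    (Submodule.span ℚ (Set.range fun i : IdxT n => chiQ (n := n) i.1))
  set P := Submodule.linearProjOfIsCompl _ C hC with hP
  set g : (Submodule.span ℚ (Set.range fun i : IdxT n => chiQ (n := n) i.1))
      →ₗ[ℚ] (Quot (EquivJ n) →₀ ℚ) :=
    (Module.Basis.span li).constr ℚ (fun i : IdxT n => Finsupp.single i.1 (1 : ℚ)) with hg
  set mulmap : (Quot (EquivJ n) →₀ ℚ) →ₗ[ℚ] (Quot (EquivJ n) →₀ ℚ) →ₗ[ℚ]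
      (Quot (EquivJ n) →₀ ℚ) :=
    ((LinearMap.mul ℚ (WA n → ℚ)).compl₁₂ T T).compr₂ (g ∘ₗ P) with hmm
  have hmul_apply : ∀ x y : Quot (EquivJ n) →₀ ℚ, mulmap x y = g (P (T x * T y)) := by
    intro x y
    rfl
  have hTg : ∀ v : (Submodule.span ℚ (Set.range fun i : IdxT n => chiQ (n := n) i.1)),
      T (g v) = (v : WA n → ℚ) := by
    intro v
    have hcomp : T ∘ₗ g =
        (Submodule.span ℚ (Set.range fun i : IdxT n => chiQ (n := n) i.1)).subtype := by
      apply (Module.Basis.span li).ext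
      intro i
      rw [LinearMap.comp_apply, hg, Module.Basis.constr_basis, hTsingle, Submodule.subtype_apply,
        Module.Basis.span_apply]
    calc T (g v) = (T ∘ₗ g) v := rfl
      _ = (v : WA n → ℚ) := by rw [hcomp]; rfl
  have hGP : ∀ u : WA n → ℚ,
      u ∈ Submodule.span ℚ (Set.range fun i : IdxT n => chiQ (n := n) i.1) →
      T (g (P u)) = u := by
    intro u hu
    have h1 : P u = ⟨u, hu⟩ := Submodule.linearProjOfIsCompl_apply_left hC ⟨u, hu⟩
    rw [h1, hTg]
  have hgP_chi : ∀ (L : Finset (RootA n)), L ⊆ PiA n →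
      g (P (chi L)) = Finsupp.single (Quot.mk (EquivJ n) L) (1 : ℚ) := by
    intro L hL
    have hmem : chi L ∈ Submodule.span ℚ (Set.range fun i : IdxT n => chiQ (n := n) i.1) := by
      rw [← chiQ_mk hL]; exact chiQ_mem _
    have h1 : P (chi L) = ⟨chi L, hmem⟩ :=
      Submodule.linearProjOfIsCompl_apply_left hC ⟨chi L, hmem⟩
    have h2 : (⟨chi L, hmem⟩ : (Submodule.span ℚ (Set.range fun i : IdxT n => chiQ (n := n) i.1)))
        = (Module.Basis.span li) ⟨Quot.mk (EquivJ n) L, ⟨L, hL, rfl⟩⟩ := by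
      apply Subtype.ext
      rw [Module.Basis.span_apply]
      exact (chiQ_mk hL).symm
    rw [h1, h2, hg, Module.Basis.constr_basis]
  -- the auxiliary fiber function
  set gq : Finset (RootA n) → IdxT n := fun L =>
    if h : L ⊆ PiA n then ⟨Quot.mk (EquivJ n) L, ⟨L, h, rfl⟩⟩
    else ⟨Quot.mk (EquivJ n) ∅, ⟨∅, by simp, rfl⟩⟩ with hgq
  have key : ∀ (Jx Kx : Finset (RootA n)), Jx ⊆ PiA n → Kx ⊆ PiA n →
      chi Jx * chi Kx = ∑ i : IdxT n,
        (∑ L ∈ Kx.powerset.filter (fun L => Quot.mk (EquivJ n) L = i.1),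
          (aC n Jx Kx L : ℚ)) • chiQ (n := n) i.1 := by
    intro Jx Kx hJx hKx
    rw [chi_mul_fun hJx hKx]
    rw [← Finset.sum_fiberwise_of_maps_to (g := gq) (t := Finset.univ)
      (fun L _ => Finset.mem_univ _) (fun L => (aC n Jx Kx L : ℚ) • chi L)]
    apply Finset.sum_congr rfl
    intro i _
    have hfilt : Kx.powerset.filter (fun L => gq L = i)
        = Kx.powerset.filter (fun L => Quot.mk (EquivJ n) L = i.1) := by
      apply Finset.filter_congr
      intro L hL
      have hLsub : L ⊆ PiA n := fun r hr => hKx (Finset.mem_powerset.1 hL hr)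
      rw [hgq]
      simp only [dif_pos hLsub]
      constructor
      · intro h; rw [← h]
      · intro h; exact Subtype.ext h
    rw [hfilt, Finset.sum_smul]
    apply Finset.sum_congr rfl
    intro L hL
    simp only [Finset.mem_filter] at hL
    have hLsub : L ⊆ PiA n := fun r hr => hKx (Finset.mem_powerset.1 hL.1 hr)
    rw [← hL.2, chiQ_mk hLsub]
  have hprod_eq : chi J * chi K = chi J' * chi K' := by
    rw [chi_equiv hJ hJ' hJJ', chi_equiv hK hK' hKK']
  constructor
  · -- Part 1
    intro L₀ hL₀
    have h1 := key J K hJ hK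
    have h2 := key J' K' hJ' hK'
    rw [hprod_eq, h2] at h1
    have hzero : ∑ i : IdxT n,
        ((∑ L ∈ K.powerset.filter (fun L => Quot.mk (EquivJ n) L = i.1), (aC n J K L : ℚ))
          - (∑ L ∈ K'.powerset.filter (fun L => Quot.mk (EquivJ n) L = i.1),
              (aC n J' K' L : ℚ))) • chiQ (n := n) i.1 = 0 := by
      simp only [sub_smul, Finset.sum_sub_distrib]
      rw [← h1]
      simp
    have hcoeff := (Fintype.linearIndependent_iff.1 li) _ hzero
      ⟨Quot.mk (EquivJ n) L₀, ⟨L₀, hL₀, rfl⟩⟩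
    rw [sub_eq_zero] at hcoeff
    have hfilt : ∀ Kx : Finset (RootA n),
        Kx.powerset.filter (fun L => Quot.mk (EquivJ n) L = Quot.mk (EquivJ n) L₀)
          = Kx.powerset.filter (fun L => EquivJ n L L₀) := by
      intro Kx
      apply Finset.filter_congr
      intro L _
      rw [quot_mk_eq_iff]
    simp only at hcoeff
    rw [hfilt K, hfilt K'] at hcoeff
    exact_mod_cast hcoeff
  · -- Part 2
    refine ⟨mulmap, ?_, ?_⟩
    · intro A B hA hB
      rw [hmul_apply, hTsingle, hTsingle, chiQ_mk hA, chiQ_mk hB, chi_mul_fun hA hB]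
      rw [map_sum, map_sum]
      apply Finset.sum_congr rfl
      intro L hL
      have hLsub : L ⊆ PiA n := fun r hr => hB (Finset.mem_powerset.1 hL hr)
      rw [map_smul, map_smul, hgP_chi L hLsub]
    · intro x y z
      rw [hmul_apply, hmul_apply, hmul_apply, hmul_apply]
      rw [hGP _ (hclosed _ _ (hTmem x) (hTmem y)), hGP _ (hclosed _ _ (hTmem y) (hTmem z)),
        mul_assoc]
end
end

section
/- Let K, N ⊆ Π and let J ⊆ Π be any subset with N ⊆ J. Then in the rational group algebra ℚ[W], x_K · x_N = Σ_{P ⊆ N} ( Σ_{M ⊆ J} a_{KJM} · a^J_{MNP} ) · x_P. -/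
open scoped Classical

noncomputable section

namespace SolomonAux

variable {n : ℕ}

lemma perm_apply_inv_self {α : Type*} (f : Equiv.Perm α) (x : α) : f (f⁻¹ x) = x :=
  Equiv.apply_symm_apply f x

lemma perm_inv_apply_self {α : Type*} (f : Equiv.Perm α) (x : α) : f⁻¹ (f x) = x :=
  Equiv.symm_apply_apply f x

/-- `a` and `b` are in the same `A`-block. -/
def Blk (A : Finset (RootA n)) (a b : Fin (n + 1)) : Prop :=
  ∀ k : Fin n, min (a : ℕ) (b : ℕ) ≤ (k : ℕ) → (k : ℕ) < max (a : ℕ) (b : ℕ) →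
    ((Fin.castSucc k, Fin.succ k) : RootA n) ∈ A

lemma blk_refl (A : Finset (RootA n)) (a : Fin (n+1)) : Blk A a a := by
  intro k h1 h2; simp at h1 h2; omega

lemma blk_symm {A : Finset (RootA n)} {a b : Fin (n+1)} (h : Blk A a b) : Blk A b a := by
  intro k h1 h2
  exact h k (by omega) (by omega)

lemma blk_trans {A : Finset (RootA n)} {a b c : Fin (n+1)}
    (h1 : Blk A a b) (h2 : Blk A b c) : Blk A a c := by
  intro k hk1 hk2
  by_cases h : min (a : ℕ) (b : ℕ) ≤ (k : ℕ) ∧ (k : ℕ) < max (a : ℕ) (b : ℕ)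
  · exact h1 k h.1 h.2
  · exact h2 k (by omega) (by omega)

lemma blk_sub {A : Finset (RootA n)} {a b c d : Fin (n+1)} (h : Blk A a b)
    (h1 : min (a : ℕ) (b : ℕ) ≤ min (c : ℕ) (d : ℕ))
    (h2 : max (c : ℕ) (d : ℕ) ≤ max (a : ℕ) (b : ℕ)) : Blk A c d := by
  intro k hk1 hk2; exact h k (by omega) (by omega)

/-- An adjacent pair in the same block is a member. -/
lemma mem_of_blk_adj {A : Finset (RootA n)} {a b : Fin (n+1)} (h : Blk A a b)
    (hab : (a : ℕ) + 1 = (b : ℕ)) : ((a, b) : RootA n) ∈ A := by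
  have ha : (a : ℕ) < n := by omega
  have := h ⟨(a : ℕ), ha⟩ (by show min (a:ℕ) (b:ℕ) ≤ (a:ℕ); omega) (by show (a:ℕ) < max (a:ℕ) (b:ℕ); omega)
  have e1 : (Fin.castSucc (⟨(a : ℕ), ha⟩ : Fin n)) = a := by
    apply Fin.ext; simp
  have e2 : (Fin.succ (⟨(a : ℕ), ha⟩ : Fin n)) = b := by
    apply Fin.ext; simp; omega
  rwa [e1, e2] at this

lemma blk_of_mem {A : Finset (RootA n)} {a b : Fin (n+1)}
    (hab : (a : ℕ) + 1 = (b : ℕ)) (h : ((a, b) : RootA n) ∈ A) : Blk A a b := by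
  intro k h1 h2
  have hmin : min (a : ℕ) (b : ℕ) = (a : ℕ) := by omega
  have hmax : max (a : ℕ) (b : ℕ) = (b : ℕ) := by omega
  rw [hmin] at h1; rw [hmax] at h2
  have hk : (k : ℕ) = (a : ℕ) := by omega
  have e1 : Fin.castSucc k = a := by apply Fin.ext; simpa using hk
  have e2 : Fin.succ k = b := by apply Fin.ext; simp; omega
  rw [e1, e2]; exact h

lemma mem_XP_iff {A : Finset (RootA n)} {w : WA n} :
    w ∈ XP n A ↔ ∀ r ∈ A, w r.1 < w r.2 := by
  simp [XP, IsPos, act]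

/-- extraction of a simple pair -/
lemma pair_of_mem_pi {A : Finset (RootA n)} (hA : A ⊆ PiA n) {r : RootA n} (hr : r ∈ A) :
    ∃ k : Fin n, r = (Fin.castSucc k, Fin.succ k) := by
  have := hA hr
  simp only [PiA, Finset.mem_image] at this
  obtain ⟨k, _, hk⟩ := this
  exact ⟨k, hk.symm⟩

lemma castSucc_succ_nat (k : Fin n) : ((Fin.castSucc k : Fin (n+1)) : ℕ) + 1
    = ((Fin.succ k : Fin (n+1)) : ℕ) := by simp

/-- P1 : an element of `X_A` is strictly increasing on blocks. -/
lemma lt_of_blk {A : Finset (RootA n)} {w : WA n} (hw : w ∈ XP n A) :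
    ∀ m : ℕ, ∀ a b : Fin (n+1), (b : ℕ) - (a : ℕ) = m → Blk A a b → a < b → w a < w b := by
  intro m
  induction m using Nat.strong_induction_on with
  | _ m ih =>
    intro a b hm hblk hab
    have hab' : (a : ℕ) < (b : ℕ) := hab
    by_cases hadj : (a : ℕ) + 1 = (b : ℕ)
    · have hmem := mem_of_blk_adj hblk hadj
      exact mem_XP_iff.mp hw _ hmem
    · -- step through a+1
      have ha1 : (a : ℕ) + 1 < n + 1 := by omega
      set a' : Fin (n+1) := ⟨(a : ℕ) + 1, ha1⟩ with ha'
      have haa' : (a' : ℕ) = (a : ℕ) + 1 := rfl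
      have h1 : w a < w a' := by
        have hblk1 : Blk A a a' := blk_sub hblk (by omega) (by omega)
        exact mem_XP_iff.mp hw _ (mem_of_blk_adj hblk1 (by omega))
      have h2 : w a' < w b := by
        have hblk2 : Blk A a' b := blk_sub hblk (by omega) (by omega)
        exact ih ((b : ℕ) - (a' : ℕ)) (by omega) a' b rfl hblk2 (by
          show (a' : ℕ) < (b : ℕ); omega)
      exact h1.trans h2

lemma blk_lt_iff {A : Finset (RootA n)} {w : WA n} (hw : w ∈ XP n A)
    {a b : Fin (n+1)} (hblk : Blk A a b) : w a < w b ↔ a < b := by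
  constructor
  · intro h
    rcases lt_trichotomy a b with h1 | h1 | h1
    · exact h1
    · subst h1; exact absurd h (lt_irrefl _)
    · have := lt_of_blk hw _ b a rfl (blk_symm hblk) h1
      exact absurd h (not_lt.mpr (le_of_lt this))
  · intro h; exact lt_of_blk hw _ a b rfl hblk h

/-- P3 : separation of distinct blocks. -/
lemma blk_sep {A : Finset (RootA n)} {a a' b b' : Fin (n+1)}
    (h1 : Blk A a a') (h2 : Blk A b b') (hab : a < b) (hnb : ¬ Blk A a b) : a' < b' := by
  simp only [Blk, not_forall] at hnb
  obtain ⟨k, hk1, hk2, hk3⟩ := hnb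
  have hab' : (a : ℕ) < (b : ℕ) := hab
  have hk1' : (a : ℕ) ≤ (k : ℕ) := by omega
  have hk2' : (k : ℕ) < (b : ℕ) := by omega
  have ha' : (a' : ℕ) ≤ (k : ℕ) := by
    by_contra hcon
    exact hk3 (h1 k (by omega) (by omega))
  have hb' : (k : ℕ) < (b' : ℕ) := by
    by_contra hcon
    exact hk3 (h2 k (by omega) (by omega))
  show (a' : ℕ) < (b' : ℕ); omega

end SolomonAux

namespace SolomonAux

variable {n : ℕ}

lemma eq_one_of_strictMono {w : WA n} (hw : StrictMono ⇑w) : w = 1 := by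
  ext x
  have h2 : (w x : ℕ) = (x : ℕ) :=
    Fin.coe_orderIso_apply
      { toEquiv := w, map_rel_iff' := fun {a b} => hw.le_iff_le } x
  simp only [Equiv.Perm.one_apply]
  rw [Fin.ext h2]

lemma eq_one_of_mem_XP_pi {w : WA n} (hw : w ∈ XP n (PiA n)) : w = 1 := by
  apply eq_one_of_strictMono
  intro a b hab
  have hblk : Blk (PiA n) a b := by
    intro k _ _
    simp [PiA]
  exact lt_of_blk hw _ a b rfl hblk hab

lemma blk_pi (a b : Fin (n+1)) : Blk (PiA n) a b := by
  intro k _ _; simp [PiA]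

/-- P2a : elements of `W_J` stabilize the blocks. -/
lemma blk_of_WP {J : Finset (RootA n)} (hJ : J ⊆ PiA n) {w : WA n} (hw : w ∈ WP n J) :
    ∀ x, Blk J (w x) x := by
  induction hw using Subgroup.closure_induction with
  | mem g hg =>
    obtain ⟨r, hr, hrg⟩ := hg
    obtain ⟨k, hk⟩ := pair_of_mem_pi hJ hr
    intro x
    subst hrg hk
    simp only
    rcases eq_or_ne x (Fin.castSucc k) with h | h
    · subst h
      rw [Equiv.swap_apply_left]
      exact blk_symm (blk_of_mem (castSucc_succ_nat k) hr)
    · rcases eq_or_ne x (Fin.succ k) with h2 | h2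
      · subst h2
        rw [Equiv.swap_apply_right]
        exact blk_of_mem (castSucc_succ_nat k) hr
      · rw [Equiv.swap_apply_of_ne_of_ne h h2]
        exact blk_refl J x
  | one => intro x; exact blk_refl J x
  | mul a b _ _ ha hb =>
    intro x
    exact blk_trans (ha (b x)) (hb x)
  | inv a _ ha =>
    intro x
    have := ha (a⁻¹ x)
    rw [perm_apply_inv_self] at this
    exact blk_symm this

/-- inversion set -/
def invs (w : WA n) : Finset (Fin (n+1) × Fin (n+1)) :=
  Finset.univ.filter fun p => p.1 < p.2 ∧ w p.2 < w p.1

lemma strictMono_of_invs_empty {w : WA n} (h : ∀ k : Fin n, w (Fin.castSucc k) < w (Fin.succ k)) :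
    StrictMono ⇑w := by
  have hXP : w ∈ XP n (PiA n) := by
    rw [mem_XP_iff]
    intro r hr
    obtain ⟨k, hk⟩ := pair_of_mem_pi (subset_refl _) hr
    subst hk; exact h k
  intro a b hab
  exact lt_of_blk hXP _ a b rfl (blk_pi a b) hab

/-- P2b : block stabilizers belong to `W_J`. -/
lemma WP_of_blk {J : Finset (RootA n)} (hJ : J ⊆ PiA n) :
    ∀ m : ℕ, ∀ w : WA n, (invs w).card = m → (∀ x, Blk J (w x) x) → w ∈ WP n J := by
  intro m
  induction m using Nat.strong_induction_on with
  | _ m ih =>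
    intro w hm hblk
    by_cases hdesc : ∃ k : Fin n, w (Fin.succ k) < w (Fin.castSucc k)
    · obtain ⟨k, hk⟩ := hdesc
      set x := Fin.castSucc k with hx
      set y := Fin.succ k with hy
      have hxy : (x : ℕ) + 1 = (y : ℕ) := castSucc_succ_nat k
      have hxylt : x < y := by show (x:ℕ) < (y:ℕ); omega
      -- the pair (x, y) lies in J
      have hpair : ((x, y) : RootA n) ∈ J := by
        have hblkxy : Blk J x y := by
          by_contra hcon
          have := blk_sep (blk_symm (hblk x)) (blk_symm (hblk y)) hxylt hcon
          exact absurd this (not_lt.mpr (le_of_lt hk))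
        exact mem_of_blk_adj hblkxy hxy
      set s : WA n := Equiv.swap x y with hs
      have hsx : s x = y := Equiv.swap_apply_left x y
      have hsy : s y = x := Equiv.swap_apply_right x y
      set w' : WA n := w * s with hw'
      have hw'app : ∀ z, w' z = w (s z) := fun z => rfl
      -- w' still stabilizes blocks
      have hblk' : ∀ z, Blk J (w' z) z := by
        intro z
        have h1 : Blk J (w (s z)) (s z) := hblk (s z)
        have h2 : Blk J (s z) z := by
          rcases eq_or_ne z x with h | h
          · subst h; rw [hsx]; exact blk_symm (blk_of_mem hxy hpair)
          · rcases eq_or_ne z y with h2 | h2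
            · subst h2; rw [hsy]; exact blk_of_mem hxy hpair
            · rw [Equiv.swap_apply_of_ne_of_ne h h2]; exact blk_refl J z
        exact blk_trans h1 h2
      -- inversions decrease
      have hswap_lt : ∀ a b : Fin (n+1), a < b → (a, b) ≠ (x, y) → s a < s b := by
        intro a b hab hne
        have hab' : (a:ℕ) < (b:ℕ) := hab
        rcases eq_or_ne a x with h1 | h1
        · have hva : (a:ℕ) = (x:ℕ) := congrArg Fin.val h1
          have hbny : b ≠ y := fun hc => hne (by rw [h1, hc])
          have hbny' : (b:ℕ) ≠ (y:ℕ) := fun hc => hbny (Fin.ext hc)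
          have hbnx : b ≠ x := by
            intro hc
            have : (b:ℕ) = (x:ℕ) := congrArg Fin.val hc
            omega
          rw [h1, hsx, Equiv.swap_apply_of_ne_of_ne hbnx hbny]
          show (y:ℕ) < (b:ℕ); omega
        · have hva : (a:ℕ) ≠ (x:ℕ) := fun hc => h1 (Fin.ext hc)
          rcases eq_or_ne a y with h2 | h2
          · have hvay : (a:ℕ) = (y:ℕ) := congrArg Fin.val h2
            have hbnx : b ≠ x := by
              intro hc
              have : (b:ℕ) = (x:ℕ) := congrArg Fin.val hc
              omega
            have hbny : b ≠ y := by
              intro hc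
              have : (b:ℕ) = (y:ℕ) := congrArg Fin.val hc
              omega
            rw [h2, hsy, Equiv.swap_apply_of_ne_of_ne hbnx hbny]
            show (x:ℕ) < (b:ℕ); omega
          · have hvay : (a:ℕ) ≠ (y:ℕ) := fun hc => h2 (Fin.ext hc)
            rw [Equiv.swap_apply_of_ne_of_ne h1 h2]
            rcases eq_or_ne b x with h3 | h3
            · have hvb : (b:ℕ) = (x:ℕ) := congrArg Fin.val h3
              rw [h3, hsx]
              show (a:ℕ) < (y:ℕ); omega
            · rcases eq_or_ne b y with h4 | h4
              · have hvb : (b:ℕ) = (y:ℕ) := congrArg Fin.val h4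
                rw [h4, hsy]
                show (a:ℕ) < (x:ℕ); omega
              · rw [Equiv.swap_apply_of_ne_of_ne h3 h4]
                exact hab
      have hmaps : ∀ p ∈ invs w', (s p.1, s p.2) ∈ (invs w).erase (x, y) := by
        intro p hp
        simp only [invs, Finset.mem_filter, Finset.mem_univ, true_and] at hp
        obtain ⟨hp1, hp2⟩ := hp
        rw [hw'app, hw'app] at hp2
        have hpne : (p.1, p.2) ≠ (x, y) := by
          intro hcon
          have e1 : p.1 = x := congrArg Prod.fst hcon
          have e2 : p.2 = y := congrArg Prod.snd hcon
          rw [e1, e2, hsx, hsy] at hp2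
          exact absurd hp2 (not_lt.mpr (le_of_lt hk))
        have hslt : s p.1 < s p.2 := hswap_lt p.1 p.2 hp1 hpne
        rw [Finset.mem_erase]
        constructor
        · intro hcon
          have e1 : s p.1 = x := congrArg Prod.fst hcon
          have e2 : s p.2 = y := congrArg Prod.snd hcon
          have f1 : p.1 = y := by
            have := congrArg s e1
            rwa [Equiv.swap_apply_self, hsx] at this
          have f2 : p.2 = x := by
            have := congrArg s e2
            rwa [Equiv.swap_apply_self, hsy] at this
          rw [f1, f2] at hp1
          have : (y:ℕ) < (x:ℕ) := hp1
          omega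
        · simp only [invs, Finset.mem_filter, Finset.mem_univ, true_and]
          exact ⟨hslt, hp2⟩
      have hxy_mem : ((x, y) : Fin (n+1) × Fin (n+1)) ∈ invs w := by
        simp only [invs, Finset.mem_filter, Finset.mem_univ, true_and]
        exact ⟨hxylt, hk⟩
      have hcard : (invs w').card < m := by
        have hinj : Set.InjOn (fun p : Fin (n+1) × Fin (n+1) => (s p.1, s p.2)) (invs w') := by
          intro p _ q _ hpq
          have e1 : s p.1 = s q.1 := congrArg Prod.fst hpq
          have e2 : s p.2 = s q.2 := congrArg Prod.snd hpq
          exact Prod.ext (s.injective e1) (s.injective e2)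
        have h1 : (invs w').card ≤ ((invs w).erase (x, y)).card :=
          Finset.card_le_card_of_injOn _ hmaps hinj
        have h2 : ((invs w).erase (x, y)).card < (invs w).card :=
          Finset.card_erase_lt_of_mem hxy_mem
        omega
      have hw'mem : w' ∈ WP n J := ih _ hcard w' rfl hblk'
      have hsmem : s ∈ WP n J := by
        apply Subgroup.subset_closure
        exact ⟨(x, y), hpair, rfl⟩
      have : w = w' * s := by
        rw [hw', mul_assoc]
        have : s * s = 1 := by
          rw [hs]; exact Equiv.swap_mul_self x y
        rw [this, mul_one]
      rw [this]
      exact Subgroup.mul_mem _ hw'mem hsmem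
    · -- no descents: w is strictly monotone, hence 1
      push_neg at hdesc
      have : StrictMono ⇑w := strictMono_of_invs_empty (fun k => by
        have h1 := hdesc k
        have hne : w (Fin.castSucc k) ≠ w (Fin.succ k) := by
          intro hc
          have := w.injective hc
          have : (Fin.castSucc k : ℕ) = (Fin.succ k : ℕ) := congrArg Fin.val this
          simp at this
        rcases lt_or_eq_of_le h1 with h | h
        · exact h
        · exact absurd h hne)
      rw [eq_one_of_strictMono this]
      exact Subgroup.one_mem _

end SolomonAux

namespace SolomonAux

variable {n : ℕ}

def blkSet (J : Finset (RootA n)) (x : Fin (n+1)) : Finset (Fin (n+1)) :=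
  Finset.univ.filter fun y => Blk J x y

lemma mem_blkSet_iff {J : Finset (RootA n)} {x y : Fin (n+1)} :
    y ∈ blkSet J x ↔ Blk J x y := by simp [blkSet]

lemma self_mem_blkSet {J : Finset (RootA n)} (x : Fin (n+1)) : x ∈ blkSet J x :=
  mem_blkSet_iff.mpr (blk_refl J x)

lemma blkSet_eq_of_blk {J : Finset (RootA n)} {x y : Fin (n+1)} (h : Blk J x y) :
    blkSet J x = blkSet J y := by
  ext z
  simp only [mem_blkSet_iff]
  exact ⟨fun hz => blk_trans (blk_symm h) hz, fun hz => blk_trans h hz⟩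

lemma blk_of_mem_blkSet_pair {J : Finset (RootA n)} {x a b : Fin (n+1)}
    (ha : a ∈ blkSet J x) (hb : b ∈ blkSet J x) : Blk J a b :=
  blk_trans (blk_symm (mem_blkSet_iff.mp ha)) (mem_blkSet_iff.mp hb)

/-- the sorting map on a block -/
def sortFun (B : Finset (Fin (n+1))) (w : WA n) (x : Fin (n+1)) : Fin (n+1) :=
  if hx : x ∈ B then
    ((B.image ⇑w).orderIsoOfFin
      (by rw [Finset.card_image_of_injective _ w.injective])
      ((B.orderIsoOfFin rfl).symm ⟨x, hx⟩) : Fin (n+1))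
  else w x

lemma sortFun_mem {B : Finset (Fin (n+1))} {w : WA n} {x : Fin (n+1)} (hx : x ∈ B) :
    sortFun B w x ∈ B.image ⇑w := by
  rw [sortFun, dif_pos hx]
  exact Finset.coe_mem _

lemma sortFun_strictMono {B : Finset (Fin (n+1))} {w : WA n} {x y : Fin (n+1)}
    (hx : x ∈ B) (hy : y ∈ B) (hxy : x < y) : sortFun B w x < sortFun B w y := by
  rw [sortFun, dif_pos hx, sortFun, dif_pos hy]
  apply Subtype.coe_lt_coe.mpr
  rw [OrderIso.lt_iff_lt, OrderIso.lt_iff_lt]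
  exact Subtype.mk_lt_mk.mpr hxy

lemma sortFun_image {B : Finset (Fin (n+1))} (w : WA n) :
    B.image (sortFun B w) = B.image ⇑w := by
  apply Finset.eq_of_subset_of_card_le
  · intro z hz
    rw [Finset.mem_image] at hz
    obtain ⟨x, hx, hxz⟩ := hz
    rw [← hxz]; exact sortFun_mem hx
  · rw [Finset.card_image_of_injective _ w.injective]
    rw [Finset.card_image_of_injOn]
    intro a ha b hb hab
    rcases lt_trichotomy a b with h | h | h
    · exact absurd hab (ne_of_lt (sortFun_strictMono ha hb h))
    · exact h
    · exact absurd hab.symm (ne_of_lt (sortFun_strictMono hb ha h))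

def dFun (J : Finset (RootA n)) (w : WA n) : Fin (n+1) → Fin (n+1) :=
  fun x => sortFun (blkSet J x) w x

lemma dFun_inj (J : Finset (RootA n)) (w : WA n) : Function.Injective (dFun J w) := by
  intro x y hxy
  by_cases h : Blk J x y
  · have hBeq : blkSet J x = blkSet J y := blkSet_eq_of_blk h
    rcases lt_trichotomy x y with h1 | h1 | h1
    · exfalso
      have := sortFun_strictMono (w := w) (self_mem_blkSet (J := J) x)
        (hBeq ▸ self_mem_blkSet (J := J) y) h1
      rw [show sortFun (blkSet J x) w y = dFun J w y from by rw [hBeq]; rfl] at this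
      exact absurd hxy (ne_of_lt this)
    · exact h1
    · exfalso
      have := sortFun_strictMono (w := w) (hBeq ▸ self_mem_blkSet (J := J) y)
        (self_mem_blkSet (J := J) x) h1
      rw [show sortFun (blkSet J x) w y = dFun J w y from by rw [hBeq]; rfl] at this
      exact absurd hxy.symm (ne_of_lt this)
  · exfalso
    have hx := sortFun_mem (B := blkSet J x) (w := w) (self_mem_blkSet x)
    have hy := sortFun_mem (B := blkSet J y) (w := w) (self_mem_blkSet y)
    rw [show sortFun (blkSet J x) w x = dFun J w x from rfl] at hx
    rw [show sortFun (blkSet J y) w y = dFun J w y from rfl] at hy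
    rw [hxy] at hx
    rw [Finset.mem_image] at hx hy
    obtain ⟨a, ha, hav⟩ := hx
    obtain ⟨b, hb, hbv⟩ := hy
    have : a = b := w.injective (by rw [hav, hbv])
    subst this
    exact h (blk_trans (mem_blkSet_iff.mp ha) (blk_symm (mem_blkSet_iff.mp hb)))

def dPart (J : Finset (RootA n)) (w : WA n) : WA n :=
  Equiv.ofBijective (dFun J w) ((Finite.injective_iff_bijective).mp (dFun_inj J w))

def ePart (J : Finset (RootA n)) (w : WA n) : WA n := (dPart J w)⁻¹ * w

lemma dPart_apply (J : Finset (RootA n)) (w : WA n) (x : Fin (n+1)) :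
    dPart J w x = sortFun (blkSet J x) w x := rfl

lemma dPart_mul_ePart (J : Finset (RootA n)) (w : WA n) : dPart J w * ePart J w = w := by
  rw [ePart, mul_inv_cancel_left]

lemma dPart_mem_XP {J : Finset (RootA n)} (hJ : J ⊆ PiA n) (w : WA n) :
    dPart J w ∈ XP n J := by
  rw [mem_XP_iff]
  intro r hr
  obtain ⟨k, hk⟩ := pair_of_mem_pi hJ hr
  subst hk
  have hadj : ((Fin.castSucc k : Fin (n+1)) : ℕ) + 1 = ((Fin.succ k : Fin (n+1)) : ℕ) :=
    castSucc_succ_nat k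
  have hblk : Blk J (Fin.castSucc k) (Fin.succ k) := blk_of_mem hadj hr
  have hBeq : blkSet J (Fin.castSucc k) = blkSet J (Fin.succ k) := blkSet_eq_of_blk hblk
  rw [dPart_apply, dPart_apply, ← hBeq]
  exact sortFun_strictMono (self_mem_blkSet _)
    (hBeq ▸ self_mem_blkSet (J := J) (Fin.succ k))
    (Fin.castSucc_lt_succ (i := k))

end SolomonAux

namespace SolomonAux

variable {n : ℕ}

lemma ePart_blk (J : Finset (RootA n)) (w : WA n) : ∀ z, Blk J (ePart J w z) z := by
  intro z
  have h1 : w z ∈ (blkSet J z).image ⇑w := Finset.mem_image_of_mem _ (self_mem_blkSet z)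
  rw [← sortFun_image (B := blkSet J z) w, Finset.mem_image] at h1
  obtain ⟨y, hy, hyz⟩ := h1
  have hBeq : blkSet J y = blkSet J z := blkSet_eq_of_blk (blk_symm (mem_blkSet_iff.mp hy))
  have hdy : dPart J w y = w z := by
    rw [dPart_apply, hBeq]; exact hyz
  have : ePart J w z = y := by
    rw [ePart]
    show (dPart J w)⁻¹ (w z) = y
    rw [← hdy, perm_inv_apply_self]
  rw [this]
  exact blk_symm (mem_blkSet_iff.mp hy)

lemma ePart_mem_WP {J : Finset (RootA n)} (hJ : J ⊆ PiA n) (w : WA n) :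
    ePart J w ∈ WP n J :=
  WP_of_blk hJ _ _ rfl (ePart_blk J w)

lemma strictMonoOn_image_unique {B : Finset (Fin (n+1))} {f g : Fin (n+1) → Fin (n+1)}
    (hf : ∀ a ∈ B, ∀ b ∈ B, a < b → f a < f b)
    (hg : ∀ a ∈ B, ∀ b ∈ B, a < b → g a < g b)
    (him : B.image f = B.image g) : ∀ x ∈ B, f x = g x := by
  have hinjf : Set.InjOn f B := by
    intro a ha b hb hab
    rcases lt_trichotomy a b with h | h | h
    · exact absurd hab (ne_of_lt (hf a ha b hb h))
    · exact h
    · exact absurd hab.symm (ne_of_lt (hf b hb a ha h))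
  have hcardf : (B.image f).card = B.card := Finset.card_image_of_injOn hinjf
  set F : Fin B.card → Fin (n+1) := fun i => f (B.orderEmbOfFin rfl i) with hF
  set G : Fin B.card → Fin (n+1) := fun i => g (B.orderEmbOfFin rfl i) with hG
  have hFmono : StrictMono F := fun i j h =>
    hf _ (Finset.orderEmbOfFin_mem B rfl i) _ (Finset.orderEmbOfFin_mem B rfl j)
      ((B.orderEmbOfFin rfl).strictMono h)
  have hGmono : StrictMono G := fun i j h =>
    hg _ (Finset.orderEmbOfFin_mem B rfl i) _ (Finset.orderEmbOfFin_mem B rfl j)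
      ((B.orderEmbOfFin rfl).strictMono h)
  have hFmem : ∀ i, F i ∈ B.image f := fun i =>
    Finset.mem_image_of_mem f (Finset.orderEmbOfFin_mem B rfl i)
  have hGmem : ∀ i, G i ∈ B.image f := fun i => by
    rw [him]; exact Finset.mem_image_of_mem g (Finset.orderEmbOfFin_mem B rfl i)
  have hFeq := Finset.orderEmbOfFin_unique hcardf hFmem hFmono
  have hGeq := Finset.orderEmbOfFin_unique hcardf hGmem hGmono
  have hFG : F = G := by rw [hFeq, hGeq]
  intro x hx
  have : (x : Fin (n+1)) ∈ Set.range (B.orderEmbOfFin rfl) := by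
    rw [Finset.range_orderEmbOfFin]
    exact hx
  obtain ⟨i, hi⟩ := this
  have h1 : f x = F i := by rw [hF]; simp [hi]
  have h2 : g x = G i := by rw [hG]; simp [hi]
  rw [h1, h2, hFG]

lemma factor_image {J : Finset (RootA n)} (hJ : J ⊆ PiA n) {w d e : WA n}
    (he : e ∈ WP n J) (hw : w = d * e) (x : Fin (n+1)) :
    (blkSet J x).image ⇑d = (blkSet J x).image ⇑w := by
  apply Finset.eq_of_subset_of_card_le
  · intro z hz
    rw [Finset.mem_image] at hz
    obtain ⟨a, ha, hav⟩ := hz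
    have h1 : d a = w (e⁻¹ a) := by
      rw [hw]
      show d a = (d * e) (e⁻¹ a)
      rw [Equiv.Perm.mul_apply, perm_apply_inv_self]
    have h2 : e⁻¹ a ∈ blkSet J x := by
      rw [mem_blkSet_iff]
      have hb1 : Blk J (e⁻¹ a) a := blk_of_WP hJ (Subgroup.inv_mem _ he) a
      exact blk_trans (mem_blkSet_iff.mp ha) (blk_symm hb1)
    rw [← hav, h1]
    exact Finset.mem_image_of_mem _ h2
  · rw [Finset.card_image_of_injective _ w.injective,
      Finset.card_image_of_injective _ d.injective]

lemma factor_unique {J : Finset (RootA n)} (hJ : J ⊆ PiA n) {w d e : WA n}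
    (hd : d ∈ XP n J) (he : e ∈ WP n J) (hw : w = d * e) :
    d = dPart J w ∧ e = ePart J w := by
  have hmain : d = dPart J w := by
    ext x
    have h1 := factor_image hJ he hw x
    have h2 := factor_image hJ (ePart_mem_WP hJ w) (dPart_mul_ePart J w).symm x
    have hmono : ∀ (u : WA n), u ∈ XP n J → ∀ a ∈ blkSet J x, ∀ b ∈ blkSet J x,
        a < b → u a < u b := by
      intro u hu a ha b hb hab
      exact lt_of_blk hu _ a b rfl (blk_of_mem_blkSet_pair ha hb) hab
    exact congrArg Fin.val (strictMonoOn_image_unique (hmono d hd)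
      (hmono _ (dPart_mem_XP hJ w)) (h1.trans h2.symm) x (self_mem_blkSet x))
  refine ⟨hmain, ?_⟩
  have : e = d⁻¹ * w := by rw [hw, inv_mul_cancel_left]
  rw [this, hmain, ePart]

end SolomonAux

namespace SolomonAux

variable {n : ℕ}

lemma WP_mono {M J : Finset (RootA n)} (h : M ⊆ J) : WP n M ≤ WP n J :=
  Subgroup.closure_mono (Set.image_mono (by exact_mod_cast h))

lemma adjacent_of_blk {M : Finset (RootA n)} {σ : WA n} (hσ : σ⁻¹ ∈ XP n M)
    {a b : Fin (n+1)} (hB : Blk M a b) (hab : a < b)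
    (hadj : ((σ⁻¹ a : Fin (n+1)) : ℕ) + 1 = ((σ⁻¹ b : Fin (n+1)) : ℕ)) :
    (a : ℕ) + 1 = (b : ℕ) := by
  by_contra hcon
  have hab' : (a : ℕ) < (b : ℕ) := hab
  have h1 : (a : ℕ) + 1 < (b : ℕ) := by omega
  have hy : (a : ℕ) + 1 < n + 1 := by omega
  set y : Fin (n+1) := ⟨(a : ℕ) + 1, hy⟩ with hydef
  have hyv : (y : ℕ) = (a : ℕ) + 1 := rfl
  have hBay : Blk M a y := blk_sub hB (by omega) (by omega)
  have hByb : Blk M y b := blk_sub hB (by omega) (by omega)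
  have l1 : σ⁻¹ a < σ⁻¹ y := lt_of_blk hσ _ a y rfl hBay (by show (a:ℕ) < (y:ℕ); omega)
  have l2 : σ⁻¹ y < σ⁻¹ b := lt_of_blk hσ _ y b rfl hByb (by show (y:ℕ) < (b:ℕ); omega)
  have l1' : ((σ⁻¹ a : Fin (n+1)) : ℕ) < ((σ⁻¹ y : Fin (n+1)) : ℕ) := l1
  have l2' : ((σ⁻¹ y : Fin (n+1)) : ℕ) < ((σ⁻¹ b : Fin (n+1)) : ℕ) := l2
  omega

lemma mem_P_iff {M N : Finset (RootA n)} {σ : WA n} {k : Fin n} :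
    ((Fin.castSucc k, Fin.succ k) : RootA n) ∈ (M.image (act n σ⁻¹)) ∩ N ↔
      ((Fin.castSucc k, Fin.succ k) : RootA n) ∈ N ∧
        ((σ (Fin.castSucc k), σ (Fin.succ k)) : RootA n) ∈ M := by
  rw [Finset.mem_inter]
  constructor
  · rintro ⟨h1, h2⟩
    refine ⟨h2, ?_⟩
    rw [Finset.mem_image] at h1
    obtain ⟨r, hr, hreq⟩ := h1
    have e1 : σ⁻¹ r.1 = Fin.castSucc k := congrArg Prod.fst hreq
    have e2 : σ⁻¹ r.2 = Fin.succ k := congrArg Prod.snd hreq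
    have f1 : r.1 = σ (Fin.castSucc k) := by rw [← e1, perm_apply_inv_self]
    have f2 : r.2 = σ (Fin.succ k) := by rw [← e2, perm_apply_inv_self]
    have : r = (σ (Fin.castSucc k), σ (Fin.succ k)) := Prod.ext f1 f2
    rwa [← this]
  · rintro ⟨h1, h2⟩
    refine ⟨?_, h1⟩
    rw [Finset.mem_image]
    refine ⟨_, h2, ?_⟩
    show (σ⁻¹ (σ (Fin.castSucc k)), σ⁻¹ (σ (Fin.succ k))) = _
    rw [perm_inv_apply_self, perm_inv_apply_self]

/-- The key lemma : with `u * c` the canonical `M`-factorization of `g * σ⁻¹` and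
`v := c * σ`, we have `v ∈ X_N ↔ g ∈ X_{σ⁻¹(M) ∩ N}`. -/
lemma CG {M N : Finset (RootA n)} (hM : M ⊆ PiA n) (hN : N ⊆ PiA n)
    (σ g : WA n) (h1 : σ⁻¹ ∈ XP n M) (h2 : σ ∈ XP n N) :
    (ePart M (g * σ⁻¹) * σ ∈ XP n N) ↔ g ∈ XP n ((M.image (act n σ⁻¹)) ∩ N) := by
  set u : WA n := dPart M (g * σ⁻¹) with hu_def
  set c : WA n := ePart M (g * σ⁻¹) with hc_def
  set v : WA n := c * σ with hv_def
  have hu : u ∈ XP n M := dPart_mem_XP hM _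
  have hcblk : ∀ z, Blk M (c z) z := ePart_blk M _
  have huc : u * c = g * σ⁻¹ := dPart_mul_ePart M _
  have key : ∀ z, u (c z) = g (σ⁻¹ z) := by
    intro z
    have := congrFun (congrArg (fun (f : WA n) => (f : Fin (n+1) → Fin (n+1))) huc) z
    simpa using this
  -- pointwise analysis
  have main : ∀ k : Fin n, ((Fin.castSucc k, Fin.succ k) : RootA n) ∈ N →
      (Blk M (σ (Fin.castSucc k)) (σ (Fin.succ k)) →
        (v (Fin.castSucc k) < v (Fin.succ k) ↔ g (Fin.castSucc k) < g (Fin.succ k))) ∧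
      (¬ Blk M (σ (Fin.castSucc k)) (σ (Fin.succ k)) →
        v (Fin.castSucc k) < v (Fin.succ k)) := by
    intro k hkN
    set t := (Fin.castSucc k : Fin (n+1)) with ht
    set t' := (Fin.succ k : Fin (n+1)) with ht'
    have hσlt : σ t < σ t' := mem_XP_iff.mp h2 _ hkN
    have hvt : v t = c (σ t) := rfl
    have hvt' : v t' = c (σ t') := rfl
    constructor
    · intro hB
      have hBv : Blk M (v t) (v t') := by
        rw [hvt, hvt']
        exact blk_trans (blk_trans (hcblk (σ t)) hB) (blk_symm (hcblk (σ t')))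
      have e1 : u (v t) = g t := by
        rw [hvt, key, perm_inv_apply_self]
      have e2 : u (v t') = g t' := by
        rw [hvt', key, perm_inv_apply_self]
      have := blk_lt_iff hu hBv
      rw [e1, e2] at this
      exact this.symm
    · intro hB
      have h1' : Blk M (σ t) (v t) := by rw [hvt]; exact blk_symm (hcblk (σ t))
      have h2' : Blk M (σ t') (v t') := by rw [hvt']; exact blk_symm (hcblk (σ t'))
      exact blk_sep h1' h2' hσlt hB
  constructor
  · intro hv
    rw [mem_XP_iff]
    intro r hr
    have hrN : r ∈ N := Finset.mem_inter.mp hr |>.2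
    obtain ⟨k, hk⟩ := pair_of_mem_pi hN hrN
    subst hk
    have hMmem := (mem_P_iff.mp hr).2
    obtain ⟨k', hk'⟩ := pair_of_mem_pi hM hMmem
    have hadj : ((σ (Fin.castSucc k) : Fin (n+1)) : ℕ) + 1 = (σ (Fin.succ k) : ℕ) := by
      have e1 : σ (Fin.castSucc k) = Fin.castSucc k' := congrArg Prod.fst hk'
      have e2 : σ (Fin.succ k) = Fin.succ k' := congrArg Prod.snd hk'
      rw [e1, e2]; exact castSucc_succ_nat k'
    have hB : Blk M (σ (Fin.castSucc k)) (σ (Fin.succ k)) := blk_of_mem hadj hMmem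
    have := (main k hrN).1 hB
    exact this.mp (mem_XP_iff.mp hv _ hrN)
  · intro hg
    rw [mem_XP_iff]
    intro r hr
    obtain ⟨k, hk⟩ := pair_of_mem_pi hN hr
    subst hk
    by_cases hB : Blk M (σ (Fin.castSucc k)) (σ (Fin.succ k))
    · have hσlt : σ (Fin.castSucc k) < σ (Fin.succ k) := mem_XP_iff.mp h2 _ hr
      have hadj : ((σ (Fin.castSucc k) : Fin (n+1)) : ℕ) + 1 = (σ (Fin.succ k) : ℕ) := by
        apply adjacent_of_blk h1 hB hσlt
        rw [perm_inv_apply_self, perm_inv_apply_self]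
        exact castSucc_succ_nat k
      have hMmem : ((σ (Fin.castSucc k), σ (Fin.succ k)) : RootA n) ∈ M :=
        mem_of_blk_adj hB hadj
      have hP : ((Fin.castSucc k, Fin.succ k) : RootA n) ∈ (M.image (act n σ⁻¹)) ∩ N :=
        mem_P_iff.mpr ⟨hr, hMmem⟩
      exact ((main k hr).1 hB).mpr (mem_XP_iff.mp hg _ hP)
    · exact (main k hr).2 hB

end SolomonAux

namespace SolomonAux

variable {n : ℕ}

lemma mem_XPrel_iff {J K : Finset (RootA n)} {w : WA n} :
    w ∈ XPrel n J K ↔ w ∈ XP n K ∧ w ∈ WP n J := Finset.mem_filter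

/-- T1 : `x_N = x_J * x_N^J` for `N ⊆ J`. -/
lemma xA_factor {J N : Finset (RootA n)} (hJ : J ⊆ PiA n) (hN : N ⊆ J) :
    xA n N = xA n J * xArel n J N := by
  rw [xA, xA, xArel, Finset.sum_mul_sum, ← Finset.sum_product']
  apply Finset.sum_nbij' (fun w => ((dPart J w, ePart J w) : WA n × WA n))
    (fun p => p.1 * p.2)
  · -- maps into product
    intro w hw
    rw [Finset.mem_product]
    refine ⟨dPart_mem_XP hJ w, ?_⟩
    rw [mem_XPrel_iff]
    refine ⟨?_, ePart_mem_WP hJ w⟩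
    rw [mem_XP_iff]
    intro r hr
    obtain ⟨k, hk⟩ := pair_of_mem_pi (fun z hz => hJ (hN hz)) hr
    subst hk
    set t := (Fin.castSucc k : Fin (n+1))
    set t' := (Fin.succ k : Fin (n+1))
    have hrJ : ((t, t') : RootA n) ∈ J := hN hr
    have hBtt' : Blk J t t' := blk_of_mem (castSucc_succ_nat k) hrJ
    have hBe : Blk J (ePart J w t) (ePart J w t') :=
      blk_trans (blk_trans (ePart_blk J w t) hBtt') (blk_symm (ePart_blk J w t'))
    have hwt : w t < w t' := mem_XP_iff.mp hw _ hr
    have e1 : dPart J w (ePart J w t) = w t := by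
      have := congrFun (congrArg (fun (f : WA n) => (f : Fin (n+1) → Fin (n+1)))
        (dPart_mul_ePart J w)) t
      simpa using this
    have e2 : dPart J w (ePart J w t') = w t' := by
      have := congrFun (congrArg (fun (f : WA n) => (f : Fin (n+1) → Fin (n+1)))
        (dPart_mul_ePart J w)) t'
      simpa using this
    have := blk_lt_iff (dPart_mem_XP hJ w) hBe
    rw [e1, e2] at this
    exact this.mp hwt
  · -- product maps to X_N
    intro p hp
    rw [Finset.mem_product] at hp
    obtain ⟨hp1, hp2⟩ := hp
    rw [mem_XPrel_iff] at hp2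
    obtain ⟨hp2XP, hp2WP⟩ := hp2
    rw [mem_XP_iff]
    intro r hr
    obtain ⟨k, hk⟩ := pair_of_mem_pi (fun z hz => hJ (hN hz)) hr
    subst hk
    set t := (Fin.castSucc k : Fin (n+1))
    set t' := (Fin.succ k : Fin (n+1))
    have hrJ : ((t, t') : RootA n) ∈ J := hN hr
    have hBtt' : Blk J t t' := blk_of_mem (castSucc_succ_nat k) hrJ
    have hBf : Blk J (p.2 t) (p.2 t') :=
      blk_trans (blk_trans (blk_of_WP hJ hp2WP t) hBtt')
        (blk_symm (blk_of_WP hJ hp2WP t'))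
    have hf : p.2 t < p.2 t' := mem_XP_iff.mp hp2XP _ hr
    show p.1 (p.2 t) < p.1 (p.2 t')
    exact (blk_lt_iff hp1 hBf).mpr hf
  · intro w _; exact dPart_mul_ePart J w
  · intro p hp
    rw [Finset.mem_product] at hp
    obtain ⟨hp1, hp2⟩ := hp
    rw [mem_XPrel_iff] at hp2
    have := factor_unique hJ hp1 hp2.2 (rfl : p.1 * p.2 = p.1 * p.2)
    exact Prod.ext this.1.symm this.2.symm
  · intro w _
    rw [← map_mul, dPart_mul_ePart]

end SolomonAux

namespace SolomonAux

variable {n : ℕ}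

lemma mem_XD_iff {M N : Finset (RootA n)} {w : WA n} :
    w ∈ XD n M N ↔ w⁻¹ ∈ XP n M ∧ w ∈ XP n N := by simp [XD]

lemma perm_apply_eq_of_mul_eq {a b c : WA n} (h : a * b = c) (z : Fin (n+1)) :
    a (b z) = c z := by
  rw [← h]; rfl

/-- Relative Solomon's Mackey formula inside `W_J`. -/
lemma relSolomon {J M N : Finset (RootA n)} (hJ : J ⊆ PiA n) (hM : M ⊆ J) (hN : N ⊆ J) :
    xArel n J M * xArel n J N =
      ∑ P ∈ N.powerset, (aCrel n J M N P : ℚ) • xArel n J P := by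
  have hMpi : M ⊆ PiA n := fun z hz => hJ (hM hz)
  have hNpi : N ⊆ PiA n := fun z hz => hJ (hN hz)
  set S : Finset (WA n) := (XD n M N).filter (fun w => w ∈ WP n J) with hS
  set Pfun : WA n → Finset (RootA n) := fun σ => M.image (act n σ⁻¹) ∩ N with hPfun
  -- rewrite the RHS as a sigma sum
  have hRHS : ∑ P ∈ N.powerset, (aCrel n J M N P : ℚ) • xArel n J P
      = ∑ q ∈ S.sigma (fun σ => XPrel n J (Pfun σ)), MonoidAlgebra.of ℚ (WA n) q.2 := by
    rw [Finset.sum_sigma]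
    have step1 : ∀ P ∈ N.powerset, (aCrel n J M N P : ℚ) • xArel n J P
        = ∑ σ ∈ S.filter (fun σ => Pfun σ = P), ∑ h ∈ XPrel n J (Pfun σ),
            MonoidAlgebra.of ℚ (WA n) h := by
      intro P _
      have hcongr : ∀ σ ∈ S.filter (fun σ => Pfun σ = P),
          (∑ h ∈ XPrel n J (Pfun σ), MonoidAlgebra.of ℚ (WA n) h) = xArel n J P := by
        intro σ hσ
        have := (Finset.mem_filter.mp hσ).2
        rw [this]; rfl
      rw [Finset.sum_congr rfl hcongr, Finset.sum_const]
      rw [Nat.cast_smul_eq_nsmul]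
      have hcard : aCrel n J M N P = (S.filter (fun σ => Pfun σ = P)).card := rfl
      rw [hcard]
    rw [Finset.sum_congr rfl step1]
    apply Finset.sum_fiberwise_of_maps_to
    intro σ _
    rw [Finset.mem_powerset, hPfun]
    exact Finset.inter_subset_right
  rw [hRHS, xArel, xArel, Finset.sum_mul_sum, ← Finset.sum_product']
  apply Finset.sum_nbij'
    (fun p : WA n × WA n => (⟨(dPart M p.2⁻¹)⁻¹, p.1 * p.2⟩ : Σ _ : WA n, WA n))
    (fun q : Σ _ : WA n, WA n =>
      ((dPart M (q.2 * q.1⁻¹), ePart M (q.2 * q.1⁻¹) * q.1) : WA n × WA n))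
  · -- forward membership
    intro p hp
    rw [Finset.mem_product, mem_XPrel_iff, mem_XPrel_iff] at hp
    obtain ⟨⟨hu0XP, hu0WP⟩, hv0XP, hv0WP⟩ := hp
    set v₀ := p.2
    set d := dPart M v₀⁻¹ with hd_def
    set e := ePart M v₀⁻¹ with he_def
    have hde : d * e = v₀⁻¹ := dPart_mul_ePart M v₀⁻¹
    have hdXP : d ∈ XP n M := dPart_mem_XP hMpi v₀⁻¹
    have heWP : e ∈ WP n M := ePart_mem_WP hMpi v₀⁻¹
    have hσ_eq : d⁻¹ = e * v₀ := by
      have : e = d⁻¹ * v₀⁻¹ := by rw [← hde, inv_mul_cancel_left]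
      rw [this, mul_assoc, inv_mul_cancel, mul_one]
    have hσXPN : d⁻¹ ∈ XP n N := by
      rw [mem_XP_iff]
      intro r hr
      obtain ⟨k, hk⟩ := pair_of_mem_pi hNpi hr
      subst hk
      set t := (Fin.castSucc k : Fin (n+1))
      set t' := (Fin.succ k : Fin (n+1))
      have hvlt : v₀ t < v₀ t' := mem_XP_iff.mp hv0XP _ hr
      have hσt : d⁻¹ t = e (v₀ t) := by rw [hσ_eq]; rfl
      have hσt' : d⁻¹ t' = e (v₀ t') := by rw [hσ_eq]; rfl
      have hbe1 : Blk M (d⁻¹ t) (v₀ t) := by rw [hσt]; exact ePart_blk M v₀⁻¹ (v₀ t)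
      have hbe2 : Blk M (d⁻¹ t') (v₀ t') := by rw [hσt']; exact ePart_blk M v₀⁻¹ (v₀ t')
      by_cases hB : Blk M (v₀ t) (v₀ t')
      · have hBσ : Blk M (d⁻¹ t) (d⁻¹ t') :=
          blk_trans (blk_trans hbe1 hB) (blk_symm hbe2)
        have hdt : d (d⁻¹ t) = t := perm_apply_inv_self d t
        have hdt' : d (d⁻¹ t') = t' := perm_apply_inv_self d t'
        have := blk_lt_iff hdXP hBσ
        rw [hdt, hdt'] at this
        exact this.mp (Fin.castSucc_lt_succ (i := k))
      · exact blk_sep (blk_symm hbe1) (blk_symm hbe2) hvlt hB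
    have hσS : d⁻¹ ∈ S := by
      rw [hS, Finset.mem_filter]
      constructor
      · rw [mem_XD_iff, inv_inv]
        exact ⟨hdXP, hσXPN⟩
      · rw [hσ_eq]
        exact Subgroup.mul_mem _ (WP_mono hM heWP) hv0WP
    -- the product lands in the fiber
    have hfactor : (p.1 * p.2) * (d⁻¹)⁻¹ = p.1 * e⁻¹ := by
      rw [inv_inv]
      have hd2 : d = v₀⁻¹ * e⁻¹ := by rw [← hde, mul_assoc, mul_inv_cancel, mul_one]
      rw [mul_assoc, hd2]
      rw [show v₀ * (v₀⁻¹ * e⁻¹) = e⁻¹ from by rw [mul_inv_cancel_left]]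
    have hdPart_g : dPart M (p.1 * p.2 * (d⁻¹)⁻¹) = p.1 ∧
        ePart M (p.1 * p.2 * (d⁻¹)⁻¹) = e⁻¹ := by
      have := factor_unique hMpi hu0XP (Subgroup.inv_mem _ heWP)
        (hfactor.symm ▸ rfl : p.1 * p.2 * (d⁻¹)⁻¹ = p.1 * e⁻¹)
      exact ⟨this.1.symm, this.2.symm⟩
    have hCG := CG hMpi hNpi d⁻¹ (p.1 * p.2) (by rw [inv_inv]; exact hdXP) hσXPN
    have hvrec : ePart M (p.1 * p.2 * (d⁻¹)⁻¹) * d⁻¹ = p.2 := by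
      rw [hdPart_g.2, hσ_eq, ← mul_assoc, inv_mul_cancel, one_mul]
    rw [Finset.mem_sigma]
    refine ⟨hσS, ?_⟩
    rw [mem_XPrel_iff]
    constructor
    · exact hCG.mp (by rw [hvrec]; exact hv0XP)
    · exact Subgroup.mul_mem _ hu0WP hv0WP
  · -- backward membership
    intro q hq
    rw [Finset.mem_sigma] at hq
    obtain ⟨hq1, hq2⟩ := hq
    rw [hS, Finset.mem_filter, mem_XD_iff] at hq1
    obtain ⟨⟨hσM, hσN⟩, hσWP⟩ := hq1
    rw [mem_XPrel_iff] at hq2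
    obtain ⟨hhXP, hhWP⟩ := hq2
    set σ := q.1
    set h := q.2
    set u := dPart M (h * σ⁻¹) with hu_def
    set c := ePart M (h * σ⁻¹) with hc_def
    have huc : u * c = h * σ⁻¹ := dPart_mul_ePart M _
    have huXP : u ∈ XP n M := dPart_mem_XP hMpi _
    have hcWP : c ∈ WP n M := ePart_mem_WP hMpi _
    have huWP : u ∈ WP n J := by
      have : u = h * σ⁻¹ * c⁻¹ := by rw [← huc, mul_inv_cancel_right]
      rw [this]
      exact Subgroup.mul_mem _ (Subgroup.mul_mem _ hhWP (Subgroup.inv_mem _ hσWP))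
        (Subgroup.inv_mem _ (WP_mono hM hcWP))
    have hCG := CG hMpi hNpi σ h hσM hσN
    rw [Finset.mem_product, mem_XPrel_iff, mem_XPrel_iff]
    refine ⟨⟨huXP, huWP⟩, ?_, ?_⟩
    · exact hCG.mpr hhXP
    · exact Subgroup.mul_mem _ (WP_mono hM hcWP) hσWP
  · -- left inverse
    intro p hp
    rw [Finset.mem_product, mem_XPrel_iff, mem_XPrel_iff] at hp
    obtain ⟨⟨hu0XP, hu0WP⟩, hv0XP, hv0WP⟩ := hp
    set v₀ := p.2
    set d := dPart M v₀⁻¹ with hd_def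
    set e := ePart M v₀⁻¹ with he_def
    have hde : d * e = v₀⁻¹ := dPart_mul_ePart M v₀⁻¹
    have hdXP : d ∈ XP n M := dPart_mem_XP hMpi v₀⁻¹
    have heWP : e ∈ WP n M := ePart_mem_WP hMpi v₀⁻¹
    have hσ_eq : d⁻¹ = e * v₀ := by
      have : e = d⁻¹ * v₀⁻¹ := by rw [← hde, inv_mul_cancel_left]
      rw [this, mul_assoc, inv_mul_cancel, mul_one]
    have hfactor : (p.1 * p.2) * (d⁻¹)⁻¹ = p.1 * e⁻¹ := by
      rw [inv_inv]
      have hd2 : d = v₀⁻¹ * e⁻¹ := by rw [← hde, mul_assoc, mul_inv_cancel, mul_one]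
      rw [mul_assoc, hd2]
      rw [show v₀ * (v₀⁻¹ * e⁻¹) = e⁻¹ from by rw [mul_inv_cancel_left]]
    have hfac2 := factor_unique hMpi hu0XP (Subgroup.inv_mem _ heWP) hfactor.symm
    show (dPart M (p.1 * p.2 * (d⁻¹)⁻¹), ePart M (p.1 * p.2 * (d⁻¹)⁻¹) * d⁻¹) = p
    rw [hfactor, ← hfac2.1, ← hfac2.2, hσ_eq, ← mul_assoc, inv_mul_cancel, one_mul]
  · -- right inverse
    intro q hq
    rw [Finset.mem_sigma] at hq
    obtain ⟨hq1, hq2⟩ := hq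
    rw [hS, Finset.mem_filter, mem_XD_iff] at hq1
    obtain ⟨⟨hσM, hσN⟩, hσWP⟩ := hq1
    obtain ⟨σ, h⟩ := q
    simp only at hσM hσN hσWP ⊢
    set u := dPart M (h * σ⁻¹) with hu_def
    set c := ePart M (h * σ⁻¹) with hc_def
    have huc : u * c = h * σ⁻¹ := dPart_mul_ePart M _
    have hcWP : c ∈ WP n M := ePart_mem_WP hMpi _
    have hv_inv : (c * σ)⁻¹ = σ⁻¹ * c⁻¹ := by rw [mul_inv_rev]
    have hfac2 := factor_unique (w := (c * σ)⁻¹) hMpi hσM (Subgroup.inv_mem _ hcWP)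
      (by rw [mul_inv_rev])
    have hσrec : (dPart M (c * σ)⁻¹)⁻¹ = σ := by rw [← hfac2.1, inv_inv]
    have hprod : u * (c * σ) = h := by
      rw [← mul_assoc, huc, inv_mul_cancel_right]
    show (⟨(dPart M (c * σ)⁻¹)⁻¹, u * (c * σ)⟩ : Σ _ : WA n, WA n) = ⟨σ, h⟩
    rw [hσrec, hprod]
  · -- values agree
    intro p _
    rw [← map_mul]

end SolomonAux

namespace SolomonAux

variable {n : ℕ}

lemma WP_pi_top : WP n (PiA n) = ⊤ := by
  rw [eq_top_iff]
  intro w _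
  exact WP_of_blk (subset_refl _) _ w rfl (fun x => blk_pi (w x) x)

lemma XPrel_pi (A : Finset (RootA n)) : XPrel n (PiA n) A = XP n A := by
  rw [XPrel]
  apply Finset.filter_true_of_mem
  intro w _
  rw [WP_pi_top]
  exact Subgroup.mem_top w

lemma xArel_pi (A : Finset (RootA n)) : xArel n (PiA n) A = xA n A := by
  rw [xArel, xA, XPrel_pi]

lemma aCrel_pi (M N P : Finset (RootA n)) : aCrel n (PiA n) M N P = aC n M N P := by
  rw [aCrel, aC]
  congr 1
  congr 1
  apply Finset.filter_true_of_mem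
  intro w _
  rw [WP_pi_top]
  exact Subgroup.mem_top w

theorem main (hn : 1 ≤ n) (K N J : Finset (RootA n))
    (hK : K ⊆ PiA n) (hN : N ⊆ PiA n) (hJ : J ⊆ PiA n) (hNJ : N ⊆ J) :
    xA n K * xA n N =
      ∑ P ∈ N.powerset,
        ((∑ M ∈ J.powerset, aC n K J M * aCrel n J M N P : ℕ) : ℚ) • xA n P := by
  have e2 : xA n K * xA n J = ∑ M ∈ J.powerset, (aC n K J M : ℚ) • xA n M := by
    have h := relSolomon (J := PiA n) (M := K) (N := J) (subset_refl _) hK hJ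
    rw [xArel_pi, xArel_pi] at h
    rw [h]
    apply Finset.sum_congr rfl
    intro P _
    rw [aCrel_pi, xArel_pi]
  have e3 : ∀ M ∈ J.powerset, xA n M * xArel n J N
      = ∑ P ∈ N.powerset, (aCrel n J M N P : ℚ) • xA n P := by
    intro M hMP
    have hMJ : M ⊆ J := Finset.mem_powerset.mp hMP
    rw [xA_factor hJ hMJ, mul_assoc, relSolomon hJ hMJ hNJ, Finset.mul_sum]
    apply Finset.sum_congr rfl
    intro P hP
    have hPJ : P ⊆ J := fun z hz => hNJ (Finset.mem_powerset.mp hP hz)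
    rw [mul_smul_comm, ← xA_factor hJ hPJ]
  calc xA n K * xA n N
      = xA n K * (xA n J * xArel n J N) := by rw [← xA_factor hJ hNJ]
    _ = (xA n K * xA n J) * xArel n J N := by rw [mul_assoc]
    _ = (∑ M ∈ J.powerset, (aC n K J M : ℚ) • xA n M) * xArel n J N := by rw [e2]
    _ = ∑ M ∈ J.powerset, (aC n K J M : ℚ) • (xA n M * xArel n J N) := by
        rw [Finset.sum_mul]
        apply Finset.sum_congr rfl
        intro M _
        rw [smul_mul_assoc]
    _ = ∑ M ∈ J.powerset, (aC n K J M : ℚ) •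
          (∑ P ∈ N.powerset, (aCrel n J M N P : ℚ) • xA n P) := by
        apply Finset.sum_congr rfl
        intro M hMP
        rw [e3 M hMP]
    _ = ∑ M ∈ J.powerset, ∑ P ∈ N.powerset,
          ((aC n K J M * aCrel n J M N P : ℕ) : ℚ) • xA n P := by
        apply Finset.sum_congr rfl
        intro M _
        rw [Finset.smul_sum]
        apply Finset.sum_congr rfl
        intro P _
        rw [smul_smul, Nat.cast_mul]
    _ = ∑ P ∈ N.powerset, ∑ M ∈ J.powerset,
          ((aC n K J M * aCrel n J M N P : ℕ) : ℚ) • xA n P := Finset.sum_comm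
    _ = ∑ P ∈ N.powerset,
          ((∑ M ∈ J.powerset, aC n K J M * aCrel n J M N P : ℕ) : ℚ) • xA n P := by
        apply Finset.sum_congr rfl
        intro P _
        rw [Nat.cast_sum, Finset.sum_smul]

end SolomonAux


/-- for `K, N ⊆ Π` and any `J ⊆ Π` with `N ⊆ J`, in `ℚ[W]` one has
`x_K · x_N = Σ_{P ⊆ N} (Σ_{M ⊆ J} a_{KJM} · a^J_{MNP}) · x_P`. -/
theorem xA_mul_xA_eq_double_sum (n : ℕ) (hn : 1 ≤ n) (K N J : Finset (RootA n))
    (hK : K ⊆ PiA n) (hN : N ⊆ PiA n) (hJ : J ⊆ PiA n) (hNJ : N ⊆ J) :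
    xA n K * xA n N =
      ∑ P ∈ N.powerset,
        ((∑ M ∈ J.powerset, aC n K J M * aCrel n J M N P : ℕ) : ℚ) • xA n P := by
  exact SolomonAux.main hn K N J hK hN hJ hNJ
end
end
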